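/- arXiv:2209.09887 — 5 statements merged into one kernel-verified Lean document; each statement's English description precedes it below -/
import Mathlib

section
/- Let ε > 0 and let S ⊆ 𝓑 satisfy |S| ≥ (1+ε)·M. Then the maximum degree of the subgraph of G induced on S is at least ε·s/|T|². -/
open scoped Classical

noncomputable section

/-- The `t`-block `B_t(p) = ∏_i [s^{t i}·p i, s^{t i}·(p i + 1))`. -/
def block (d s : ℕ) (t : Fin d → ℕ) (p : Fin d → ℤ) : Set (Fin d → ℝ) :=
  Set.univ.pi fun i =>
    Set.Ico ((s : ℝ) ^ t i * (p i : ℝ)) ((s : ℝ) ^ t i * ((p i : ℝ) + 1))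

/-- The family `𝓑` of all `t`-blocks with `∑ t i = k` contained in `[0, s^k]^d`. -/
def blockFamily (d s k : ℕ) : Set (Set (Fin d → ℝ)) :=
  {B | ∃ t : Fin d → ℕ, ∃ p : Fin d → ℤ, (∑ i, t i) = k ∧
    (∀ i, 0 ≤ p i ∧ p i < (s : ℤ) ^ (k - t i)) ∧ B = block d s t p}



theorem tuple_card_le (d k : ℕ) (hd : 1 ≤ d) :
    (Finset.Nat.antidiagonalTuple d k).card ≤ (k + d - 1).choose (d - 1) := by
  classical
  let f : (Fin d → ℕ) → Sym (Fin d) k := fun t =>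
    if h : ∑ i, t i = k then ⟨∑ i, t i • ({i} : Multiset (Fin d)), by
        simp [Multiset.card_nsmul, h]⟩ else ⟨Multiset.replicate k ⟨0, hd⟩, by simp⟩
  have h1 : (Finset.Nat.antidiagonalTuple d k).card ≤ Fintype.card (Sym (Fin d) k) := by
    rw [← Finset.card_univ]
    apply Finset.card_le_card_of_injOn f (fun a _ => Finset.mem_univ _)
    intro a ha b hb hab
    rw [Finset.mem_coe, Finset.Nat.mem_antidiagonalTuple] at ha hb
    simp only [f, dif_pos ha, dif_pos hb, Subtype.mk.injEq] at hab
    funext j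
    have := congrArg (fun z => Multiset.count j (Subtype.val z)) hab
    simpa [ha, hb, Multiset.count_sum', Multiset.count_nsmul, Multiset.count_singleton] using this
  have h2 : Fintype.card (Sym (Fin d) k) = (d + k - 1).choose k := by
    rw [Sym.card_sym_eq_choose]; simp
  rw [h2] at h1
  refine h1.trans_eq ?_
  have h3 : d + k - 1 = k + d - 1 := by omega
  rw [h3, ← Nat.choose_symm (by omega : d - 1 ≤ k + d - 1)]
  congr 1; omega

def ptsF (d s : ℕ) (t : Fin d → ℕ) (p : Fin d → ℤ) : Finset (Fin d → ℤ) :=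
  Fintype.piFinset fun i => Finset.Ico ((s:ℤ)^(t i) * p i) ((s:ℤ)^(t i) * (p i + 1))

lemma mem_block_iff (d s : ℕ) (t : Fin d → ℕ) (p : Fin d → ℤ) (x : Fin d → ℤ) :
    ((fun i => (x i : ℝ)) ∈ block d s t p) ↔ x ∈ ptsF d s t p := by
  simp only [block, Set.mem_univ_pi, Set.mem_Ico, ptsF, Fintype.mem_piFinset, Finset.mem_Ico]
  refine forall_congr' fun i => ?_
  rw [show ((s:ℝ)^(t i) * (p i:ℝ)) = (((s:ℤ)^(t i) * p i : ℤ):ℝ) by push_cast; ring,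
    show ((s:ℝ)^(t i) * ((p i:ℝ)+1)) = (((s:ℤ)^(t i) * (p i + 1) : ℤ):ℝ) by push_cast; ring,
    Int.cast_le, Int.cast_lt]

lemma card_ptsF (d s k : ℕ) (t : Fin d → ℕ) (p : Fin d → ℤ) (hsum : (∑ i, t i) = k) :
    (ptsF d s t p).card = s ^ k := by
  rw [ptsF, Fintype.card_piFinset]
  have : ∀ i, (Finset.Ico ((s:ℤ)^(t i) * p i) ((s:ℤ)^(t i) * (p i + 1))).card = s ^ (t i) := by
    intro i
    rw [Int.card_Ico]
    have : (s:ℤ)^(t i) * (p i + 1) - (s:ℤ)^(t i) * p i = ((s ^ (t i) : ℕ) : ℤ) := by push_cast; ring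
    rw [this, Int.toNat_natCast]
  simp only [this]
  rw [Finset.prod_pow_eq_pow_sum, hsum]

-- blocks with same shape and a common real point have equal offsets
lemma same_shape_eq (d s : ℕ) (hs : 2 ≤ s) (t : Fin d → ℕ) (p p' : Fin d → ℤ)
    (h : ((block d s t p) ∩ (block d s t p')).Nonempty) : p = p' := by
  obtain ⟨y, hy, hy'⟩ := h
  funext i
  have h1 := hy i (Set.mem_univ i)
  have h2 := hy' i (Set.mem_univ i)
  simp only [Set.mem_Ico] at h1 h2
  have hpow : (0:ℝ) < (s:ℝ)^(t i) := by positivity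
  have e1 : (p i : ℝ) < (p' i : ℝ) + 1 := by
    have := h1.1.trans_lt h2.2
    exact lt_of_mul_lt_mul_left (by linarith [this]) hpow.le
  have e2 : (p' i : ℝ) < (p i : ℝ) + 1 := by
    have := h2.1.trans_lt h1.2
    exact lt_of_mul_lt_mul_left (by linarith [this]) hpow.le
  have : p i < p' i + 1 := by exact_mod_cast e1
  have : p' i < p i + 1 := by exact_mod_cast e2
  omega

lemma sum_min_le (d k : ℕ) (t t' : Fin d → ℕ) (hsum : (∑ i, t i) = k)
    (hsum' : (∑ i, t' i) = k) (hne : t ≠ t') (hk : 1 ≤ k) :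
    (∑ i, min (t i) (t' i)) ≤ k - 1 := by
  have hle : (∑ i, min (t i) (t' i)) ≤ k := by
    rw [← hsum]; exact Finset.sum_le_sum fun i _ => min_le_left _ _
  have hne' : (∑ i, min (t i) (t' i)) ≠ k := by
    intro hEq
    apply hne
    have h1 : ∀ i ∈ Finset.univ, min (t i) (t' i) = t i :=
      (Finset.sum_eq_sum_iff_of_le (fun i _ => min_le_left _ _)).mp (by rw [hEq, hsum])
    have h2 : ∀ i ∈ Finset.univ, min (t i) (t' i) = t' i :=
      (Finset.sum_eq_sum_iff_of_le (fun i _ => min_le_right _ _)).mp (by rw [hEq, hsum'])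
    funext i
    rw [← h1 i (Finset.mem_univ i), h2 i (Finset.mem_univ i)]
  omega

lemma pair_card_le (d s k : ℕ) (hs : 2 ≤ s) (hk : 1 ≤ k) (t t' : Fin d → ℕ)
    (p p' : Fin d → ℤ) (hsum : (∑ i, t i) = k) (hsum' : (∑ i, t' i) = k) (hne : t ≠ t')
    (box : Finset (Fin d → ℤ)) :
    (box.filter fun x => ((fun i => (x i:ℝ)) ∈ block d s t p ∧
      (fun i => (x i:ℝ)) ∈ block d s t' p')).card ≤ s ^ (k-1) := by
  have hsub : box.filter (fun x => ((fun i => (x i:ℝ)) ∈ block d s t p ∧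
      (fun i => (x i:ℝ)) ∈ block d s t' p')) ⊆
      Fintype.piFinset fun i => (Finset.Ico ((s:ℤ)^(t i) * p i) ((s:ℤ)^(t i) * (p i + 1)) ∩
        Finset.Ico ((s:ℤ)^(t' i) * p' i) ((s:ℤ)^(t' i) * (p' i + 1))) := by
    intro x hx
    rw [Finset.mem_filter, mem_block_iff, mem_block_iff] at hx
    rw [Fintype.mem_piFinset]
    intro i
    rw [Finset.mem_inter]
    exact ⟨(Fintype.mem_piFinset.mp hx.2.1) i, (Fintype.mem_piFinset.mp hx.2.2) i⟩
  refine (Finset.card_le_card hsub).trans ?_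
  rw [Fintype.card_piFinset]
  have hstep : ∀ i, (Finset.Ico ((s:ℤ)^(t i) * p i) ((s:ℤ)^(t i) * (p i + 1)) ∩
        Finset.Ico ((s:ℤ)^(t' i) * p' i) ((s:ℤ)^(t' i) * (p' i + 1))).card
        ≤ s ^ (min (t i) (t' i)) := by
    intro i
    rw [Finset.Ico_inter_Ico, Int.card_Ico]
    have key : ∀ (a : ℕ) (q : Fin d → ℤ), min ((s:ℤ)^(t i) * (p i + 1)) ((s:ℤ)^(t' i) * (p' i + 1))
        - max ((s:ℤ)^(t i) * p i) ((s:ℤ)^(t' i) * p' i) ≤ (s:ℤ)^(t i) * (p i + 1) - (s:ℤ)^(t i) * p i :=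
      fun a q => sub_le_sub (min_le_left _ _) (le_max_left _ _)
    rcases le_total (t i) (t' i) with h | h
    · rw [min_eq_left h]
      calc (min ((s:ℤ)^(t i) * (p i + 1)) ((s:ℤ)^(t' i) * (p' i + 1))
          - max ((s:ℤ)^(t i) * p i) ((s:ℤ)^(t' i) * p' i)).toNat
          ≤ ((s:ℤ)^(t i) * (p i + 1) - (s:ℤ)^(t i) * p i).toNat :=
            Int.toNat_le_toNat (sub_le_sub (min_le_left _ _) (le_max_left _ _))
        _ = s ^ (t i) := by
            rw [show (s:ℤ)^(t i) * (p i + 1) - (s:ℤ)^(t i) * p i = ((s ^ (t i) : ℕ) : ℤ) by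
              push_cast; ring, Int.toNat_natCast]
    · rw [min_eq_right h]
      calc (min ((s:ℤ)^(t i) * (p i + 1)) ((s:ℤ)^(t' i) * (p' i + 1))
          - max ((s:ℤ)^(t i) * p i) ((s:ℤ)^(t' i) * p' i)).toNat
          ≤ ((s:ℤ)^(t' i) * (p' i + 1) - (s:ℤ)^(t' i) * p' i).toNat :=
            Int.toNat_le_toNat (sub_le_sub (min_le_right _ _) (le_max_right _ _))
        _ = s ^ (t' i) := by
            rw [show (s:ℤ)^(t' i) * (p' i + 1) - (s:ℤ)^(t' i) * p' i = ((s ^ (t' i) : ℕ) : ℤ) by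
              push_cast; ring, Int.toNat_natCast]
  calc (∏ i, (Finset.Ico ((s:ℤ)^(t i) * p i) ((s:ℤ)^(t i) * (p i + 1)) ∩
        Finset.Ico ((s:ℤ)^(t' i) * p' i) ((s:ℤ)^(t' i) * (p' i + 1))).card)
      ≤ ∏ i, s ^ (min (t i) (t' i)) := Finset.prod_le_prod' fun i _ => hstep i
    _ = s ^ (∑ i, min (t i) (t' i)) := Finset.prod_pow_eq_pow_sum _ _ _
    _ ≤ s ^ (k - 1) := Nat.pow_le_pow_right (by omega)
        (sum_min_le d k t t' hsum hsum' hne hk)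

lemma filter_box_card (d s k : ℕ) (hs : 2 ≤ s) (t : Fin d → ℕ) (p : Fin d → ℤ)
    (hsum : (∑ i, t i) = k) (hp : ∀ i, 0 ≤ p i ∧ p i < (s:ℤ)^(k - t i)) :
    ((Fintype.piFinset fun _ : Fin d => Finset.Ico (0:ℤ) ((s:ℤ)^k)).filter
      (fun x => (fun i => (x i:ℝ)) ∈ block d s t p)).card = s ^ k := by
  have : ((Fintype.piFinset fun _ : Fin d => Finset.Ico (0:ℤ) ((s:ℤ)^k)).filter
      (fun x => (fun i => (x i:ℝ)) ∈ block d s t p)) = ptsF d s t p := by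
    ext x
    rw [Finset.mem_filter, mem_block_iff]
    constructor
    · exact fun h => h.2
    · intro h
      refine ⟨?_, h⟩
      rw [Fintype.mem_piFinset]
      intro i
      have hi := Fintype.mem_piFinset.mp h i
      rw [Finset.mem_Ico] at hi ⊢
      have hti : t i ≤ k := hsum ▸ Finset.single_le_sum (fun j _ => Nat.zero_le (t j)) (Finset.mem_univ i)
      have hpos : (0:ℤ) ≤ (s:ℤ)^(t i) := by positivity
      constructor
      · exact le_trans (mul_nonneg hpos (hp i).1) hi.1
      · refine lt_of_lt_of_le hi.2 ?_
        have h1 : p i + 1 ≤ (s:ℤ)^(k - t i) := (hp i).2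
        calc (s:ℤ)^(t i) * (p i + 1) ≤ (s:ℤ)^(t i) * (s:ℤ)^(k - t i) :=
              mul_le_mul_of_nonneg_left h1 hpos
          _ = (s:ℤ)^k := by rw [← pow_add]; congr 1; omega
  rw [this]
  exact card_ptsF d s k t p hsum


lemma exp_eq (d k : ℕ) (hd : 1 ≤ d) (t : Fin d → ℕ) (hsum : (∑ i, t i) = k) :
    (∑ i, (k - t i)) = k * (d - 1) := by
  have hti : ∀ i, t i ≤ k := fun i =>
    hsum ▸ Finset.single_le_sum (fun j _ => Nat.zero_le (t j)) (Finset.mem_univ i)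
  have h4 : (∑ i, (k - t i)) + (∑ i, t i) = ∑ _i : Fin d, k := by
    rw [← Finset.sum_add_distrib]
    exact Finset.sum_congr rfl fun i _ => by have := hti i; omega
  rw [hsum] at h4
  have h5 : (∑ _i : Fin d, k) = d * k := by
    rw [Finset.sum_const, Finset.card_univ, Fintype.card_fin, smul_eq_mul]
  rw [h5] at h4
  obtain ⟨d', rfl⟩ : ∃ d', d = d' + 1 := ⟨d - 1, by omega⟩
  have h6 : k * (d' + 1 - 1) + k = (d' + 1) * k := by simp; ring
  omega

lemma S_card_le (d s k : ℕ) (hd : 2 ≤ d) (hs : 2 ≤ s) (S : Finset (Set (Fin d → ℝ)))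
    (hS : ↑S ⊆ blockFamily d s k) :
    S.card ≤ (k + d - 1).choose (d - 1) * s ^ (k * (d - 1)) := by
  classical
  set target : Finset ((_ : Fin d → ℕ) × (Fin d → ℤ)) :=
    (Finset.Nat.antidiagonalTuple d k).sigma
      (fun t => Fintype.piFinset fun i => Finset.Ico (0:ℤ) ((s:ℤ)^(k - t i))) with htarget
  have hcard : target.card = (Finset.Nat.antidiagonalTuple d k).card * s ^ (k * (d - 1)) := by
    rw [htarget, Finset.card_sigma]
    rw [Finset.sum_congr rfl (fun t ht => ?_), Finset.sum_const, smul_eq_mul]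
    rw [Fintype.card_piFinset]
    have : ∀ i, (Finset.Ico (0:ℤ) ((s:ℤ)^(k - t i))).card = s ^ (k - t i) := by
      intro i
      rw [Int.card_Ico, sub_zero, show ((s:ℤ)^(k - t i)) = ((s ^ (k - t i) : ℕ) : ℤ) by push_cast; ring,
        Int.toNat_natCast]
    simp only [this]
    rw [Finset.prod_pow_eq_pow_sum]
    rw [exp_eq d k (by omega) t (Finset.Nat.mem_antidiagonalTuple.mp ht)]
  have hinj : S.card ≤ target.card := by
    set f : Set (Fin d → ℝ) → ((_ : Fin d → ℕ) × (Fin d → ℤ)) := fun B =>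
      if h : B ∈ blockFamily d s k then ⟨h.choose, h.choose_spec.choose⟩
      else ⟨fun _ => 0, fun _ => 0⟩ with hf
    apply Finset.card_le_card_of_injOn f
    · intro B hB
      have h := hS hB
      rw [hf]
      simp only [dif_pos h]
      obtain ⟨h1, h2, h3⟩ := h.choose_spec.choose_spec
      refine Finset.mem_coe.mpr (Finset.mem_sigma.mpr ?_)
      constructor
      · exact Finset.Nat.mem_antidiagonalTuple.mpr h1
      · rw [Fintype.mem_piFinset]
        intro i
        rw [Finset.mem_Ico]
        exact h2 i
    · intro B hB B' hB' heq
      have h := hS (Finset.mem_coe.mp hB)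
      have h' := hS (Finset.mem_coe.mp hB')
      rw [hf] at heq
      simp only [dif_pos h, dif_pos h'] at heq
      obtain ⟨ht, hp⟩ := Sigma.mk.inj_iff.mp heq
      have e1 := h.choose_spec.choose_spec.2.2
      have e2 := h'.choose_spec.choose_spec.2.2
      rw [e1, e2]
      exact congr (congrArg (block d s) ht) (eq_of_heq hp)
  calc S.card ≤ target.card := hinj
    _ = (Finset.Nat.antidiagonalTuple d k).card * s ^ (k * (d - 1)) := hcard
    _ ≤ (k + d - 1).choose (d - 1) * s ^ (k * (d - 1)) :=
        Nat.mul_le_mul_right _ (tuple_card_le d k (by omega))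


/-- Supersaturation: if `S ⊆ 𝓑` has at least `(1+ε)·M` elements, where `M = s^{k(d-1)}`,
then the subgraph of the intersection graph induced on `S` has a vertex of degree at
least `ε·s/|T|²`, where `|T| = C(k+d-1, d-1)`. -/
theorem supersaturation (d s k : ℕ) (hd : 2 ≤ d) (hs : 2 ≤ s) (hk : 1 ≤ k)
    (ε : ℝ) (hε : 0 < ε) (S : Finset (Set (Fin d → ℝ)))
    (hS : ↑S ⊆ blockFamily d s k)
    (hcard : (1 + ε) * (s : ℝ) ^ (k * (d - 1)) ≤ (S.card : ℝ)) :
    ∃ B ∈ S, ε * s / ((k + d - 1).choose (d - 1) : ℝ) ^ 2 ≤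
      ((S.filter fun B' => B' ≠ B ∧ (B ∩ B').Nonempty).card : ℝ) := by
  classical
  by_contra hcon
  push_neg at hcon
  set C := (k + d - 1).choose (d - 1) with hCdef
  have hC1 : 1 ≤ C := Nat.choose_pos (by omega)
  set box : Finset (Fin d → ℤ) := Fintype.piFinset fun _ : Fin d => Finset.Ico (0:ℤ) ((s:ℤ)^k)
    with hbox
  set emb : (Fin d → ℤ) → (Fin d → ℝ) := fun x i => (x i : ℝ) with hemb
  set N : (Fin d → ℤ) → ℕ := fun x => (S.filter fun B => emb x ∈ B).card with hN
  set D : Set (Fin d → ℝ) → ℕ := fun B => (S.filter fun B' => B' ≠ B ∧ (B ∩ B').Nonempty).card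
    with hD
  -- Step 1
  have step1 : ∑ x ∈ box, N x = S.card * s ^ k := by
    have swap : ∑ x ∈ box, N x = ∑ B ∈ S, (box.filter fun x => emb x ∈ B).card := by
      simp only [hN, Finset.card_filter]
      exact Finset.sum_comm
    have hper : ∀ B ∈ S, (box.filter fun x => emb x ∈ B).card = s ^ k := by
      intro B hB
      obtain ⟨t, p, hsum, hp, hBeq⟩ := hS hB
      subst hBeq
      exact filter_box_card d s k hs t p hsum hp
    rw [swap, Finset.sum_congr rfl hper, Finset.sum_const, smul_eq_mul]
  -- Step 2
  have step2 : ∑ x ∈ box, N x ≤ box.card + ∑ x ∈ box, (N x * N x - N x) := by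
    calc ∑ x ∈ box, N x ≤ ∑ x ∈ box, (1 + (N x * N x - N x)) := by
          apply Finset.sum_le_sum
          intro x _
          rcases Nat.exists_eq_add_of_le (Nat.zero_le (N x)) with _
          rcases Nat.eq_zero_or_pos (N x) with h | h
          · simp [h]
          · obtain ⟨m, hm⟩ : ∃ m, N x = m + 1 := ⟨N x - 1, by omega⟩
            rw [hm]
            have h1 : (m+1)*(m+1) = (m+1)*m + (m+1) := by ring
            have h2 : m ≤ (m+1)*m := Nat.le_mul_of_pos_left m (Nat.succ_pos m)
            omega
      _ = box.card + ∑ x ∈ box, (N x * N x - N x) := by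
          rw [Finset.sum_add_distrib, Finset.sum_const, smul_eq_mul, mul_one]
  -- Step 3
  have step3 : ∑ x ∈ box, (N x * N x - N x) =
      ∑ B ∈ S, ∑ B' ∈ S.erase B, (box.filter fun x => emb x ∈ B ∧ emb x ∈ B').card := by
    have key : ∀ x, N x * N x - N x = ∑ B ∈ S, ∑ B' ∈ S.erase B,
        ((if emb x ∈ B then (1:ℕ) else 0) * (if emb x ∈ B' then 1 else 0)) := by
      intro x
      have hNx : N x = ∑ B ∈ S, (if emb x ∈ B then (1:ℕ) else 0) := Finset.card_filter _ _
      have expand : N x * N x = ∑ B ∈ S, ∑ B' ∈ S,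
          ((if emb x ∈ B then (1:ℕ) else 0) * (if emb x ∈ B' then 1 else 0)) := by
        rw [hNx, Finset.sum_mul_sum]
      have split : ∀ B ∈ S, (∑ B' ∈ S,
          ((if emb x ∈ B then (1:ℕ) else 0) * (if emb x ∈ B' then 1 else 0))) =
          (if emb x ∈ B then (1:ℕ) else 0) + ∑ B' ∈ S.erase B,
          ((if emb x ∈ B then (1:ℕ) else 0) * (if emb x ∈ B' then 1 else 0)) := by
        intro B hB
        rw [← Finset.add_sum_erase S _ hB]
        congr 1
        by_cases h : emb x ∈ B <;> simp [h]
      rw [expand, Finset.sum_congr rfl split, Finset.sum_add_distrib, ← hNx]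
      omega
    have swap2 : ∀ B ∈ S, ∀ B' ∈ S.erase B,
        (∑ x ∈ box, ((if emb x ∈ B then (1:ℕ) else 0) * (if emb x ∈ B' then 1 else 0))) =
        (box.filter fun x => emb x ∈ B ∧ emb x ∈ B').card := by
      intro B _ B' _
      rw [Finset.card_filter]
      apply Finset.sum_congr rfl
      intro x _
      by_cases h1 : emb x ∈ B <;> by_cases h2 : emb x ∈ B' <;> simp [h1, h2]
    calc ∑ x ∈ box, (N x * N x - N x)
        = ∑ x ∈ box, ∑ B ∈ S, ∑ B' ∈ S.erase B,
          ((if emb x ∈ B then (1:ℕ) else 0) * (if emb x ∈ B' then 1 else 0)) :=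
          Finset.sum_congr rfl fun x _ => key x
      _ = ∑ B ∈ S, ∑ x ∈ box, ∑ B' ∈ S.erase B,
          ((if emb x ∈ B then (1:ℕ) else 0) * (if emb x ∈ B' then 1 else 0)) := Finset.sum_comm
      _ = ∑ B ∈ S, ∑ B' ∈ S.erase B, ∑ x ∈ box,
          ((if emb x ∈ B then (1:ℕ) else 0) * (if emb x ∈ B' then 1 else 0)) :=
          Finset.sum_congr rfl fun B _ => Finset.sum_comm
      _ = ∑ B ∈ S, ∑ B' ∈ S.erase B, (box.filter fun x => emb x ∈ B ∧ emb x ∈ B').card := by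
          refine Finset.sum_congr rfl fun B hB => Finset.sum_congr rfl fun B' hB' => ?_
          exact swap2 B hB B' hB'
  -- Step 4
  have step4 : ∀ B ∈ S, ∀ B' ∈ S.erase B,
      (box.filter fun x => emb x ∈ B ∧ emb x ∈ B').card ≤
      (if (B ∩ B').Nonempty then s^(k-1) else 0) := by
    intro B hB B' hB'
    obtain ⟨hne, hB'S⟩ := Finset.mem_erase.mp hB'
    by_cases hint : (B ∩ B').Nonempty
    · rw [if_pos hint]
      obtain ⟨t, p, hsum, hp, hBeq⟩ := hS hB
      obtain ⟨t', p', hsum', hp', hBeq'⟩ := hS hB'S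
      subst hBeq; subst hBeq'
      have htne : t ≠ t' := by
        rintro rfl
        have hpp := same_shape_eq d s hs t p p' hint
        exact hne (by rw [hpp])
      exact pair_card_le d s k hs hk t t' p p' hsum hsum' htne box
    · rw [if_neg hint]
      rw [Nat.le_zero, Finset.card_eq_zero, Finset.filter_eq_empty_iff]
      intro x _
      exact fun hx => hint ⟨emb x, hx.1, hx.2⟩
  -- Step 5
  have step5 : ∀ B ∈ S, (∑ B' ∈ S.erase B,
      (box.filter fun x => emb x ∈ B ∧ emb x ∈ B').card) ≤ s^(k-1) * D B := by
    intro B hB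
    calc (∑ B' ∈ S.erase B, (box.filter fun x => emb x ∈ B ∧ emb x ∈ B').card)
        ≤ ∑ B' ∈ S.erase B, (if (B ∩ B').Nonempty then s^(k-1) else 0) :=
          Finset.sum_le_sum (step4 B hB)
      _ = ∑ B' ∈ (S.erase B).filter (fun B' => (B ∩ B').Nonempty), s^(k-1) :=
          (Finset.sum_filter _ _).symm
      _ = ((S.erase B).filter (fun B' => (B ∩ B').Nonempty)).card * s^(k-1) := by
          rw [Finset.sum_const, smul_eq_mul]
      _ = s^(k-1) * D B := by
          rw [mul_comm, hD]
          congr 2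
          ext B'
          simp only [Finset.mem_filter, Finset.mem_erase]
          tauto
  -- box card
  have hboxcard : box.card = s ^ (k*d) := by
    rw [hbox, Fintype.card_piFinset]
    have h1 : (Finset.Ico (0:ℤ) ((s:ℤ)^k)).card = s ^ k := by
      rw [Int.card_Ico, sub_zero, show ((s:ℤ)^k) = ((s ^ k : ℕ) : ℤ) by push_cast; ring,
        Int.toNat_natCast]
    rw [Finset.prod_congr rfl fun i _ => h1, Finset.prod_const, Finset.card_univ,
      Fintype.card_fin, ← pow_mul]
  -- master nat inequality
  have master : S.card * s ^ k ≤ s ^ (k*d) + ∑ B ∈ S, s^(k-1) * D B := by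
    calc S.card * s ^ k = ∑ x ∈ box, N x := step1.symm
      _ ≤ box.card + ∑ x ∈ box, (N x * N x - N x) := step2
      _ = s ^ (k*d) + ∑ B ∈ S, ∑ B' ∈ S.erase B,
          (box.filter fun x => emb x ∈ B ∧ emb x ∈ B').card := by rw [step3, hboxcard]
      _ ≤ s ^ (k*d) + ∑ B ∈ S, s^(k-1) * D B :=
          Nat.add_le_add_left (Finset.sum_le_sum step5) _
  -- pass to reals
  set c : ℝ := ε * s / (C:ℝ)^2 with hc
  have hMpos : (0:ℝ) < (s:ℝ)^(k*(d-1)) := by positivity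
  have hSpos : 0 < S.card := by
    have h0 : (0:ℝ) < (S.card:ℝ) := lt_of_lt_of_le (by positivity) hcard
    exact_mod_cast h0
  have hSne : S.Nonempty := Finset.card_pos.mp hSpos
  have hreal : (S.card : ℝ) * (s:ℝ)^k ≤ (s:ℝ)^(k*d) + ∑ B ∈ S, (s:ℝ)^(k-1) * (D B : ℝ) := by
    exact_mod_cast master
  have hsum_lt : ∑ B ∈ S, (s:ℝ)^(k-1) * (D B:ℝ) < ∑ B ∈ S, (s:ℝ)^(k-1) * c := by
    apply Finset.sum_lt_sum_of_nonempty hSne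
    intro B hB
    have hlt := hcon B hB
    have hsp : (0:ℝ) < (s:ℝ)^(k-1) := by positivity
    exact mul_lt_mul_of_pos_left hlt hsp
  rw [Finset.sum_const, nsmul_eq_mul] at hsum_lt
  have hSC : (S.card : ℝ) ≤ (C:ℝ) * (s:ℝ)^(k*(d-1)) := by
    exact_mod_cast S_card_le d s k hd hs S hS
  have hpow1 : (s:ℝ)^(k*d) = (s:ℝ)^(k*(d-1)) * (s:ℝ)^k := by
    rw [← pow_add]
    congr 1
    obtain ⟨d', rfl⟩ : ∃ d', d = d' + 1 := ⟨d - 1, by omega⟩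
    simp only [Nat.add_sub_cancel]
    ring
  have hpow2 : (s:ℝ)^k = (s:ℝ) * (s:ℝ)^(k-1) := by
    obtain ⟨k', rfl⟩ : ∃ k', k = k' + 1 := ⟨k - 1, by omega⟩
    simp only [Nat.add_sub_cancel, pow_succ]
    ring
  have hspos : (0:ℝ) < s := by positivity
  have hsk1 : (0:ℝ) < (s:ℝ)^(k-1) := by positivity
  have hcpos : 0 ≤ c := by
    rw [hc]
    positivity
  -- combine
  have h1 : (S.card:ℝ) * (s:ℝ)^k < (s:ℝ)^(k*d) + (S.card:ℝ) * ((s:ℝ)^(k-1) * c) := by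
    calc (S.card:ℝ) * (s:ℝ)^k ≤ (s:ℝ)^(k*d) + ∑ B ∈ S, (s:ℝ)^(k-1) * (D B:ℝ) := hreal
      _ < (s:ℝ)^(k*d) + (S.card:ℝ) * ((s:ℝ)^(k-1) * c) := by
          rw [← mul_assoc]
          linarith [hsum_lt]
  have h2 : (1+ε) * (s:ℝ)^(k*(d-1)) * (s:ℝ)^k ≤ (S.card:ℝ) * (s:ℝ)^k :=
    mul_le_mul_of_nonneg_right hcard (by positivity)
  have h3 : ε * (s:ℝ)^(k*(d-1)) * (s:ℝ)^k < (S.card:ℝ) * ((s:ℝ)^(k-1) * c) := by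
    rw [hpow1] at h1
    nlinarith
  have h4 : (S.card:ℝ) * ((s:ℝ)^(k-1) * c) ≤ (C:ℝ) * (s:ℝ)^(k*(d-1)) * ((s:ℝ)^(k-1) * c) := by
    apply mul_le_mul_of_nonneg_right hSC
    positivity
  have h5 : ε * (s:ℝ) < (C:ℝ) * c := by
    have h6 := h3.trans_le h4
    rw [hpow2] at h6
    have hpos : (0:ℝ) < (s:ℝ)^(k*(d-1)) * (s:ℝ)^(k-1) := by positivity
    nlinarith
  have hC1R : (1:ℝ) ≤ (C:ℝ) := by exact_mod_cast hC1
  have h7 : (C:ℝ) * c = ε * s / (C:ℝ) := by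
    rw [hc]
    field_simp
  rw [h7] at h5
  have h8 : ε * s / (C:ℝ) ≤ ε * s := by
    apply div_le_self (by positivity) hC1R
  linarith
end
end

section
/- If s ≥ |T|³ and k ≥ 1, then there exists a collection 𝓒 of subsets of 𝓑 such that: (1) every C ∈ 𝓒 satisfies |C| ≤ 3M; (2) |𝓒| ≤ e^{(log s)·M·|T|³/s}; and (3) every independent set of G is contained in some element of 𝓒. -/
open scoped Classical

noncomputable section

namespace Cont

abbrev Idx (d : ℕ) := (Fin d → ℕ) × (Fin d → ℤ)

variable (d s k : ℕ)

def lo (x : Idx d) : Fin d → ℤ := fun i => (s:ℤ) ^ (x.1 i) * x.2 i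
def hi (x : Idx d) : Fin d → ℤ := fun i => (s:ℤ) ^ (x.1 i) * (x.2 i + 1)

def Valid (x : Idx d) : Prop :=
  (∑ i, x.1 i) = k ∧ ∀ i, 0 ≤ x.2 i ∧ x.2 i < (s : ℤ) ^ (k - x.1 i)

def P : Finset (Idx d) :=
  ((Finset.Icc (0 : Fin d → ℕ) (fun _ => k)) ×ˢ
    (Finset.Icc (0 : Fin d → ℤ) (fun _ => (s:ℤ)^k))).filter (Valid d s k)

def cellsOf (x : Idx d) : Finset (Fin d → ℤ) :=
  Finset.Icc (lo d s x) (fun i => hi d s x i - 1)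

def Cells : Finset (Fin d → ℤ) :=
  Finset.Icc (0 : Fin d → ℤ) (fun _ => (s:ℤ)^k - 1)

variable {d s k}

lemma valid_t_le {x : Idx d} (hx : Valid d s k x) (i : Fin d) : x.1 i ≤ k := by
  rw [← hx.1]; exact Finset.single_le_sum (fun j _ => Nat.zero_le _) (Finset.mem_univ i)

lemma mem_P_iff (hs : 1 ≤ s) (x : Idx d) : x ∈ P d s k ↔ Valid d s k x := by
  constructor
  · exact fun h => (Finset.mem_filter.mp h).2
  · intro h
    refine Finset.mem_filter.mpr ⟨Finset.mem_product.mpr ⟨?_, ?_⟩, h⟩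
    · rw [Finset.mem_Icc]
      exact ⟨fun i => Nat.zero_le _, fun i => valid_t_le h i⟩
    · rw [Finset.mem_Icc]
      refine ⟨fun i => (h.2 i).1, fun i => le_trans (le_of_lt (h.2 i).2) ?_⟩
      exact pow_le_pow_right₀ (Nat.cast_le.mpr hs) (Nat.sub_le _ _)

lemma lo_lt_hi (hs : 1 ≤ s) (x : Idx d) (i : Fin d) : lo d s x i < hi d s x i := by
  have : (0:ℤ) < (s:ℤ) ^ (x.1 i) := pow_pos (by exact_mod_cast hs) _
  simp only [lo, hi]
  nlinarith

lemma mem_cellsOf {x : Idx d} {c : Fin d → ℤ} :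
    c ∈ cellsOf d s x ↔ ∀ i, lo d s x i ≤ c i ∧ c i ≤ hi d s x i - 1 := by
  simp [cellsOf, Finset.mem_Icc, Pi.le_def, forall_and]

lemma card_cellsOf {x : Idx d} (hx : Valid d s k x) : (cellsOf d s x).card = s ^ k := by
  rw [cellsOf, Pi.card_Icc]
  have h1 : ∀ i, (Finset.Icc (lo d s x i) (hi d s x i - 1)).card = s ^ (x.1 i) := by
    intro i
    rw [Int.card_Icc]
    have : hi d s x i - 1 + 1 - lo d s x i = (s:ℤ) ^ (x.1 i) := by
      simp only [lo, hi]; ring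
    rw [this, ← Nat.cast_pow, Int.toNat_natCast]
  rw [Finset.prod_congr rfl (fun i _ => h1 i), Finset.prod_pow_eq_pow_sum]
  rw [hx.1]

lemma cellsOf_subset_cells (hs : 1 ≤ s) {x : Idx d} (hx : Valid d s k x) :
    cellsOf d s x ⊆ Cells d s k := by
  intro c hc
  rw [mem_cellsOf] at hc
  rw [Cells, Finset.mem_Icc]
  have hsp : (0:ℤ) < (s:ℤ) := by exact_mod_cast hs
  constructor
  · intro i
    have := (hc i).1
    have h0 : (0:ℤ) ≤ lo d s x i :=
      mul_nonneg (pow_nonneg (le_of_lt hsp) _) (hx.2 i).1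
    exact le_trans h0 this
  · intro i
    have h2 := (hc i).2
    have h3 : hi d s x i ≤ (s:ℤ)^k := by
      have hb : x.2 i + 1 ≤ (s:ℤ) ^ (k - x.1 i) := (hx.2 i).2
      have : hi d s x i ≤ (s:ℤ) ^ (x.1 i) * (s:ℤ) ^ (k - x.1 i) := by
        simp only [hi]
        exact mul_le_mul_of_nonneg_left hb (pow_nonneg (le_of_lt hsp) _)
      rwa [← pow_add, Nat.add_sub_cancel' (valid_t_le hx i)] at this
    simp only [Pi.natCast_def] at *
    omega

lemma card_cells : (Cells d s k).card = (s ^ k) ^ d := by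
  rw [Cells, Pi.card_Icc]
  simp only [Pi.zero_apply]
  have : ∀ i : Fin d, (Finset.Icc (0:ℤ) ((s:ℤ)^k - 1)).card = s ^ k := by
    intro i
    rw [Int.card_Icc]
    have : (s:ℤ)^k - 1 + 1 - 0 = ((s^k : ℕ) : ℤ) := by push_cast; ring
    rw [this, Int.toNat_natCast]
  rw [Finset.prod_congr rfl (fun i _ => this i), Finset.prod_const, Finset.card_univ,
    Fintype.card_fin]

-- Section B: Meets, degree, supersaturation
variable (d s k)

def Meets (x y : Idx d) : Prop :=
  ∀ i, max (lo d s x i) (lo d s y i) < min (hi d s x i) (hi d s y i)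

def deg (A : Finset (Idx d)) (x : Idx d) : ℕ :=
  ((A.erase x).filter (fun y => Meets d s x y)).card

def mult (A : Finset (Idx d)) (c : Fin d → ℤ) : ℕ :=
  (A.filter (fun x => c ∈ cellsOf d s x)).card

variable {d s k}

lemma meets_self (hs : 1 ≤ s) (x : Idx d) : Meets d s x x := by
  intro i; simp only [max_self, min_self]; exact lo_lt_hi hs x i

lemma meets_comm {x y : Idx d} (h : Meets d s x y) : Meets d s y x := by
  intro i; rw [max_comm, min_comm]; exact h i

lemma meets_of_common {x y : Idx d} {c : Fin d → ℤ}
    (hx : c ∈ cellsOf d s x) (hy : c ∈ cellsOf d s y) : Meets d s x y := by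
  rw [mem_cellsOf] at hx hy
  intro i
  have h1 := (hx i).1; have h2 := (hx i).2
  have h3 := (hy i).1; have h4 := (hy i).2
  simp only [lt_min_iff, max_lt_iff] at *
  omega

lemma common_inter_eq (x y : Idx d) :
    cellsOf d s x ∩ cellsOf d s y =
      Finset.Icc (fun i => max (lo d s x i) (lo d s y i))
        (fun i => min (hi d s x i - 1) (hi d s y i - 1)) := by
  ext c
  simp only [Finset.mem_inter, mem_cellsOf, Finset.mem_Icc, Pi.le_def, max_le_iff, le_min_iff]
  constructor
  · rintro ⟨h1, h2⟩
    exact ⟨fun i => ⟨(h1 i).1, (h2 i).1⟩, fun i => ⟨(h1 i).2, (h2 i).2⟩⟩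
  · rintro ⟨h1, h2⟩
    exact ⟨fun i => ⟨(h1 i).1, (h2 i).1⟩, fun i => ⟨(h1 i).2, (h2 i).2⟩⟩

lemma sum_min_le {tx ty : Fin d → ℕ} (htx : ∑ i, tx i = k) (hty : ∑ i, ty i = k)
    (hne : tx ≠ ty) : ∑ i, min (tx i) (ty i) ≤ k - 1 := by
  have hle : ∀ i ∈ Finset.univ, min (tx i) (ty i) ≤ tx i := fun i _ => min_le_left _ _
  have h1 : ∑ i, min (tx i) (ty i) ≤ k := htx ▸ Finset.sum_le_sum hle
  rcases eq_or_lt_of_le h1 with heq | hlt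
  · exfalso
    have hx : ∀ i ∈ Finset.univ, min (tx i) (ty i) = tx i :=
      (Finset.sum_eq_sum_iff_of_le hle).mp (by rw [heq, htx])
    have hyle : ∀ i ∈ Finset.univ, tx i ≤ ty i := by
      intro i hi
      have := hx i hi
      omega
    have : ∀ i ∈ Finset.univ, tx i = ty i :=
      (Finset.sum_eq_sum_iff_of_le hyle).mp (by rw [htx, hty])
    exact hne (funext fun i => this i (Finset.mem_univ i))
  · omega

lemma card_common_le (hs : 1 ≤ s) {x y : Idx d} (hx : Valid d s k x) (hy : Valid d s k y)
    (hne : x ≠ y) : (cellsOf d s x ∩ cellsOf d s y).card ≤ s ^ (k - 1) := by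
  by_cases ht : x.1 = y.1
  · -- same shape, different position: disjoint
    have hp : x.2 ≠ y.2 := by
      intro hp; exact hne (Prod.ext ht hp)
    obtain ⟨i, hpi⟩ := Function.ne_iff.mp hp
    have hempty : cellsOf d s x ∩ cellsOf d s y = ∅ := by
      rw [Finset.eq_empty_iff_forall_notMem]
      intro c hc
      rw [Finset.mem_inter, mem_cellsOf, mem_cellsOf] at hc
      have h1 := (hc.1 i).1; have h2 := (hc.1 i).2
      have h3 := (hc.2 i).1; have h4 := (hc.2 i).2
      simp only [lo, Cont.hi] at h1 h2 h3 h4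
      rw [ht] at h1 h2
      have hsp : (0:ℤ) < (s:ℤ) ^ (y.1 i) := pow_pos (by exact_mod_cast hs) _
      rcases lt_or_gt_of_ne hpi with h | h
      · nlinarith [mul_le_mul_of_nonneg_left (show x.2 i + 1 ≤ y.2 i by omega) (le_of_lt hsp)]
      · nlinarith [mul_le_mul_of_nonneg_left (show y.2 i + 1 ≤ x.2 i by omega) (le_of_lt hsp)]
    rw [hempty]; simp
  · -- different shapes
    rw [common_inter_eq, Pi.card_Icc]
    have hbound : ∀ i, (Finset.Icc (max (lo d s x i) (lo d s y i))
        (min (hi d s x i - 1) (hi d s y i - 1))).card ≤ s ^ (min (x.1 i) (y.1 i)) := by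
      intro i
      rw [Int.card_Icc]
      apply Int.toNat_le.mpr
      have e1 : hi d s x i - lo d s x i = (s:ℤ) ^ (x.1 i) := by simp only [lo, hi]; ring
      have e2 : hi d s y i - lo d s y i = (s:ℤ) ^ (y.1 i) := by simp only [lo, hi]; ring
      have : (s:ℤ) ^ (min (x.1 i) (y.1 i)) = min ((s:ℤ) ^ (x.1 i)) ((s:ℤ) ^ (y.1 i)) := by
        rcases le_total (x.1 i) (y.1 i) with h | h
        · rw [min_eq_left h, min_eq_left (pow_le_pow_right₀ (by exact_mod_cast hs) h)]
        · rw [min_eq_right h, min_eq_right (pow_le_pow_right₀ (by exact_mod_cast hs) h)]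
      push_cast [this]
      simp only [le_min_iff, min_le_iff, max_le_iff, le_max_iff] at *
      omega
    calc ∏ i, (Finset.Icc (max (lo d s x i) (lo d s y i))
          (min (hi d s x i - 1) (hi d s y i - 1))).card
        ≤ ∏ i, s ^ (min (x.1 i) (y.1 i)) := Finset.prod_le_prod (fun _ _ => Nat.zero_le _)
          (fun i _ => hbound i)
      _ = s ^ (∑ i, min (x.1 i) (y.1 i)) := Finset.prod_pow_eq_pow_sum _ _ _
      _ ≤ s ^ (k - 1) := Nat.pow_le_pow_right hs (sum_min_le hx.1 hy.1 ht)

lemma sum_mult (hs : 1 ≤ s) {A : Finset (Idx d)} (hA : ∀ x ∈ A, Valid d s k x) :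
    ∑ c ∈ Cells d s k, mult d s A c = A.card * s ^ k := by
  simp only [mult, Finset.card_filter]
  rw [Finset.sum_comm]
  have : ∀ x ∈ A, (∑ c ∈ Cells d s k, if c ∈ cellsOf d s x then 1 else 0) = s ^ k := by
    intro x hx
    rw [← Finset.card_filter, Finset.filter_mem_eq_inter,
      Finset.inter_eq_right.mpr (cellsOf_subset_cells hs (hA x hx)), card_cellsOf (hA x hx)]
  rw [Finset.sum_congr rfl this, Finset.sum_const, smul_eq_mul]

lemma sum_mult_sq (hs : 1 ≤ s) {A : Finset (Idx d)} (hA : ∀ x ∈ A, Valid d s k x) :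
    ∑ c ∈ Cells d s k, (mult d s A c) ^ 2 =
      ∑ x ∈ A, ∑ y ∈ A, (cellsOf d s x ∩ cellsOf d s y).card := by
  have step1 : ∀ c, (mult d s A c) ^ 2 =
      ∑ x ∈ A, ∑ y ∈ A, if c ∈ cellsOf d s x ∩ cellsOf d s y then 1 else 0 := by
    intro c
    rw [sq, mult, Finset.card_filter, Finset.sum_mul_sum]
    congr 1; ext x; congr 1; ext y
    simp only [Finset.mem_inter]
    split_ifs <;> simp_all
  rw [Finset.sum_congr rfl (fun c _ => step1 c), Finset.sum_comm]
  apply Finset.sum_congr rfl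
  intro x hx
  rw [Finset.sum_comm]
  apply Finset.sum_congr rfl
  intro y hy
  rw [← Finset.card_filter, Finset.filter_mem_eq_inter, Finset.inter_eq_right.mpr]
  exact subset_trans (Finset.inter_subset_left) (cellsOf_subset_cells hs (hA x hx))

lemma pairs_bound (hs : 1 ≤ s) {A : Finset (Idx d)} (hA : ∀ x ∈ A, Valid d s k x) :
    ∑ x ∈ A, ∑ y ∈ A, (cellsOf d s x ∩ cellsOf d s y).card ≤
      ∑ x ∈ A, (s ^ k + deg d s A x * s ^ (k - 1)) := by
  apply Finset.sum_le_sum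
  intro x hx
  rw [← Finset.add_sum_erase A _ hx]
  apply add_le_add
  · rw [Finset.inter_self, card_cellsOf (hA x hx)]
  · rw [← Finset.sum_filter_add_sum_filter_not (A.erase x) (fun y => Meets d s x y)]
    have h2 : ∑ y ∈ (A.erase x).filter (fun y => ¬ Meets d s x y),
        (cellsOf d s x ∩ cellsOf d s y).card = 0 := by
      apply Finset.sum_eq_zero
      intro y hy
      rw [Finset.mem_filter] at hy
      rw [Finset.card_eq_zero, Finset.eq_empty_iff_forall_notMem]
      intro c hc
      rw [Finset.mem_inter] at hc
      exact hy.2 (meets_of_common hc.1 hc.2)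
    rw [h2, add_zero, deg]
    calc ∑ y ∈ (A.erase x).filter (fun y => Meets d s x y), (cellsOf d s x ∩ cellsOf d s y).card
        ≤ ∑ y ∈ (A.erase x).filter (fun y => Meets d s x y), s ^ (k-1) := by
          apply Finset.sum_le_sum
          intro y hy
          rw [Finset.mem_filter, Finset.mem_erase] at hy
          exact card_common_le hs (hA x hx) (hA y (hy.1.2)) (Ne.symm hy.1.1)
      _ = ((A.erase x).filter (fun y => Meets d s x y)).card * s ^ (k-1) := by
          rw [Finset.sum_const, smul_eq_mul]

lemma exists_big_deg (hs : 2 ≤ s) (hk : 1 ≤ k) (hd : 1 ≤ d) {A : Finset (Idx d)}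
    (hA : ∀ x ∈ A, Valid d s k x) (hcard : 2 * s ^ (k * (d-1)) < A.card) :
    ∃ x ∈ A, s ≤ deg d s A x := by
  by_contra hcon
  push_neg at hcon
  set M := s ^ (k * (d-1)) with hM
  set u := A.card with hu
  set e := s ^ (k-1) with he
  have hs1 : 1 ≤ s := by omega
  have hse : s ^ k = s * e := by
    rw [he, ← pow_succ']
    congr 1
    omega
  have hMpos : 1 ≤ M := Nat.one_le_iff_ne_zero.mpr (pow_ne_zero _ (by omega))
  have hepos : 1 ≤ e := Nat.one_le_iff_ne_zero.mpr (pow_ne_zero _ (by omega))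
  have hupos : 0 < u := by omega
  -- Cauchy-Schwarz
  have cauchy : (∑ c ∈ Cells d s k, mult d s A c) ^ 2 ≤
      (∑ c ∈ Cells d s k, (mult d s A c) ^ 2) * (Cells d s k).card := by
    have := Finset.sum_mul_sq_le_sq_mul_sq (Cells d s k) (fun c => mult d s A c) (fun _ => 1)
    simpa [Finset.sum_const, smul_eq_mul, mul_comm] using this
  rw [sum_mult hs1 hA, card_cells] at cauchy
  have hub : ∑ c ∈ Cells d s k, (mult d s A c) ^ 2 ≤ u * (s ^ k + (s-1) * e) := by
    calc ∑ c ∈ Cells d s k, (mult d s A c) ^ 2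
        = ∑ x ∈ A, ∑ y ∈ A, (cellsOf d s x ∩ cellsOf d s y).card := sum_mult_sq hs1 hA
      _ ≤ ∑ x ∈ A, (s ^ k + deg d s A x * s ^ (k - 1)) := pairs_bound hs1 hA
      _ ≤ ∑ x ∈ A, (s ^ k + (s-1) * e) := by
          apply Finset.sum_le_sum
          intro x hx
          have := hcon x hx
          exact add_le_add_right (Nat.mul_le_mul_right _ (by omega)) _
      _ = u * (s ^ k + (s-1) * e) := by rw [Finset.sum_const, smul_eq_mul]
  -- combine
  have hcells : (s ^ k) ^ d = (s ^ k) * M := by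
    rw [hM, ← pow_mul, ← pow_add]
    congr 1
    cases d with
    | zero => omega
    | succ d' => simp [Nat.mul_succ, Nat.succ_sub_one, Nat.add_comm]
  have main : (u * s ^ k) ^ 2 ≤ (u * (s ^ k + (s-1) * e)) * ((s ^ k) * M) := by
    calc (u * s ^ k) ^ 2 ≤ (∑ c ∈ Cells d s k, (mult d s A c) ^ 2) * (s ^ k) ^ d := cauchy
      _ ≤ (u * (s ^ k + (s-1) * e)) * (s ^ k) ^ d := Nat.mul_le_mul_right _ hub
      _ = (u * (s ^ k + (s-1) * e)) * ((s ^ k) * M) := by rw [hcells]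
  have hmpos : 0 < s ^ k := pow_pos (by omega) k
  have step1 : u * s ^ k ≤ (s ^ k + (s-1) * e) * M := by
    apply Nat.le_of_mul_le_mul_left _ (Nat.mul_pos hupos hmpos)
    calc (u * s ^ k) * (u * s ^ k) = (u * s ^ k) ^ 2 := (sq _).symm
      _ ≤ (u * (s ^ k + (s-1) * e)) * ((s ^ k) * M) := main
      _ = (u * s ^ k) * ((s ^ k + (s-1) * e) * M) := by ring
  have step2 : u * s ≤ (2*s - 1) * M := by
    apply Nat.le_of_mul_le_mul_right _ hepos
    have h9 : s + (s-1) = 2*s - 1 := by omega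
    calc (u * s) * e = u * (s * e) := by ring
      _ = u * s ^ k := by rw [← hse]
      _ ≤ (s ^ k + (s-1) * e) * M := step1
      _ = (s * e + (s-1) * e) * M := by rw [hse]
      _ = ((s + (s-1)) * M) * e := by ring
      _ = ((2*s - 1) * M) * e := by rw [h9]
  have h6 : (2*M+1) * s ≤ u * s := Nat.mul_le_mul_right s (by omega)
  have h7 : (2*s - 1) * M + M = 2 * (s * M) := by
    have h10 : (2*s - 1) + 1 = 2*s := by omega
    calc (2*s-1) * M + M = ((2*s-1) + 1) * M := by ring
      _ = (2*s) * M := by rw [h10]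
      _ = 2 * (s * M) := by ring
  have h8 : (2*M+1) * s = 2 * (s * M) + s := by ring
  linarith [step2, h6, h7, h8, hMpos, hs]

-- Section C: the container algorithm
variable (d s : ℕ)

def alg (M : ℕ) (I A : Finset (Idx d)) : Finset (Idx d) × Finset (Idx d) :=
  if h2 : 2*M < A.card ∧ (A.filter (fun x => s ≤ deg d s A x)).Nonempty then
    if h2.2.choose ∈ I then
      (insert h2.2.choose
        (alg M I (A.filter fun y => y ≠ h2.2.choose ∧ ¬ Meets d s h2.2.choose y)).1,
       (alg M I (A.filter fun y => y ≠ h2.2.choose ∧ ¬ Meets d s h2.2.choose y)).2)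
    else alg M I (A.erase h2.2.choose)
  else (∅, A)
termination_by A.card
decreasing_by
  · have hv : h2.2.choose ∈ A := (Finset.mem_filter.mp h2.2.choose_spec).1
    calc (A.filter fun y => y ≠ h2.2.choose ∧ ¬ Meets d s h2.2.choose y).card
        ≤ (A.erase h2.2.choose).card := by
          apply Finset.card_le_card
          intro y hy
          rw [Finset.mem_filter] at hy
          exact Finset.mem_erase.mpr ⟨hy.2.1, hy.1⟩
      _ < A.card := Finset.card_erase_lt_of_mem hv
  · have hv : h2.2.choose ∈ A := (Finset.mem_filter.mp h2.2.choose_spec).1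
    exact Finset.card_erase_lt_of_mem hv

variable {d s}

section AlgLemmas

variable {M : ℕ}

private lemma cond_choose_mem {A : Finset (Idx d)}
    (h2 : 2*M < A.card ∧ (A.filter (fun x => s ≤ deg d s A x)).Nonempty) :
    h2.2.choose ∈ A := (Finset.mem_filter.mp h2.2.choose_spec).1

private lemma cond_choose_deg {A : Finset (Idx d)}
    (h2 : 2*M < A.card ∧ (A.filter (fun x => s ≤ deg d s A x)).Nonempty) :
    s ≤ deg d s A h2.2.choose := (Finset.mem_filter.mp h2.2.choose_spec).2

lemma alg_eq_pos_mem {I A : Finset (Idx d)}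
    (h2 : 2*M < A.card ∧ (A.filter (fun x => s ≤ deg d s A x)).Nonempty)
    (hv : h2.2.choose ∈ I) :
    alg d s M I A =
      (insert h2.2.choose
        (alg d s M I (A.filter fun y => y ≠ h2.2.choose ∧ ¬ Meets d s h2.2.choose y)).1,
       (alg d s M I (A.filter fun y => y ≠ h2.2.choose ∧ ¬ Meets d s h2.2.choose y)).2) := by
  rw [alg, dif_pos h2, if_pos hv]

lemma alg_eq_pos_notmem {I A : Finset (Idx d)}
    (h2 : 2*M < A.card ∧ (A.filter (fun x => s ≤ deg d s A x)).Nonempty)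
    (hv : h2.2.choose ∉ I) :
    alg d s M I A = alg d s M I (A.erase h2.2.choose) := by
  rw [alg, dif_pos h2, if_neg hv]

lemma alg_eq_neg {I A : Finset (Idx d)}
    (h2 : ¬ (2*M < A.card ∧ (A.filter (fun x => s ≤ deg d s A x)).Nonempty)) :
    alg d s M I A = (∅, A) := by
  rw [alg, dif_neg h2]

private lemma filt_ssubset {A : Finset (Idx d)} {v : Idx d} (hvA : v ∈ A) :
    (A.filter fun y => y ≠ v ∧ ¬ Meets d s v y) ⊂ A := by
  apply Finset.ssubset_iff_of_subset (Finset.filter_subset _ _) |>.mpr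
  exact ⟨v, hvA, by simp⟩

lemma alg_subset (M : ℕ) (I : Finset (Idx d)) (A : Finset (Idx d)) :
    (alg d s M I A).1 ⊆ A ∧ (alg d s M I A).1 ⊆ I ∧ (alg d s M I A).2 ⊆ A := by
  induction A using Finset.strongInduction with
  | _ A ih =>
    by_cases h2 : 2*M < A.card ∧ (A.filter (fun x => s ≤ deg d s A x)).Nonempty
    · have hvA := cond_choose_mem h2
      by_cases hv : h2.2.choose ∈ I
      · rw [alg_eq_pos_mem h2 hv]
        obtain ⟨ih1, ih2, ih3⟩ := ih _ (filt_ssubset hvA)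
        refine ⟨?_, ?_, fun x hx => Finset.filter_subset _ _ (ih3 hx)⟩
        · intro x hx
          rcases Finset.mem_insert.mp hx with rfl | hx
          · exact hvA
          · exact Finset.filter_subset _ _ (ih1 hx)
        · intro x hx
          rcases Finset.mem_insert.mp hx with rfl | hx
          · exact hv
          · exact ih2 hx
      · rw [alg_eq_pos_notmem h2 hv]
        obtain ⟨ih1, ih2, ih3⟩ := ih _ (Finset.erase_ssubset hvA)
        exact ⟨fun x hx => Finset.erase_subset _ _ (ih1 hx), ih2,
          fun x hx => Finset.erase_subset _ _ (ih3 hx)⟩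
    · rw [alg_eq_neg h2]
      exact ⟨by simp, by simp, by simp⟩

lemma alg_snd_card {k : ℕ} (hs : 2 ≤ s) (hk : 1 ≤ k) (hd : 1 ≤ d) (I : Finset (Idx d))
    (A : Finset (Idx d)) (hA : ∀ x ∈ A, Valid d s k x) :
    (alg d s (s^(k*(d-1))) I A).2.card ≤ 2 * s^(k*(d-1)) := by
  induction A using Finset.strongInduction with
  | _ A ih =>
    by_cases h2 : 2*(s^(k*(d-1))) < A.card ∧
        (A.filter (fun x => s ≤ deg d s A x)).Nonempty
    · have hvA := cond_choose_mem h2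
      by_cases hv : h2.2.choose ∈ I
      · rw [alg_eq_pos_mem h2 hv]
        exact ih _ (filt_ssubset hvA) (fun x hx => hA x (Finset.filter_subset _ _ hx))
      · rw [alg_eq_pos_notmem h2 hv]
        exact ih _ (Finset.erase_ssubset hvA) (fun x hx => hA x (Finset.erase_subset _ _ hx))
    · rw [alg_eq_neg h2]
      simp only
      by_contra hbig
      push_neg at hbig
      apply h2
      refine ⟨by omega, ?_⟩
      obtain ⟨x, hx, hdeg⟩ := exists_big_deg hs hk hd hA (by omega)
      exact ⟨x, Finset.mem_filter.mpr ⟨hx, hdeg⟩⟩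

lemma alg_fst_card (M : ℕ) (I : Finset (Idx d)) (A : Finset (Idx d)) :
    (s+1) * (alg d s M I A).1.card + (alg d s M I A).2.card ≤ A.card := by
  induction A using Finset.strongInduction with
  | _ A ih =>
    by_cases h2 : 2*M < A.card ∧ (A.filter (fun x => s ≤ deg d s A x)).Nonempty
    · have hvA := cond_choose_mem h2
      have hvdeg := cond_choose_deg h2
      by_cases hv : h2.2.choose ∈ I
      · rw [alg_eq_pos_mem h2 hv]
        set v := h2.2.choose with hvdef
        set A' := A.filter fun y => y ≠ v ∧ ¬ Meets d s v y with hA'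
        have hrem : A'.card + (s + 1) ≤ A.card := by
          have hsplit := Finset.card_filter_add_card_filter_not
            (s := A) (p := fun y => y ≠ v ∧ ¬ Meets d s v y)
          rw [← hA'] at hsplit
          have hbig : s + 1 ≤ (A.filter fun y => ¬(y ≠ v ∧ ¬ Meets d s v y)).card := by
            have hins : insert v ((A.erase v).filter (fun y => Meets d s v y)) ⊆
                A.filter fun y => ¬(y ≠ v ∧ ¬ Meets d s v y) := by
              intro y hy
              rcases Finset.mem_insert.mp hy with rfl | hy
              · exact Finset.mem_filter.mpr ⟨hvA, by simp⟩
              · rw [Finset.mem_filter, Finset.mem_erase] at hy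
                exact Finset.mem_filter.mpr ⟨hy.1.2, by tauto⟩
            have hcard : (insert v ((A.erase v).filter (fun y => Meets d s v y))).card
                = deg d s A v + 1 := by
              rw [Finset.card_insert_of_notMem, deg]
              intro hmem
              exact (Finset.mem_erase.mp (Finset.mem_of_mem_filter _ hmem)).1 rfl
            calc s + 1 ≤ deg d s A v + 1 := by omega
              _ = _ := hcard.symm
              _ ≤ _ := Finset.card_le_card hins
          omega
        have hrec := ih A' (filt_ssubset hvA)
        have hc1 : (insert v (alg d s M I A').1).card ≤ (alg d s M I A').1.card + 1 :=
          Finset.card_insert_le _ _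
        calc (s+1) * (insert v (alg d s M I A').1).card + (alg d s M I A').2.card
            ≤ (s+1) * ((alg d s M I A').1.card + 1) + (alg d s M I A').2.card :=
              add_le_add_left (Nat.mul_le_mul_left _ hc1) _
          _ = ((s+1) * (alg d s M I A').1.card + (alg d s M I A').2.card) + (s+1) := by ring
          _ ≤ A'.card + (s+1) := by omega
          _ ≤ A.card := hrem
      · rw [alg_eq_pos_notmem h2 hv]
        calc (s+1) * (alg d s M I (A.erase h2.2.choose)).1.card
              + (alg d s M I (A.erase h2.2.choose)).2.card
            ≤ (A.erase h2.2.choose).card := ih _ (Finset.erase_ssubset hvA)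
          _ ≤ A.card := Finset.card_le_card (Finset.erase_subset _ _)
    · rw [alg_eq_neg h2]
      simp

lemma alg_covers (M : ℕ) (I : Finset (Idx d))
    (hind : ∀ x ∈ I, ∀ y ∈ I, x ≠ y → ¬ Meets d s x y) (A : Finset (Idx d)) :
    I ∩ A ⊆ (alg d s M I A).1 ∪ (alg d s M I A).2 := by
  induction A using Finset.strongInduction with
  | _ A ih =>
    by_cases h2 : 2*M < A.card ∧ (A.filter (fun x => s ≤ deg d s A x)).Nonempty
    · have hvA := cond_choose_mem h2
      by_cases hv : h2.2.choose ∈ I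
      · rw [alg_eq_pos_mem h2 hv]
        set v := h2.2.choose with hvdef
        set A' := A.filter fun y => y ≠ v ∧ ¬ Meets d s v y with hA'
        intro x hx
        rw [Finset.mem_inter] at hx
        by_cases hxv : x = v
        · subst hxv
          exact Finset.mem_union_left _ (Finset.mem_insert_self _ _)
        · have hxA' : x ∈ A' := by
            rw [hA', Finset.mem_filter]
            exact ⟨hx.2, hxv, fun hm => hind v hv x hx.1 (Ne.symm hxv) hm⟩
          have hrec := ih A' (filt_ssubset hvA) (Finset.mem_inter.mpr ⟨hx.1, hxA'⟩)
          rcases Finset.mem_union.mp hrec with h | h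
          · exact Finset.mem_union_left _ (Finset.mem_insert_of_mem h)
          · exact Finset.mem_union_right _ h
      · rw [alg_eq_pos_notmem h2 hv]
        intro x hx
        rw [Finset.mem_inter] at hx
        have hxv : x ≠ h2.2.choose := by rintro rfl; exact hv hx.1
        exact ih _ (Finset.erase_ssubset hvA)
          (Finset.mem_inter.mpr ⟨hx.1, Finset.mem_erase.mpr ⟨hxv, hx.2⟩⟩)
    · rw [alg_eq_neg h2]
      intro x hx
      exact Finset.mem_union_right _ (Finset.mem_inter.mp hx).2

lemma alg_congr (M : ℕ) (I J : Finset (Idx d)) (A : Finset (Idx d)) (hIJ : I ∩ A = J ∩ A) :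
    alg d s M I A = alg d s M J A := by
  induction A using Finset.strongInduction with
  | _ A ih =>
    by_cases h2 : 2*M < A.card ∧ (A.filter (fun x => s ≤ deg d s A x)).Nonempty
    · have hvA := cond_choose_mem h2
      have hmem_iff : (h2.2.choose ∈ I) ↔ (h2.2.choose ∈ J) := by
        constructor
        · intro h
          have : h2.2.choose ∈ J ∩ A := hIJ ▸ Finset.mem_inter.mpr ⟨h, hvA⟩
          exact (Finset.mem_inter.mp this).1
        · intro h
          have : h2.2.choose ∈ I ∩ A := hIJ.symm ▸ Finset.mem_inter.mpr ⟨h, hvA⟩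
          exact (Finset.mem_inter.mp this).1
      by_cases hv : h2.2.choose ∈ I
      · have hv' : h2.2.choose ∈ J := hmem_iff.mp hv
        rw [alg_eq_pos_mem h2 hv, alg_eq_pos_mem h2 hv']
        set A' := A.filter fun y => y ≠ h2.2.choose ∧ ¬ Meets d s h2.2.choose y with hA'
        have hIJ' : I ∩ A' = J ∩ A' := by
          have e1 : I ∩ A' = (I ∩ A) ∩ A' := by
            rw [Finset.inter_assoc, Finset.inter_eq_right.mpr (Finset.filter_subset _ _)]
          have e2 : J ∩ A' = (J ∩ A) ∩ A' := by
            rw [Finset.inter_assoc, Finset.inter_eq_right.mpr (Finset.filter_subset _ _)]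
          rw [e1, e2, hIJ]
        rw [ih A' (filt_ssubset hvA) hIJ']
      · have hv' : h2.2.choose ∉ J := fun h => hv (hmem_iff.mpr h)
        rw [alg_eq_pos_notmem h2 hv, alg_eq_pos_notmem h2 hv']
        have hIJ' : I ∩ (A.erase h2.2.choose) = J ∩ (A.erase h2.2.choose) := by
          have e1 : I ∩ (A.erase h2.2.choose) = (I ∩ A) ∩ (A.erase h2.2.choose) := by
            rw [Finset.inter_assoc, Finset.inter_eq_right.mpr (Finset.erase_subset _ _)]
          have e2 : J ∩ (A.erase h2.2.choose) = (J ∩ A) ∩ (A.erase h2.2.choose) := by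
            rw [Finset.inter_assoc, Finset.inter_eq_right.mpr (Finset.erase_subset _ _)]
          rw [e1, e2, hIJ]
        exact ih _ (Finset.erase_ssubset hvA) hIJ'
    · rw [alg_eq_neg h2, alg_eq_neg h2]

lemma alg_determ (M : ℕ) (I : Finset (Idx d)) (A : Finset (Idx d)) :
    alg d s M (alg d s M I A).1 A = alg d s M I A := by
  induction A using Finset.strongInduction with
  | _ A ih =>
    by_cases h2 : 2*M < A.card ∧ (A.filter (fun x => s ≤ deg d s A x)).Nonempty
    · have hvA := cond_choose_mem h2
      by_cases hv : h2.2.choose ∈ I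
      · have hfst := alg_eq_pos_mem h2 hv
        have hvmem : h2.2.choose ∈ (alg d s M I A).1 := by
          rw [hfst]; exact Finset.mem_insert_self _ _
        have hvnotF : h2.2.choose ∉
            (A.filter fun y => y ≠ h2.2.choose ∧ ¬ Meets d s h2.2.choose y) := by simp
        have e1 : (alg d s M I A).1 ∩
              (A.filter fun y => y ≠ h2.2.choose ∧ ¬ Meets d s h2.2.choose y)
            = (alg d s M I (A.filter fun y => y ≠ h2.2.choose ∧ ¬ Meets d s h2.2.choose y)).1 ∩
              (A.filter fun y => y ≠ h2.2.choose ∧ ¬ Meets d s h2.2.choose y) := by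
          conv_lhs => rw [hfst]
          exact Finset.insert_inter_of_notMem hvnotF
        have hcong := alg_congr (d := d) (s := s) M _ _ _ e1
        calc alg d s M (alg d s M I A).1 A
            = (insert h2.2.choose
                (alg d s M (alg d s M I A).1
                  (A.filter fun y => y ≠ h2.2.choose ∧ ¬ Meets d s h2.2.choose y)).1,
               (alg d s M (alg d s M I A).1
                  (A.filter fun y => y ≠ h2.2.choose ∧ ¬ Meets d s h2.2.choose y)).2) :=
              alg_eq_pos_mem h2 hvmem
          _ = (insert h2.2.choose
                (alg d s M I (A.filter fun y => y ≠ h2.2.choose ∧ ¬ Meets d s h2.2.choose y)).1,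
               (alg d s M I (A.filter fun y => y ≠ h2.2.choose ∧ ¬ Meets d s h2.2.choose y)).2) := by
              rw [hcong, ih _ (filt_ssubset hvA)]
          _ = alg d s M I A := hfst.symm
      · have hfst := alg_eq_pos_notmem h2 hv
        have hvnot : h2.2.choose ∉ (alg d s M I A).1 := by
          rw [hfst]
          intro hmem
          exact (Finset.mem_erase.mp ((alg_subset M I _).1 hmem)).1 rfl
        have e1 : (alg d s M I A).1 ∩ (A.erase h2.2.choose)
            = (alg d s M I (A.erase h2.2.choose)).1 ∩ (A.erase h2.2.choose) := by
          rw [hfst]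
        have hcong := alg_congr (d := d) (s := s) M _ _ _ e1
        calc alg d s M (alg d s M I A).1 A
            = alg d s M (alg d s M I A).1 (A.erase h2.2.choose) := alg_eq_pos_notmem h2 hvnot
          _ = alg d s M (alg d s M I (A.erase h2.2.choose)).1 (A.erase h2.2.choose) := hcong
          _ = alg d s M I (A.erase h2.2.choose) := ih _ (Finset.erase_ssubset hvA)
          _ = alg d s M I A := hfst.symm
    · rw [alg_eq_neg h2, alg_eq_neg h2]

end AlgLemmas

-- Section D: counting
lemma card_small_subsets {α : Type*} [DecidableEq α] (V : Finset α) (q : ℕ) :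
    (V.powerset.filter (fun S => S.card ≤ q)).card ≤ (V.card + 1) ^ q := by
  induction q with
  | zero =>
    apply le_trans (Finset.card_le_one.mpr ?_) (by norm_num)
    intro a ha b hb
    rw [Finset.mem_filter] at ha hb
    rw [Finset.card_eq_zero.mp (Nat.le_zero.mp ha.2), Finset.card_eq_zero.mp (Nat.le_zero.mp hb.2)]
  | succ q ih =>
    have hmap : ∀ S ∈ V.powerset.filter (fun S => S.card ≤ q + 1),
        (if h : S.Nonempty then (S.erase h.choose, some h.choose) else (∅, none)) ∈
          (V.powerset.filter (fun S => S.card ≤ q)) ×ˢ (insert none (V.image some)) := by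
      intro S hS
      rw [Finset.mem_filter, Finset.mem_powerset] at hS
      split_ifs with h
      · rw [Finset.mem_product]
        constructor
        · rw [Finset.mem_filter, Finset.mem_powerset]
          constructor
          · exact subset_trans (Finset.erase_subset _ _) hS.1
          · rw [Finset.card_erase_of_mem h.choose_spec]
            omega
        · exact Finset.mem_insert_of_mem
            (Finset.mem_image_of_mem some (hS.1 h.choose_spec))
      · rw [Finset.mem_product]
        exact ⟨Finset.mem_filter.mpr ⟨Finset.mem_powerset.mpr (Finset.empty_subset _), by simp⟩,
          Finset.mem_insert_self _ _⟩
    have hinj : Set.InjOn (fun S : Finset α =>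
        (if h : S.Nonempty then (S.erase h.choose, some h.choose) else (∅, none)))
        ↑(V.powerset.filter (fun S => S.card ≤ q + 1)) := by
      intro S _ S' _ heq
      simp only at heq
      by_cases h : S.Nonempty <;> by_cases h' : S'.Nonempty
      · rw [dif_pos h, dif_pos h'] at heq
        have h2' : h.choose = h'.choose := by
          simpa using (Prod.ext_iff.mp heq).2
        have h1' : S.erase h.choose = S'.erase h'.choose := (Prod.ext_iff.mp heq).1
        have e1 : S = insert h.choose (S.erase h.choose) :=
          (Finset.insert_erase h.choose_spec).symm
        rw [e1, h1', h2', Finset.insert_erase h'.choose_spec]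
      · rw [dif_pos h, dif_neg h'] at heq
        simpa using (Prod.ext_iff.mp heq).2
      · rw [dif_neg h, dif_pos h'] at heq
        simpa using (Prod.ext_iff.mp heq).2
      · rw [Finset.not_nonempty_iff_eq_empty.mp h, Finset.not_nonempty_iff_eq_empty.mp h']
    calc (V.powerset.filter (fun S => S.card ≤ q + 1)).card
        ≤ ((V.powerset.filter (fun S => S.card ≤ q)) ×ˢ (insert none (V.image some))).card :=
          Finset.card_le_card_of_injOn _ hmap hinj
      _ = (V.powerset.filter (fun S => S.card ≤ q)).card * (insert none (V.image some)).card :=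
          Finset.card_product _ _
      _ ≤ (V.card + 1) ^ q * (V.card + 1) := by
          apply Nat.mul_le_mul ih
          calc (insert none (V.image some)).card ≤ (V.image some).card + 1 :=
              Finset.card_insert_le _ _
            _ ≤ V.card + 1 := add_le_add_left (Finset.card_image_le) 1
      _ = (V.card + 1) ^ (q + 1) := by ring

lemma sum_k_sub (k : ℕ) {d : ℕ} (hd : 1 ≤ d) (t : Fin d → ℕ) (ht : ∑ i, t i = k)
    (htle : ∀ i, t i ≤ k) : ∑ i, (k - t i) = k * (d - 1) := by
  have h1 : ∀ i : Fin d, (k - t i) + t i = k := fun i => Nat.sub_add_cancel (htle i)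
  have h2 : (∑ i, (k - t i)) + (∑ i, t i) = d * k := by
    rw [← Finset.sum_add_distrib,
      Finset.sum_congr rfl (fun i _ => h1 i), Finset.sum_const, Finset.card_univ,
      Fintype.card_fin, smul_eq_mul]
  obtain ⟨d', rfl⟩ : ∃ d', d = d' + 1 := ⟨d - 1, by omega⟩
  have h3 : (d' + 1) * k = k * d' + k := by ring
  simp only [Nat.add_sub_cancel]
  omega

lemma card_T {d k : ℕ} (hd : 1 ≤ d) :
    ((Finset.Icc (0 : Fin d → ℕ) (fun _ => k)).filter (fun t => ∑ i, t i = k)).card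
      ≤ (k + d - 1).choose (d - 1) := by
  classical
  set T := (Finset.Icc (0 : Fin d → ℕ) (fun _ => k)).filter (fun t => ∑ i, t i = k) with hT
  have hcount : ∀ t : Fin d → ℕ, ∀ j, Multiset.count j (∑ i, Multiset.replicate (t i) i) = t j := by
    intro t j
    rw [Multiset.count_sum']
    rw [Finset.sum_eq_single j]
    · rw [Multiset.count_replicate_self]
    · intro b _ hb
      rw [Multiset.count_replicate, if_neg hb]
    · simp
  have hcard : ∀ t : {t // t ∈ T}, Multiset.card (∑ i, Multiset.replicate (t.1 i) i) = k := by
    intro ⟨t, ht'⟩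
    rw [Finset.mem_filter] at ht'
    have hcs : Multiset.card (∑ i, Multiset.replicate (t i) i)
        = ∑ i, Multiset.card (Multiset.replicate (t i) i) := by
      induction (Finset.univ : Finset (Fin d)) using Finset.induction_on with
      | empty => simp
      | insert h ih => simp_all
    rw [hcs]
    simpa [Multiset.card_replicate] using ht'.2
  have hle : Fintype.card {t // t ∈ T} ≤ Fintype.card (Sym (Fin d) k) := by
    refine Fintype.card_le_of_injective
      (fun t => (⟨∑ i, Multiset.replicate (t.1 i) i, hcard t⟩ : Sym (Fin d) k)) ?_
    intro a b h
    apply Subtype.ext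
    funext j
    have := congrArg (fun m : Sym (Fin d) k => Multiset.count j m.1) h
    simpa [hcount] using this
  rw [Fintype.card_coe] at hle
  calc T.card ≤ Fintype.card (Sym (Fin d) k) := hle
    _ = Nat.multichoose d k := by
        rw [Sym.card_sym_eq_multichoose, Fintype.card_fin]
    _ = (d + k - 1).choose k := Nat.multichoose_eq d k
    _ = (k + d - 1).choose k := by rw [show d + k - 1 = k + d - 1 by omega]
    _ = (k + d - 1).choose (d - 1) := by
        rw [← Nat.choose_symm (show k ≤ k + d - 1 by omega),
          show k + d - 1 - k = d - 1 by omega]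

lemma card_P_le {d s k : ℕ} (hs : 1 ≤ s) (hd : 1 ≤ d) :
    (P d s k).card ≤ (k + d - 1).choose (d - 1) * s ^ (k * (d - 1)) := by
  classical
  set T := (Finset.Icc (0 : Fin d → ℕ) (fun _ => k)).filter (fun t => ∑ i, t i = k) with hT
  have hmapT : ∀ x ∈ P d s k, x.1 ∈ T := by
    intro x hx
    have hv := (mem_P_iff hs x).mp hx
    rw [hT, Finset.mem_filter, Finset.mem_Icc]
    exact ⟨⟨fun i => Nat.zero_le _, fun i => valid_t_le hv i⟩, hv.1⟩
  rw [Finset.card_eq_sum_card_fiberwise hmapT]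
  have hfiber : ∀ t ∈ T, ((P d s k).filter (fun x => x.1 = t)).card ≤ s ^ (k * (d - 1)) := by
    intro t htT
    rw [hT, Finset.mem_filter, Finset.mem_Icc] at htT
    have hinj : Set.InjOn (fun x : Idx d => x.2) ↑((P d s k).filter (fun x => x.1 = t)) := by
      intro a ha b hb h
      rw [Finset.coe_filter, Set.mem_setOf_eq] at ha hb
      exact Prod.ext (ha.2.trans hb.2.symm) h
    have hmaps : ∀ x ∈ (P d s k).filter (fun x => x.1 = t),
        x.2 ∈ Finset.Icc (0 : Fin d → ℤ) (fun i => (s:ℤ) ^ (k - t i) - 1) := by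
      intro x hx
      rw [Finset.mem_filter] at hx
      have hv := (mem_P_iff hs x).mp hx.1
      rw [Finset.mem_Icc]
      constructor
      · intro i; exact (hv.2 i).1
      · intro i
        have h5 := (hv.2 i).2
        show x.2 i ≤ (s:ℤ) ^ (k - t i) - 1
        rw [← hx.2]
        omega
    calc ((P d s k).filter (fun x => x.1 = t)).card
        ≤ (Finset.Icc (0 : Fin d → ℤ) (fun i => (s:ℤ) ^ (k - t i) - 1)).card :=
          Finset.card_le_card_of_injOn _ hmaps hinj
      _ = s ^ (k * (d - 1)) := by
          rw [Pi.card_Icc]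
          simp only [Pi.zero_apply]
          have : ∀ i : Fin d, (Finset.Icc (0:ℤ) ((s:ℤ) ^ (k - t i) - 1)).card
              = s ^ (k - t i) := by
            intro i
            rw [Int.card_Icc]
            have : (s:ℤ) ^ (k - t i) - 1 + 1 - 0 = ((s ^ (k - t i) : ℕ) : ℤ) := by
              push_cast; ring
            rw [this, Int.toNat_natCast]
          rw [Finset.prod_congr rfl (fun i _ => this i), Finset.prod_pow_eq_pow_sum,
            sum_k_sub k hd t htT.2 (fun i => (htT.1).2 i)]
  calc ∑ t ∈ T, ((P d s k).filter (fun x => x.1 = t)).card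
      ≤ ∑ t ∈ T, s ^ (k * (d - 1)) := Finset.sum_le_sum hfiber
    _ = T.card * s ^ (k * (d - 1)) := by rw [Finset.sum_const, smul_eq_mul]
    _ ≤ (k + d - 1).choose (d - 1) * s ^ (k * (d - 1)) :=
        Nat.mul_le_mul_right _ (card_T hd)

-- Section E: bridge to real blocks
lemma mem_block_iff {x : Idx d} {z : Fin d → ℝ} (hs : 1 ≤ s) :
    z ∈ block d s x.1 x.2 ↔
      ∀ i, ((lo d s x i : ℝ)) ≤ z i ∧ z i < ((hi d s x i : ℝ)) := by
  rw [block, Set.mem_univ_pi]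
  apply forall_congr'
  intro i
  rw [Set.mem_Ico]
  constructor
  · rintro ⟨h1, h2⟩
    constructor
    · rw [lo]; push_cast; exact h1
    · rw [hi]; push_cast; exact h2
  · rintro ⟨h1, h2⟩
    rw [lo] at h1; rw [hi] at h2
    push_cast at h1 h2
    exact ⟨h1, h2⟩

lemma meets_iff_inter (hs : 1 ≤ s) (x y : Idx d) :
    Meets d s x y ↔ (block d s x.1 x.2 ∩ block d s y.1 y.2).Nonempty := by
  constructor
  · intro hm
    refine ⟨fun i => ((max (lo d s x i) (lo d s y i) : ℤ) : ℝ), ?_, ?_⟩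
    · rw [mem_block_iff hs]
      intro i
      constructor
      · exact_mod_cast le_max_left _ _
      · exact_mod_cast lt_of_lt_of_le (hm i) (min_le_left _ _)
    · rw [mem_block_iff hs]
      intro i
      constructor
      · exact_mod_cast le_max_right _ _
      · exact_mod_cast lt_of_lt_of_le (hm i) (min_le_right _ _)
  · rintro ⟨z, hzx, hzy⟩
    rw [mem_block_iff hs] at hzx hzy
    intro i
    have h1 := (hzx i).1; have h2 := (hzx i).2
    have h3 := (hzy i).1; have h4 := (hzy i).2
    have : ((max (lo d s x i) (lo d s y i) : ℤ) : ℝ) < ((min (hi d s x i) (hi d s y i) : ℤ) : ℝ) := by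
      push_cast
      rw [max_lt_iff, lt_min_iff, lt_min_iff]
      exact ⟨⟨lt_of_le_of_lt h1 h2, lt_of_le_of_lt h1 h4⟩,
        ⟨lt_of_le_of_lt h3 h2, lt_of_le_of_lt h3 h4⟩⟩
    exact_mod_cast this

lemma block_inj (hs : 2 ≤ s) {x y : Idx d} (h : block d s x.1 x.2 = block d s y.1 y.2) :
    x = y := by
  have hs1 : 1 ≤ s := by omega
  have hIco : ∀ i, Set.Ico ((lo d s x i : ℝ)) ((hi d s x i : ℝ)) =
      Set.Ico ((lo d s y i : ℝ)) ((hi d s y i : ℝ)) := by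
    intro i
    apply Set.Subset.antisymm
    · intro r hr
      rw [Set.mem_Ico] at hr
      have hz : (fun j => if j = i then r else ((lo d s x j : ℝ))) ∈ block d s x.1 x.2 := by
        rw [mem_block_iff hs1]
        intro j
        by_cases hj : j = i
        · subst hj; simp only [if_pos rfl]; exact hr
        · simp only [if_neg hj]
          exact ⟨le_refl _, by exact_mod_cast lo_lt_hi hs1 x j⟩
      rw [h, mem_block_iff hs1] at hz
      have := hz i
      simpa using this
    · intro r hr
      rw [Set.mem_Ico] at hr
      have hz : (fun j => if j = i then r else ((lo d s y j : ℝ))) ∈ block d s y.1 y.2 := by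
        rw [mem_block_iff hs1]
        intro j
        by_cases hj : j = i
        · subst hj; simp only [if_pos rfl]; exact hr
        · simp only [if_neg hj]
          exact ⟨le_refl _, by exact_mod_cast lo_lt_hi hs1 y j⟩
      rw [← h, mem_block_iff hs1] at hz
      have := hz i
      simpa using this
  have hkey : ∀ i, lo d s x i = lo d s y i ∧ hi d s x i = hi d s y i := by
    intro i
    have hne : ((lo d s x i : ℝ)) < ((hi d s x i : ℝ)) := by
      exact_mod_cast lo_lt_hi hs1 x i
    have := (Set.Ico_eq_Ico_iff (Or.inl hne)).mp (hIco i)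
    constructor
    · exact_mod_cast this.1
    · exact_mod_cast this.2
  have ht : x.1 = y.1 := by
    funext i
    have h1 := (hkey i).1
    have h2 := (hkey i).2
    have hpow : (s:ℤ) ^ (x.1 i) = (s:ℤ) ^ (y.1 i) := by
      have : hi d s x i - lo d s x i = hi d s y i - lo d s y i := by rw [h1, h2]
      simp only [lo, hi] at this
      calc (s:ℤ) ^ (x.1 i) = (s:ℤ) ^ (x.1 i) * (x.2 i + 1) - (s:ℤ) ^ (x.1 i) * (x.2 i) := by ring
        _ = (s:ℤ) ^ (y.1 i) * (y.2 i + 1) - (s:ℤ) ^ (y.1 i) * (y.2 i) := by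
            rw [show (s:ℤ) ^ (x.1 i) * (x.2 i + 1) - (s:ℤ) ^ (x.1 i) * (x.2 i)
              = (s:ℤ) ^ (x.1 i) * (x.2 i + 1) - (s:ℤ) ^ (x.1 i) * (x.2 i) from rfl]
            omega
        _ = (s:ℤ) ^ (y.1 i) := by ring
    have hpow' : s ^ (x.1 i) = s ^ (y.1 i) := by exact_mod_cast hpow
    exact Nat.pow_right_injective hs hpow'
  have hp : x.2 = y.2 := by
    funext i
    have h1 := (hkey i).1
    simp only [lo] at h1
    rw [ht] at h1
    have hpow : (s:ℤ) ^ (y.1 i) ≠ 0 := by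
      apply pow_ne_zero
      exact_mod_cast (show s ≠ 0 by omega)
    exact mul_left_cancel₀ hpow h1
  exact Prod.ext ht hp

lemma blockFamily_eq (hs : 1 ≤ s) :
    blockFamily d s k = ↑((P d s k).image (fun x : Idx d => block d s x.1 x.2)) := by
  ext B
  simp only [blockFamily, Set.mem_setOf_eq, Finset.coe_image, Set.mem_image, Finset.mem_coe]
  constructor
  · rintro ⟨t, p, h1, h2, rfl⟩
    exact ⟨(t, p), (mem_P_iff hs _).mpr ⟨h1, h2⟩, rfl⟩
  · rintro ⟨x, hx, rfl⟩
    have hv := (mem_P_iff hs x).mp hx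
    exact ⟨x.1, x.2, hv.1, hv.2, rfl⟩

end Cont

open Cont in
/-- The container lemma: if `s ≥ |T|³` (with `|T| = C(k+d-1, d-1)`), then there is a
collection `𝓒` of subsets of `𝓑`, each of size at most `3M` (with `M = s^{k(d-1)}`),
with `|𝓒| ≤ e^{(log s)·M·|T|³/s}`, such that every independent set of the intersection
graph of `𝓑` (i.e. every pairwise disjoint subfamily) is contained in a member of `𝓒`. -/
theorem container_lemma (d s k : ℕ) (hd : 2 ≤ d) (hs : 2 ≤ s) (hk : 1 ≤ k)
    (hsT : ((k + d - 1).choose (d - 1)) ^ 3 ≤ s) :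
    ∃ 𝓒 : Finset (Set (Set (Fin d → ℝ))),
      (∀ C ∈ 𝓒, C ⊆ blockFamily d s k ∧ C.ncard ≤ 3 * s ^ (k * (d - 1))) ∧
      (𝓒.card : ℝ) ≤ Real.exp (Real.log s * (s : ℝ) ^ (k * (d - 1)) *
        ((k + d - 1).choose (d - 1) : ℝ) ^ 3 / (s : ℝ)) ∧
      (∀ I ⊆ blockFamily d s k, I.Pairwise Disjoint → ∃ C ∈ 𝓒, I ⊆ C) := by
  classical
  have hd1 : 1 ≤ d := by omega
  have hs1 : 1 ≤ s := by omega
  set B := (k + d - 1).choose (d - 1) with hB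
  set M := s ^ (k * (d - 1)) with hM
  -- basic facts about B
  have hB1 : 1 ≤ B := Nat.choose_pos (by omega)
  have hBd : d ≤ B := by
    have h1 : d.choose (d - 1) ≤ (k + d - 1).choose (d - 1) :=
      Nat.choose_le_choose _ (by omega)
    have h2 : d.choose (d - 1) = d := by
      have := Nat.choose_symm (show d - 1 ≤ d by omega)
      rw [show d - (d - 1) = 1 by omega] at this
      rw [← this, Nat.choose_one_right]
    omega
  have hBk : k + 1 ≤ B := by
    have e1 : B = (k + d - 1).choose k := by
      rw [hB, ← Nat.choose_symm (show k ≤ k + d - 1 by omega),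
        show k + d - 1 - k = d - 1 by omega]
    have h1 : (k+1).choose k ≤ (k + d - 1).choose k := Nat.choose_le_choose _ (by omega)
    have h2 : (k+1).choose k = k + 1 := by
      have := Nat.choose_symm (show k ≤ k + 1 by omega)
      rw [show k + 1 - k = 1 by omega] at this
      rw [← this, Nat.choose_one_right]
    omega
  have hBs : B ≤ s := le_trans (Nat.le_self_pow (by norm_num) B) hsT
  have hBsq : k * (d - 1) + 2 ≤ B ^ 2 := by
    have h1 : (k + 1) * d ≤ B * B := Nat.mul_le_mul hBk hBd
    obtain ⟨d', rfl⟩ : ∃ d', d = d' + 1 := ⟨d - 1, by omega⟩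
    have h2 : (k + 1) * (d' + 1) = k * d' + k + d' + 1 := by ring
    simp only [Nat.add_sub_cancel] at *
    have h3 : B ^ 2 = B * B := sq B
    omega
  have hM1 : 1 ≤ M := Nat.one_le_iff_ne_zero.mpr (pow_ne_zero _ (by omega))
  have hPval : ∀ x ∈ P d s k, Valid d s k x := fun x hx => (mem_P_iff hs1 x).mp hx
  have hNle : (P d s k).card ≤ B * M := card_P_le hs1 hd1
  set q := B * M / (s + 1) with hq
  set 𝒮 := (P d s k).powerset.filter (fun S => S.card ≤ q) with h𝒮
  set bf : Idx d → Set (Fin d → ℝ) := fun x => block d s x.1 x.2 with hbf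
  set 𝓒₀ := 𝒮.image (fun S => (alg d s M S (P d s k)).1 ∪ (alg d s M S (P d s k)).2) with h𝓒₀
  refine ⟨𝓒₀.image (fun C => ((C.image bf : Finset (Set (Fin d → ℝ))) :
    Set (Set (Fin d → ℝ)))), ?_, ?_, ?_⟩
  · -- size conditions
    intro C hC
    obtain ⟨C₀, hC₀, rfl⟩ := Finset.mem_image.mp hC
    rw [h𝓒₀] at hC₀
    obtain ⟨S, hS, rfl⟩ := Finset.mem_image.mp hC₀
    have hfstP := (alg_subset (d := d) (s := s) M S (P d s k)).1
    have hsndP := (alg_subset (d := d) (s := s) M S (P d s k)).2.2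
    have hCP : (alg d s M S (P d s k)).1 ∪ (alg d s M S (P d s k)).2 ⊆ P d s k :=
      Finset.union_subset hfstP hsndP
    constructor
    · intro b hb
      rw [Finset.mem_coe, Finset.mem_image] at hb
      obtain ⟨x, hx, rfl⟩ := hb
      have hv := hPval x (hCP hx)
      exact ⟨x.1, x.2, hv.1, hv.2, rfl⟩
    · rw [Set.ncard_coe_finset]
      have hfst : (alg d s M S (P d s k)).1.card ≤ M := by
        have h1 := alg_fst_card (d := d) (s := s) M S (P d s k)
        have h2 : (s+1) * (alg d s M S (P d s k)).1.card ≤ (s+1) * M := by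
          calc (s+1) * (alg d s M S (P d s k)).1.card ≤ (P d s k).card := by omega
            _ ≤ B * M := hNle
            _ ≤ (s+1) * M := Nat.mul_le_mul_right _ (by omega)
        exact Nat.le_of_mul_le_mul_left h2 (by omega)
      have hsnd : (alg d s M S (P d s k)).2.card ≤ 2 * M :=
        alg_snd_card hs hk hd1 S (P d s k) hPval
      calc (Finset.image bf ((alg d s M S (P d s k)).1 ∪ (alg d s M S (P d s k)).2)).card
          ≤ ((alg d s M S (P d s k)).1 ∪ (alg d s M S (P d s k)).2).card :=
            Finset.card_image_le
        _ ≤ (alg d s M S (P d s k)).1.card + (alg d s M S (P d s k)).2.card :=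
            Finset.card_union_le _ _
        _ ≤ 3 * M := by omega
  · -- cardinality of the container family
    have hcount : (𝓒₀.image (fun C => ((C.image bf : Finset (Set (Fin d → ℝ))) :
        Set (Set (Fin d → ℝ))))).card ≤ (B * M + 1) ^ q := by
      calc (𝓒₀.image _).card ≤ 𝓒₀.card := Finset.card_image_le
        _ ≤ 𝒮.card := Finset.card_image_le
        _ ≤ ((P d s k).card + 1) ^ q := card_small_subsets _ _
        _ ≤ (B * M + 1) ^ q := Nat.pow_le_pow_left (by omega) _
    apply le_trans (by exact_mod_cast Nat.cast_le.mpr hcount)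
    -- now the real estimate
    set L := Real.log s with hL
    have hL0 : 0 ≤ L := Real.log_nonneg (by exact_mod_cast hs1)
    have hL2 : Real.log 2 ≤ L := Real.log_le_log (by norm_num) (by exact_mod_cast hs)
    have hBM1 : (1:ℝ) ≤ (B:ℝ) * (M:ℝ) := by
      have : (1:ℕ) ≤ B * M := Nat.mul_le_mul hB1 hM1
      exact_mod_cast this
    have hx0 : (0:ℝ) < ((B * M + 1 : ℕ) : ℝ) := by positivity
    have hlogB : Real.log B ≤ L / 3 := by
      have h1 : Real.log ((B:ℝ) ^ 3) ≤ L := by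
        apply Real.log_le_log (by positivity)
        exact_mod_cast hsT
      rw [Real.log_pow] at h1
      push_cast at h1
      linarith
    have hlogM : Real.log M = (k * (d-1) : ℕ) * L := by
      rw [hM]
      push_cast
      rw [Real.log_pow]
      push_cast
      ring
    have hlogx : Real.log ((B * M + 1 : ℕ) : ℝ) ≤ ((k * (d-1) : ℕ) + 2) * L := by
      have h1 : ((B * M + 1 : ℕ) : ℝ) ≤ 2 * ((B:ℝ) * (M:ℝ)) := by
        push_cast
        linarith
      have h2 : Real.log ((B * M + 1 : ℕ) : ℝ) ≤ Real.log (2 * ((B:ℝ) * (M:ℝ))) :=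
        Real.log_le_log hx0 h1
      have h3 : Real.log (2 * ((B:ℝ) * (M:ℝ))) = Real.log 2 + Real.log B + Real.log M := by
        rw [Real.log_mul (by norm_num) (by positivity),
          Real.log_mul (by positivity) (by positivity)]
        ring
      rw [h3] at h2
      have h4 : Real.log M = (k * (d-1) : ℕ) * L := hlogM
      calc Real.log ((B * M + 1 : ℕ) : ℝ) ≤ Real.log 2 + Real.log B + Real.log M := h2
        _ ≤ L + L/3 + (k * (d-1) : ℕ) * L := by
            rw [h4]
            linarith
        _ ≤ ((k * (d-1) : ℕ) + 2) * L := by nlinarith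
    have hq1 : (q:ℝ) ≤ (B:ℝ) * (M:ℝ) / (s:ℝ) := by
      have h1 : (q:ℝ) ≤ ((B * M : ℕ) : ℝ) / ((s + 1 : ℕ) : ℝ) := by
        rw [hq]
        exact_mod_cast Nat.cast_div_le
      apply le_trans h1
      push_cast
      apply div_le_div_of_nonneg_left (by positivity) (by positivity)
      linarith
    have hmain : (q:ℝ) * Real.log ((B * M + 1 : ℕ) : ℝ) ≤ L * (M:ℝ) * (B:ℝ)^3 / (s:ℝ) := by
      have hlogx0 : 0 ≤ Real.log ((B * M + 1 : ℕ) : ℝ) := by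
        apply Real.log_nonneg
        push_cast
        linarith
      have h1 : (q:ℝ) * Real.log ((B * M + 1 : ℕ) : ℝ) ≤
          ((B:ℝ) * (M:ℝ) / (s:ℝ)) * (((k * (d-1) : ℕ) + 2) * L) := by
        apply mul_le_mul hq1 hlogx hlogx0 (by positivity)
      apply le_trans h1
      have h2 : ((k * (d-1) : ℕ) + 2 : ℝ) ≤ (B:ℝ)^2 := by
        exact_mod_cast hBsq
      have h3 : ((B:ℝ) * (M:ℝ) / (s:ℝ)) * (((k * (d-1) : ℕ) + 2) * L) ≤
          ((B:ℝ) * (M:ℝ) / (s:ℝ)) * ((B:ℝ)^2 * L) := by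
        apply mul_le_mul_of_nonneg_left _ (by positivity)
        exact mul_le_mul_of_nonneg_right h2 hL0
      apply le_trans h3
      have : ((B:ℝ) * (M:ℝ) / (s:ℝ)) * ((B:ℝ)^2 * L) = L * (M:ℝ) * (B:ℝ)^3 / (s:ℝ) := by
        ring
      rw [this]
    have hexp : (((B * M + 1 : ℕ) : ℝ)) ^ q = Real.exp ((q:ℝ) * Real.log ((B * M + 1 : ℕ) : ℝ)) := by
      rw [Real.exp_nat_mul, Real.exp_log hx0]
    rw [Nat.cast_pow, hexp]
    apply Real.exp_le_exp.mpr
    apply le_trans hmain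
    apply le_of_eq
    rw [hL, hM]
    push_cast
    ring
  · -- covering
    intro I hI hpair
    set J := (P d s k).filter (fun x => bf x ∈ I) with hJ
    have hJP : J ⊆ P d s k := Finset.filter_subset _ _
    have hJind : ∀ x ∈ J, ∀ y ∈ J, x ≠ y → ¬ Meets d s x y := by
      intro x hx y hy hxy hm
      rw [hJ, Finset.mem_filter] at hx hy
      have hbne : bf x ≠ bf y := fun hbe => hxy (block_inj hs hbe)
      have hdisj : Disjoint (bf x) (bf y) := hpair hx.2 hy.2 hbne
      have hne : (block d s x.1 x.2 ∩ block d s y.1 y.2).Nonempty :=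
        (meets_iff_inter hs1 x y).mp hm
      rw [Set.disjoint_iff_inter_eq_empty] at hdisj
      rw [hbf] at hdisj
      simp only at hdisj
      rw [hdisj] at hne
      exact Set.not_nonempty_empty hne
    set S := (alg d s M J (P d s k)).1 with hSdef
    have hSP : S ⊆ P d s k := (alg_subset (d := d) (s := s) M J (P d s k)).1
    have hScard : S.card ≤ q := by
      rw [hq]
      rw [Nat.le_div_iff_mul_le (by omega)]
      have h1 := alg_fst_card (d := d) (s := s) M J (P d s k)
      calc S.card * (s + 1) = (s+1) * S.card := by ring
        _ ≤ (P d s k).card := by rw [hSdef]; omega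
        _ ≤ B * M := hNle
    have hS𝒮 : S ∈ 𝒮 := by
      rw [h𝒮, Finset.mem_filter, Finset.mem_powerset]
      exact ⟨hSP, hScard⟩
    have hdet : alg d s M S (P d s k) = alg d s M J (P d s k) :=
      alg_determ (d := d) (s := s) M J (P d s k)
    refine ⟨↑(((alg d s M S (P d s k)).1 ∪ (alg d s M S (P d s k)).2).image bf),
      Finset.mem_image_of_mem _ (Finset.mem_image_of_mem _ hS𝒮), ?_⟩
    intro b hb
    obtain ⟨t, p, h1, h2, rfl⟩ := hI hb
    have hxP : ((t, p) : Idx d) ∈ P d s k := (mem_P_iff hs1 _).mpr ⟨h1, h2⟩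
    have hxJ : ((t, p) : Idx d) ∈ J := by
      rw [hJ, Finset.mem_filter]
      exact ⟨hxP, hb⟩
    have hcov := alg_covers (d := d) (s := s) M J hJind (P d s k)
    have hxC : ((t, p) : Idx d) ∈ (alg d s M S (P d s k)).1 ∪ (alg d s M S (P d s k)).2 := by
      rw [hdet]
      exact hcov (Finset.mem_inter.mpr ⟨hxJ, hxP⟩)
    rw [Finset.mem_coe]
    exact Finset.mem_image_of_mem bf hxC
end
end

section
/- Let X be a random subset of 𝓑 obtained by including each block independently with probability p ∈ (0,1), and let H be the subgraph of G induced on X. If s ≥ |T|³, p > 2·(log s)·|T|³/s and p·M ≥ 3, then α(H) ≤ 6·p·M holds with probability at least 3/4. -/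
open scoped Classical

noncomputable section

/-- The probability that a `p`-random subset of the finite family `𝓑` satisfies the
event `E`: each member is included independently with probability `p`. -/
def randomSubsetProb {α : Type*} (𝓑 : Finset α) (p : ℝ) (E : Finset α → Prop) : ℝ :=
  ∑ X ∈ 𝓑.powerset, if E X then p ^ X.card * (1 - p) ^ (𝓑.card - X.card) else 0

namespace RIN

variable (d s k : ℕ)

abbrev Par := (Fin d → ℕ) × (Fin d → ℕ)

def Tset : Finset (Fin d → ℕ) := Finset.piAntidiag Finset.univ k

def Pset : Finset (Par d) :=
  ((Tset d k) ×ˢ (Fintype.piFinset fun _ : Fin d => Finset.range (s ^ k))).filter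
    (fun x => ∀ i, x.2 i < s ^ (k - x.1 i))

def φ (x : Par d) : Set (Fin d → ℝ) := block d s x.1 (fun i => (x.2 i : ℤ))

def cellsOf (x : Par d) : Finset (Fin d → ℕ) :=
  Fintype.piFinset fun i => Finset.Ico (x.2 i * s ^ (x.1 i)) ((x.2 i + 1) * s ^ (x.1 i))

def uOf (t t' : Fin d → ℕ) : Fin d → ℕ := fun i => max (t i) (t' i)

def boxIdx (u : Fin d → ℕ) (x : Par d) : Fin d → ℕ := fun i => x.2 i / s ^ (u i - x.1 i)

def boxCells (u c : Fin d → ℕ) : Finset (Fin d → ℕ) :=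
  Fintype.piFinset fun i => Finset.Ico (c i * s ^ (u i)) ((c i + 1) * s ^ (u i))

def allBoxes (t t' : Fin d → ℕ) : Finset (Fin d → ℕ) :=
  Fintype.piFinset fun i => Finset.range (s ^ (k - uOf d t t' i))

def OP : Finset ((Fin d → ℕ) × (Fin d → ℕ)) :=
  ((Tset d k) ×ˢ (Tset d k)).filter fun z => z.1 ≠ z.2

lemma mem_Tset {t : Fin d → ℕ} : t ∈ Tset d k ↔ ∑ i, t i = k := by
  simp [Tset]

lemma mem_Pset (hs : 1 ≤ s) {x : Par d} :
    x ∈ Pset d s k ↔ (∑ i, x.1 i = k) ∧ ∀ i, x.2 i < s ^ (k - x.1 i) := by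
  constructor
  · rintro hx
    simp only [Pset, Finset.mem_filter, Finset.mem_product, mem_Tset] at hx
    exact ⟨hx.1.1, hx.2⟩
  · rintro ⟨h1, h2⟩
    simp only [Pset, Finset.mem_filter, Finset.mem_product, mem_Tset,
      Fintype.mem_piFinset, Finset.mem_range]
    refine ⟨⟨h1, fun i => lt_of_lt_of_le (h2 i) ?_⟩, h2⟩
    exact Nat.pow_le_pow_right hs (Nat.sub_le _ _)

lemma t_le_k {t : Fin d → ℕ} (ht : t ∈ Tset d k) (i : Fin d) : t i ≤ k := by
  rw [mem_Tset] at ht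
  calc t i ≤ ∑ j, t j := Finset.single_le_sum (fun j _ => Nat.zero_le _) (Finset.mem_univ i)
  _ = k := ht

lemma spow_pos (hs : 1 ≤ s) (e : ℕ) : 0 < s ^ e := Nat.pow_pos hs

lemma cell_to_real {x : Par d} {z : Fin d → ℕ} (hz : z ∈ cellsOf d s x) :
    (fun i => (z i : ℝ)) ∈ φ d s x := by
  simp only [cellsOf, Fintype.mem_piFinset, Finset.mem_Ico] at hz
  simp only [φ, block, Set.mem_pi, Set.mem_univ, Set.mem_Ico, forall_true_left]
  intro i
  obtain ⟨h1, h2⟩ := hz i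
  have c1 : ((x.2 i * s ^ x.1 i : ℕ) : ℝ) ≤ (z i : ℝ) := Nat.cast_le.mpr h1
  have c2 : (z i : ℝ) < ((x.2 i + 1) * s ^ x.1 i : ℕ) := Nat.cast_lt.mpr h2
  push_cast at c1 c2
  constructor <;> (push_cast; nlinarith [c1, c2])

lemma real_to_cell {x : Par d} {z : Fin d → ℕ} (hz : (fun i => (z i : ℝ)) ∈ φ d s x) :
    z ∈ cellsOf d s x := by
  simp only [φ, block, Set.mem_pi, Set.mem_univ, Set.mem_Ico, forall_true_left] at hz
  push_cast at hz
  simp only [cellsOf, Fintype.mem_piFinset, Finset.mem_Ico]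
  intro i
  obtain ⟨h1, h2⟩ := hz i
  constructor
  · have : ((x.2 i * s ^ x.1 i : ℕ) : ℝ) ≤ (z i : ℝ) := by push_cast; nlinarith
    exact_mod_cast this
  · have : ((z i : ℕ) : ℝ) < ((x.2 i + 1) * s ^ x.1 i : ℕ) := by push_cast; nlinarith
    exact_mod_cast this

lemma corner_mem_cells (hs : 1 ≤ s) (x : Par d) :
    (fun i => x.2 i * s ^ x.1 i) ∈ cellsOf d s x := by
  simp only [cellsOf, Fintype.mem_piFinset, Finset.mem_Ico]
  intro i
  exact ⟨le_refl _, by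
    have := spow_pos s hs (x.1 i)
    nlinarith⟩

lemma cells_card (hx : x ∈ Pset d s k) : (cellsOf d s x).card = s ^ k := by
  have hx' : ∑ i, x.1 i = k := by
    simp only [Pset, Finset.mem_filter, Finset.mem_product, mem_Tset] at hx
    exact hx.1.1
  simp only [cellsOf, Fintype.card_piFinset, Nat.card_Ico]
  have : ∀ i : Fin d, (x.2 i + 1) * s ^ x.1 i - x.2 i * s ^ x.1 i = s ^ x.1 i := by
    intro i; rw [add_mul, one_mul]; omega
  simp only [this]
  rw [Finset.prod_pow_eq_pow_sum, hx']

lemma cells_subset_univ (hs : 1 ≤ s) {x : Par d} (hx : x ∈ Pset d s k) :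
    cellsOf d s x ⊆ Fintype.piFinset fun _ : Fin d => Finset.range (s ^ k) := by
  rw [mem_Pset d s k hs] at hx
  intro z hz
  simp only [cellsOf, Fintype.mem_piFinset, Finset.mem_Ico] at hz
  simp only [Fintype.mem_piFinset, Finset.mem_range]
  intro i
  have h2 := (hz i).2
  have h3 : (x.2 i + 1) * s ^ x.1 i ≤ s ^ (k - x.1 i) * s ^ x.1 i :=
    Nat.mul_le_mul_right _ (hx.2 i)
  calc z i < (x.2 i + 1) * s ^ x.1 i := h2
  _ ≤ s ^ (k - x.1 i) * s ^ x.1 i := h3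
  _ = s ^ (k - x.1 i + x.1 i) := (pow_add s _ _).symm
  _ ≤ s ^ k := Nat.pow_le_pow_right hs (by
      have : x.1 i ≤ k := by
        calc x.1 i ≤ ∑ j, x.1 j :=
          Finset.single_le_sum (fun j _ => Nat.zero_le _) (Finset.mem_univ i)
        _ = k := hx.1
      omega)

lemma cells_disjoint_same {x y : Par d} (hxy : x.1 = y.1) (hne : x ≠ y) :
    Disjoint (cellsOf d s x) (cellsOf d s y) := by
  have hq : x.2 ≠ y.2 := by
    intro h; exact hne (Prod.ext hxy h)
  obtain ⟨i, hi⟩ := Function.ne_iff.mp hq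
  rw [Finset.disjoint_left]
  intro z hzx hzy
  simp only [cellsOf, Fintype.mem_piFinset, Finset.mem_Ico] at hzx hzy
  obtain ⟨a1, a2⟩ := hzx i
  obtain ⟨b1, b2⟩ := hzy i
  rw [hxy] at a1 a2
  have e1 : z i / s ^ (y.1 i) = x.2 i := Nat.div_eq_of_lt_le a1 a2
  have e2 : z i / s ^ (y.1 i) = y.2 i := Nat.div_eq_of_lt_le b1 b2
  exact hi (e1 ▸ e2)

lemma interval_nested {L q : ℕ} (hL : 0 < L) : (q / L) * L ≤ q ∧ q + 1 ≤ (q / L + 1) * L := by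
  constructor
  · exact Nat.div_mul_le_self q L
  · have h1 : L * (q / L) + q % L = q := Nat.div_add_mod q L
    have h2 : q % L < L := Nat.mod_lt _ hL
    rw [add_mul, one_mul, mul_comm (q / L) L]
    omega

lemma cells_subset_box (hs : 1 ≤ s) {x : Par d} {u : Fin d → ℕ} (hu : ∀ i, x.1 i ≤ u i) :
    cellsOf d s x ⊆ boxCells d s u (boxIdx d s u x) := by
  intro z hz
  simp only [cellsOf, Fintype.mem_piFinset, Finset.mem_Ico] at hz
  simp only [boxCells, boxIdx, Fintype.mem_piFinset, Finset.mem_Ico]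
  intro i
  obtain ⟨h1, h2⟩ := hz i
  have hui := hu i
  have hL : 0 < s ^ (u i - x.1 i) := spow_pos s hs _
  obtain ⟨n1, n2⟩ := interval_nested (q := x.2 i) hL
  have hpow : s ^ (u i - x.1 i) * s ^ (x.1 i) = s ^ (u i) := by
    rw [← pow_add]
    congr 1
    omega
  constructor
  · calc x.2 i / s ^ (u i - x.1 i) * s ^ u i
        = (x.2 i / s ^ (u i - x.1 i) * s ^ (u i - x.1 i)) * s ^ (x.1 i) := by
          rw [mul_assoc, hpow]
    _ ≤ x.2 i * s ^ x.1 i := Nat.mul_le_mul_right _ n1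
    _ ≤ z i := h1
  · calc z i < (x.2 i + 1) * s ^ x.1 i := h2
    _ ≤ ((x.2 i / s ^ (u i - x.1 i) + 1) * s ^ (u i - x.1 i)) * s ^ x.1 i :=
        Nat.mul_le_mul_right _ n2
    _ = (x.2 i / s ^ (u i - x.1 i) + 1) * s ^ u i := by rw [mul_assoc, hpow]

lemma box_disjoint {u c c' : Fin d → ℕ} (hs : 1 ≤ s) (hne : c ≠ c') :
    Disjoint (boxCells d s u c) (boxCells d s u c') := by
  obtain ⟨i, hi⟩ := Function.ne_iff.mp hne
  rw [Finset.disjoint_left]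
  intro z hz hz'
  simp only [boxCells, Fintype.mem_piFinset, Finset.mem_Ico] at hz hz'
  obtain ⟨a1, a2⟩ := hz i
  obtain ⟨b1, b2⟩ := hz' i
  exact hi ((Nat.div_eq_of_lt_le a1 a2).symm.trans (Nat.div_eq_of_lt_le b1 b2))

lemma uOf_comm (t t' : Fin d → ℕ) : uOf d t t' = uOf d t' t := by
  funext i; exact Nat.max_comm _ _

lemma boxIdx_mem_allBoxes (hs : 1 ≤ s) {x : Par d} {t' : Fin d → ℕ}
    (hx : x ∈ Pset d s k) (ht' : t' ∈ Tset d k) :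
    boxIdx d s (uOf d x.1 t') x ∈ allBoxes d s k x.1 t' := by
  rw [mem_Pset d s k hs] at hx
  simp only [allBoxes, boxIdx, Fintype.mem_piFinset, Finset.mem_range]
  intro i
  have h1 : x.1 i ≤ uOf d x.1 t' i := le_max_left _ _
  have h2 : uOf d x.1 t' i ≤ k := by
    have hti : x.1 i ≤ k := by
      calc x.1 i ≤ ∑ j, x.1 j :=
        Finset.single_le_sum (fun j _ => Nat.zero_le _) (Finset.mem_univ i)
      _ = k := hx.1
    have ht'i : t' i ≤ k := t_le_k d k ht' i
    exact max_le hti ht'i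
  have hsplit : s ^ (uOf d x.1 t' i - x.1 i) * s ^ (k - uOf d x.1 t' i) = s ^ (k - x.1 i) := by
    rw [← pow_add]
    congr 1
    omega
  rw [Nat.div_lt_iff_lt_mul (spow_pos s hs _)]
  calc x.2 i < s ^ (k - x.1 i) := hx.2 i
  _ = s ^ (k - uOf d x.1 t' i) * s ^ (uOf d x.1 t' i - x.1 i) := by rw [← hsplit, mul_comm]

/-- If two blocks of (possibly different) types lie in the same box of the common refinement,
they intersect. -/
lemma sameBox_not_disjoint (hs : 1 ≤ s) {x y : Par d}
    (hbox : boxIdx d s (uOf d x.1 y.1) x = boxIdx d s (uOf d x.1 y.1) y) :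
    ¬ Disjoint (φ d s x) (φ d s y) := by
  set u := uOf d x.1 y.1 with hu
  -- common cell
  set z : Fin d → ℕ := fun i => max (x.2 i * s ^ x.1 i) (y.2 i * s ^ y.1 i) with hzdef
  have key : ∀ i, (x.2 i * s ^ x.1 i ≤ z i ∧ z i < (x.2 i + 1) * s ^ x.1 i) ∧
      (y.2 i * s ^ y.1 i ≤ z i ∧ z i < (y.2 i + 1) * s ^ y.1 i) := by
    intro i
    have hb := congrFun hbox i
    simp only [boxIdx] at hb
    rcases le_total (x.1 i) (y.1 i) with hle | hle
    · -- u i = y.1 i, x's interval nested in y's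
      have hui : u i = y.1 i := by simp [hu, uOf, hle]
      have hyx : y.2 i = x.2 i / s ^ (y.1 i - x.1 i) := by
        rw [hui] at hb
        simpa [Nat.sub_self] using hb.symm
      have hL : 0 < s ^ (y.1 i - x.1 i) := spow_pos s hs _
      obtain ⟨n1, n2⟩ := interval_nested (q := x.2 i) hL
      have hpow : s ^ (y.1 i - x.1 i) * s ^ x.1 i = s ^ y.1 i := by
        rw [← pow_add]; congr 1; omega
      have low : y.2 i * s ^ y.1 i ≤ x.2 i * s ^ x.1 i := by
        calc y.2 i * s ^ y.1 i = (x.2 i / s ^ (y.1 i - x.1 i)) * s ^ y.1 i := by rw [hyx]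
        _ = (x.2 i / s ^ (y.1 i - x.1 i) * s ^ (y.1 i - x.1 i)) * s ^ x.1 i := by
            rw [mul_assoc, hpow]
        _ ≤ x.2 i * s ^ x.1 i := Nat.mul_le_mul_right _ n1
      have high : (x.2 i + 1) * s ^ x.1 i ≤ (y.2 i + 1) * s ^ y.1 i := by
        calc (x.2 i + 1) * s ^ x.1 i
            ≤ ((x.2 i / s ^ (y.1 i - x.1 i) + 1) * s ^ (y.1 i - x.1 i)) * s ^ x.1 i :=
              Nat.mul_le_mul_right _ n2
        _ = (x.2 i / s ^ (y.1 i - x.1 i) + 1) * s ^ y.1 i := by rw [mul_assoc, hpow]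
        _ = (y.2 i + 1) * s ^ y.1 i := by rw [hyx]
      have hz : z i = x.2 i * s ^ x.1 i := max_eq_left low
      have hxpos : 0 < s ^ x.1 i := spow_pos s hs _
      refine ⟨⟨le_of_eq hz.symm, by rw [hz]; nlinarith⟩, ⟨by rw [hz]; exact low, ?_⟩⟩
      rw [hz]
      calc x.2 i * s ^ x.1 i < (x.2 i + 1) * s ^ x.1 i := by nlinarith
      _ ≤ (y.2 i + 1) * s ^ y.1 i := high
    · -- symmetric: u i = x.1 i, y's interval nested in x's
      have hui : u i = x.1 i := by simp [hu, uOf, hle]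
      have hyx : x.2 i = y.2 i / s ^ (x.1 i - y.1 i) := by
        rw [hui] at hb
        simpa [Nat.sub_self] using hb
      have hL : 0 < s ^ (x.1 i - y.1 i) := spow_pos s hs _
      obtain ⟨n1, n2⟩ := interval_nested (q := y.2 i) hL
      have hpow : s ^ (x.1 i - y.1 i) * s ^ y.1 i = s ^ x.1 i := by
        rw [← pow_add]; congr 1; omega
      have low : x.2 i * s ^ x.1 i ≤ y.2 i * s ^ y.1 i := by
        calc x.2 i * s ^ x.1 i = (y.2 i / s ^ (x.1 i - y.1 i)) * s ^ x.1 i := by rw [hyx]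
        _ = (y.2 i / s ^ (x.1 i - y.1 i) * s ^ (x.1 i - y.1 i)) * s ^ y.1 i := by
            rw [mul_assoc, hpow]
        _ ≤ y.2 i * s ^ y.1 i := Nat.mul_le_mul_right _ n1
      have high : (y.2 i + 1) * s ^ y.1 i ≤ (x.2 i + 1) * s ^ x.1 i := by
        calc (y.2 i + 1) * s ^ y.1 i
            ≤ ((y.2 i / s ^ (x.1 i - y.1 i) + 1) * s ^ (x.1 i - y.1 i)) * s ^ y.1 i :=
              Nat.mul_le_mul_right _ n2
        _ = (y.2 i / s ^ (x.1 i - y.1 i) + 1) * s ^ x.1 i := by rw [mul_assoc, hpow]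
        _ = (x.2 i + 1) * s ^ x.1 i := by rw [hyx]
      have hz : z i = y.2 i * s ^ y.1 i := max_eq_right low
      have hypos : 0 < s ^ y.1 i := spow_pos s hs _
      refine ⟨⟨by rw [hz]; exact low, ?_⟩, ⟨le_of_eq hz.symm, by rw [hz]; nlinarith⟩⟩
      rw [hz]
      calc y.2 i * s ^ y.1 i < (y.2 i + 1) * s ^ y.1 i := by nlinarith
      _ ≤ (x.2 i + 1) * s ^ x.1 i := high
  have hzx : z ∈ cellsOf d s x := by
    simp only [cellsOf, Fintype.mem_piFinset, Finset.mem_Ico]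
    intro i; exact (key i).1
  have hzy : z ∈ cellsOf d s y := by
    simp only [cellsOf, Fintype.mem_piFinset, Finset.mem_Ico]
    intro i; exact (key i).2
  rw [Set.not_disjoint_iff]
  exact ⟨fun i => (z i : ℝ), cell_to_real d s hzx, cell_to_real d s hzy⟩

lemma phi_disjoint_cells {x y : Par d} (h : Disjoint (φ d s x) (φ d s y)) :
    Disjoint (cellsOf d s x) (cellsOf d s y) := by
  rw [Finset.disjoint_left]
  intro z hzx hzy
  have := Set.disjoint_left.mp h (cell_to_real d s hzx) (cell_to_real d s hzy)
  exact this

lemma phi_eq_cells_eq {x y : Par d} (h : φ d s x = φ d s y) :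
    cellsOf d s x = cellsOf d s y := by
  ext z
  constructor
  · intro hz
    exact real_to_cell d s (h ▸ cell_to_real d s hz)
  · intro hz
    exact real_to_cell d s (h.symm ▸ cell_to_real d s hz)

lemma phi_injOn (hs : 2 ≤ s) : Set.InjOn (φ d s) ↑(Pset d s k) := by
  intro x hx y hy hxy
  have hs1 : 1 ≤ s := le_trans (by norm_num) hs
  have hc := phi_eq_cells_eq d s hxy
  -- endpoint extraction, coordinatewise
  have key : ∀ i, x.2 i * s ^ x.1 i = y.2 i * s ^ y.1 i ∧
      (x.2 i + 1) * s ^ x.1 i = (y.2 i + 1) * s ^ y.1 i := by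
    intro i
    have cx := corner_mem_cells d s hs1 x
    have cy := corner_mem_cells d s hs1 y
    have cx' := hc ▸ cx
    have cy' := hc.symm ▸ cy
    simp only [cellsOf, Fintype.mem_piFinset, Finset.mem_Ico] at cx' cy'
    obtain ⟨a1, a2⟩ := cx' i
    obtain ⟨b1, b2⟩ := cy' i
    -- a1 : y.2 i * s ^ y.1 i ≤ x.2 i * s^x.1 i, b1 : converse
    have e1 : x.2 i * s ^ x.1 i = y.2 i * s ^ y.1 i := le_antisymm b1 a1
    -- top cell
    have hxpos : 0 < s ^ x.1 i := spow_pos s hs1 _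
    have hypos : 0 < s ^ y.1 i := spow_pos s hs1 _
    -- the cell (x.2 i + 1) * s^x.1 i - 1 in coordinate i
    have tx : (fun j => if j = i then (x.2 i + 1) * s ^ x.1 i - 1 else x.2 j * s ^ x.1 j)
        ∈ cellsOf d s x := by
      simp only [cellsOf, Fintype.mem_piFinset, Finset.mem_Ico]
      intro j
      by_cases hji : j = i
      · subst hji
        simp only [eq_self_iff_true, if_true, if_pos rfl]
        constructor
        · have : x.2 j * s ^ x.1 j < (x.2 j + 1) * s ^ x.1 j := by nlinarith [spow_pos s hs1 (x.1 j)]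
          omega
        · omega
      · simp only [if_neg hji]
        exact ⟨le_refl _, by nlinarith [spow_pos s hs1 (x.1 j)]⟩
    have tx' := hc ▸ tx
    simp only [cellsOf, Fintype.mem_piFinset, Finset.mem_Ico] at tx'
    have t2 := (tx' i).2
    simp only [eq_self_iff_true, if_true, if_pos rfl] at t2
    -- t2 : (x.2 i + 1)*s^x.1 i - 1 < (y.2 i + 1) * s^y.1 i
    have ty : (fun j => if j = i then (y.2 i + 1) * s ^ y.1 i - 1 else y.2 j * s ^ y.1 j)
        ∈ cellsOf d s y := by
      simp only [cellsOf, Fintype.mem_piFinset, Finset.mem_Ico]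
      intro j
      by_cases hji : j = i
      · subst hji
        simp only [eq_self_iff_true, if_true, if_pos rfl]
        constructor
        · have : y.2 j * s ^ y.1 j < (y.2 j + 1) * s ^ y.1 j := by nlinarith [spow_pos s hs1 (y.1 j)]
          omega
        · omega
      · simp only [if_neg hji]
        exact ⟨le_refl _, by nlinarith [spow_pos s hs1 (y.1 j)]⟩
    have ty' := hc.symm ▸ ty
    simp only [cellsOf, Fintype.mem_piFinset, Finset.mem_Ico] at ty'
    have t2' := (ty' i).2
    simp only [eq_self_iff_true, if_true, if_pos rfl] at t2'
    have hx1 : 0 < (x.2 i + 1) * s ^ x.1 i := by positivity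
    have hy1 : 0 < (y.2 i + 1) * s ^ y.1 i := by positivity
    exact ⟨e1, by omega⟩
  have ht : x.1 = y.1 := by
    funext i
    obtain ⟨e1, e2⟩ := key i
    have : s ^ x.1 i = s ^ y.1 i := by
      have := e2
      nlinarith [e1, e2]
    exact Nat.pow_right_injective hs this
  have hq : x.2 = y.2 := by
    funext i
    obtain ⟨e1, _⟩ := key i
    rw [ht] at e1
    exact Nat.eq_of_mul_eq_mul_right (spow_pos s hs1 _) e1
  exact Prod.ext ht hq

lemma mem_OP {z : (Fin d → ℕ) × (Fin d → ℕ)} :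
    z ∈ OP d k ↔ z.1 ∈ Tset d k ∧ z.2 ∈ Tset d k ∧ z.1 ≠ z.2 := by
  simp only [OP, Finset.mem_filter, Finset.mem_product]
  tauto

lemma sum_uOf_ge {t t' : Fin d → ℕ} (ht : t ∈ Tset d k) (ht' : t' ∈ Tset d k)
    (hne : t ≠ t') : k + 1 ≤ ∑ i, uOf d t t' i := by
  rw [mem_Tset] at ht ht'
  have hcase : (∃ i, t i < t' i) ∨ (∃ i, t' i < t i) := by
    by_contra hc
    push_neg at hc
    obtain ⟨h1, h2⟩ := hc
    exact hne (funext fun i => le_antisymm (h2 i) (h1 i))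
  rcases hcase with ⟨i0, hi0⟩ | ⟨i0, hi0⟩
  · have : ∑ i, t i < ∑ i, uOf d t t' i := by
      apply Finset.sum_lt_sum (fun i _ => le_max_left _ _)
      exact ⟨i0, Finset.mem_univ i0, lt_of_lt_of_le hi0 (le_max_right _ _)⟩
    omega
  · have : ∑ i, t' i < ∑ i, uOf d t t' i := by
      apply Finset.sum_lt_sum (fun i _ => le_max_right _ _)
      exact ⟨i0, Finset.mem_univ i0, lt_of_lt_of_le hi0 (le_max_left _ _)⟩
    omega

lemma card_allBoxes_mul_s_le (hs : 1 ≤ s) {t t' : Fin d → ℕ} (ht : t ∈ Tset d k)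
    (ht' : t' ∈ Tset d k) (hne : t ≠ t') :
    (allBoxes d s k t t').card * s ≤ s ^ (k * (d - 1)) := by
  have hcard : (allBoxes d s k t t').card = s ^ (∑ i, (k - uOf d t t' i)) := by
    simp only [allBoxes, Fintype.card_piFinset, Finset.card_range]
    rw [Finset.prod_pow_eq_pow_sum]
  have hu_le : ∀ i, uOf d t t' i ≤ k := fun i => max_le (t_le_k d k ht i) (t_le_k d k ht' i)
  have hsum : (∑ i, (k - uOf d t t' i)) + (∑ i, uOf d t t' i) = d * k := by
    rw [← Finset.sum_add_distrib]
    have : ∀ i : Fin d, (k - uOf d t t' i) + uOf d t t' i = k := fun i => by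
      have := hu_le i; omega
    simp only [this, Finset.sum_const, Finset.card_univ, Fintype.card_fin, smul_eq_mul]
  have hge := sum_uOf_ge d k ht ht' hne
  have hexp : (∑ i, (k - uOf d t t' i)) + 1 ≤ k * (d - 1) := by
    have hkd : k * (d - 1) = d * k - k := by
      cases d with
      | zero => simp
      | succ e => simp [Nat.succ_sub_one, Nat.succ_mul, Nat.mul_comm]
    omega
  rw [hcard, ← pow_succ]
  exact Nat.pow_le_pow_right hs hexp

abbrev ProfT := ((t : Fin d → ℕ) → t ∈ Tset d k → ℕ) ×
  ((z : (Fin d → ℕ) × (Fin d → ℕ)) → z ∈ OP d k → Finset (Fin d → ℕ))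

def Prof (n : ℕ) : Finset (ProfT d k) :=
  ((Tset d k).pi fun _ => Finset.range (n + 1)) ×ˢ
    ((OP d k).pi fun z => (allBoxes d s k z.1 z.2).powerset)

def Gget (π : ProfT d k) (z : (Fin d → ℕ) × (Fin d → ℕ)) : Finset (Fin d → ℕ) :=
  if h : z ∈ OP d k then π.2 z h else ∅

def νget (π : ProfT d k) (t : Fin d → ℕ) : ℕ :=
  if h : t ∈ Tset d k then π.1 t h else 0

def Aset (π : ProfT d k) (t : Fin d → ℕ) : Finset (Par d) :=
  (Pset d s k).filter fun x => x.1 = t ∧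
    ∀ t' ∈ Tset d k, t' ≠ t → boxIdx d s (uOf d t t') x ∈ Gget d k π (t, t')

def Ψ (J : Finset (Par d)) : ProfT d k :=
  (fun t _ => (J.filter fun x => x.1 = t).card,
   fun z _ => (J.filter fun x => x.1 = z.1).image (boxIdx d s (uOf d z.1 z.2)))

def BadParam (n : ℕ) : Finset (Finset (Par d)) :=
  ((Pset d s k).powersetCard n).filter fun J =>
    ∀ x ∈ J, ∀ y ∈ J, x ≠ y → Disjoint (φ d s x) (φ d s y)

def Prof' (n : ℕ) : Finset (ProfT d k) :=
  (Prof d s k n).filter fun π => (∑ t ∈ Tset d k, νget d k π t) = n ∧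
    ∀ z ∈ OP d k, Disjoint (Gget d k π z) (Gget d k π (z.2, z.1))

lemma mem_BadParam {n : ℕ} {J : Finset (Par d)} :
    J ∈ BadParam d s k n ↔ J ⊆ Pset d s k ∧ J.card = n ∧
      ∀ x ∈ J, ∀ y ∈ J, x ≠ y → Disjoint (φ d s x) (φ d s y) := by
  simp only [BadParam, Finset.mem_filter, Finset.mem_powersetCard]
  tauto

lemma fst_mem_Tset (hs : 1 ≤ s) {x : Par d} (hx : x ∈ Pset d s k) : x.1 ∈ Tset d k := by
  rw [mem_Tset]
  exact ((mem_Pset d s k hs).mp hx).1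

lemma Ψ_mem (hs : 1 ≤ s) {n : ℕ} {J : Finset (Par d)} (hJ : J ∈ BadParam d s k n) :
    Ψ d s k J ∈ Prof' d s k n := by
  obtain ⟨hJP, hJcard, hJdisj⟩ := (mem_BadParam d s k).mp hJ
  have hfst : ∀ x ∈ J, x.1 ∈ Tset d k := fun x hx => fst_mem_Tset d s k hs (hJP hx)
  rw [Prof', Finset.mem_filter]
  refine ⟨?_, ?_, ?_⟩
  case refine_2 =>
    -- sum of sizes is n
      rw [show (∑ t ∈ Tset d k, νget d k (Ψ d s k J) t) =
          ∑ t ∈ Tset d k, (J.filter fun x => x.1 = t).card from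
        Finset.sum_congr rfl fun t ht => by simp [νget, Ψ, ht]]
      rw [← Finset.card_eq_sum_card_fiberwise hfst, hJcard]
  case refine_3 =>
    -- cross disjointness of occupied boxes
      intro z hz
      obtain ⟨hz1, hz2, hzne⟩ := (mem_OP d k).mp hz
      have hz' : (z.2, z.1) ∈ OP d k := (mem_OP d k).mpr ⟨hz2, hz1, Ne.symm hzne⟩
      simp only [Gget, dif_pos hz, dif_pos hz', Ψ]
      rw [Finset.disjoint_left]
      rintro c hc hc'
      simp only [Finset.mem_image, Finset.mem_filter] at hc hc'
      obtain ⟨x, ⟨hxJ, hx1⟩, hxc⟩ := hc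
      obtain ⟨y, ⟨hyJ, hy1⟩, hyc⟩ := hc'
      have hxyne : x ≠ y := by
        intro h
        rw [h] at hx1
        exact hzne (hx1 ▸ hy1 ▸ rfl)
      have hdisj := hJdisj x hxJ y hyJ hxyne
      apply sameBox_not_disjoint d s hs (x := x) (y := y) _ hdisj
      rw [hx1, hy1]
      rw [hxc]
      rw [← hyc]
      rw [uOf_comm d z.2 z.1]
  case refine_1 =>
    -- membership in Prof
    simp only [Prof, Finset.mem_product, Finset.mem_pi]
    constructor
    · intro t ht
      simp only [Ψ, Finset.mem_range]
      have : (J.filter fun x => x.1 = t).card ≤ J.card := Finset.card_filter_le _ _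
      omega
    · intro z hz
      obtain ⟨hz1, hz2, hzne⟩ := (mem_OP d k).mp hz
      simp only [Ψ, Finset.mem_powerset]
      intro c hc
      simp only [Finset.mem_image, Finset.mem_filter] at hc
      obtain ⟨x, ⟨hxJ, hx1⟩, hxc⟩ := hc
      rw [← hxc, ← hx1]
      exact boxIdx_mem_allBoxes d s k hs (hJP hxJ) hz2

lemma filter_subset_Aset (hs : 1 ≤ s) {n : ℕ} {J : Finset (Par d)}
    (hJ : J ∈ BadParam d s k n) (t : Fin d → ℕ) (ht : t ∈ Tset d k) :
    (J.filter fun x => x.1 = t) ⊆ Aset d s k (Ψ d s k J) t := by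
  obtain ⟨hJP, hJcard, hJdisj⟩ := (mem_BadParam d s k).mp hJ
  intro x hx
  obtain ⟨hxJ, hx1⟩ := Finset.mem_filter.mp hx
  rw [Aset, Finset.mem_filter]
  refine ⟨hJP hxJ, hx1, ?_⟩
  intro t' ht' hne
  have hop : (t, t') ∈ OP d k := (mem_OP d k).mpr ⟨ht, ht', Ne.symm hne⟩
  simp only [Gget, dif_pos hop, Ψ]
  rw [Finset.mem_image]
  exact ⟨x, Finset.mem_filter.mpr ⟨hxJ, hx1⟩, rfl⟩

lemma fiber_card_le (hs : 1 ≤ s) {n : ℕ} (π : ProfT d k) :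
    ((BadParam d s k n).filter fun J => Ψ d s k J = π).card ≤
      ∏ t ∈ Tset d k, (Aset d s k π t).card.choose (νget d k π t) := by
  calc ((BadParam d s k n).filter fun J => Ψ d s k J = π).card
      ≤ ((Tset d k).pi fun t => (Aset d s k π t).powersetCard (νget d k π t)).card := by
        apply Finset.card_le_card_of_injOn
          (fun J => fun t _ => J.filter fun x => x.1 = t)
        · intro J hJ
          obtain ⟨hJB, hΨ⟩ := Finset.mem_filter.mp hJ
          rw [Finset.mem_coe, Finset.mem_pi]
          intro t ht
          rw [Finset.mem_powersetCard]
          constructor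
          · rw [← hΨ]
            exact filter_subset_Aset d s k hs hJB t ht
          · rw [← hΨ]
            simp only [νget, dif_pos ht, Ψ]
        · intro J hJ J' hJ' heq
          obtain ⟨hJB, _⟩ := Finset.mem_filter.mp (by exact hJ)
          obtain ⟨hJB', _⟩ := Finset.mem_filter.mp (by exact hJ')
          obtain ⟨hJP, _, _⟩ := (mem_BadParam d s k).mp hJB
          obtain ⟨hJP', _, _⟩ := (mem_BadParam d s k).mp hJB'
          ext x
          constructor
          · intro hx
            have hxt : x.1 ∈ Tset d k := fst_mem_Tset d s k hs (hJP hx)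
            have hff : (J.filter fun y => y.1 = x.1) = (J'.filter fun y => y.1 = x.1) :=
              congrFun (congrFun heq x.1) hxt
            have hmem : x ∈ J.filter fun y => y.1 = x.1 := Finset.mem_filter.mpr ⟨hx, rfl⟩
            rw [hff] at hmem
            exact (Finset.mem_filter.mp hmem).1
          · intro hx
            have hxt : x.1 ∈ Tset d k := fst_mem_Tset d s k hs (hJP' hx)
            have hff : (J.filter fun y => y.1 = x.1) = (J'.filter fun y => y.1 = x.1) :=
              congrFun (congrFun heq x.1) hxt
            have hmem : x ∈ J'.filter fun y => y.1 = x.1 := Finset.mem_filter.mpr ⟨hx, rfl⟩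
            rw [← hff] at hmem
            exact (Finset.mem_filter.mp hmem).1
  _ = ∏ t ∈ Tset d k, (Aset d s k π t).card.choose (νget d k π t) := by
        rw [Finset.card_pi]
        exact Finset.prod_congr rfl fun t _ => Finset.card_powersetCard _ _

lemma Aset_fst {π : ProfT d k} {t : Fin d → ℕ} {x : Par d} (hx : x ∈ Aset d s k π t) :
    x.1 = t ∧ x ∈ Pset d s k :=
  ⟨((Finset.mem_filter.mp hx).2).1, (Finset.mem_filter.mp hx).1⟩

lemma sum_Aset_le (hs : 1 ≤ s) (hd : 1 ≤ d) {n : ℕ} {π : ProfT d k}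
    (hπ : π ∈ Prof' d s k n) :
    ∑ t ∈ Tset d k, (Aset d s k π t).card ≤ s ^ (k * (d - 1)) := by
  obtain ⟨hProf, hsum, hdisj⟩ := Finset.mem_filter.mp hπ
  -- the union of all Aset's
  have hpair : ∀ t ∈ Tset d k, ∀ t' ∈ Tset d k, t ≠ t' →
      Disjoint (Aset d s k π t) (Aset d s k π t') := by
    intro t _ t' _ hne
    rw [Finset.disjoint_left]
    intro x hx hx'
    exact hne ((Aset_fst d s k hx).1 ▸ (Aset_fst d s k hx').1 ▸ rfl)
  set 𝒜 := (Tset d k).biUnion (fun t => Aset d s k π t) with h𝒜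
  have hcard𝒜 : 𝒜.card = ∑ t ∈ Tset d k, (Aset d s k π t).card :=
    Finset.card_biUnion hpair
  -- cells are pairwise disjoint on 𝒜
  have hcells : ∀ x ∈ 𝒜, ∀ y ∈ 𝒜, x ≠ y → Disjoint (cellsOf d s x) (cellsOf d s y) := by
    intro x hx y hy hne
    simp only [h𝒜, Finset.mem_biUnion] at hx hy
    obtain ⟨t, ht, hxt⟩ := hx
    obtain ⟨t', ht', hyt⟩ := hy
    obtain ⟨hx1, hxP⟩ := Aset_fst d s k hxt
    obtain ⟨hy1, hyP⟩ := Aset_fst d s k hyt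
    by_cases htt : t = t'
    · exact cells_disjoint_same d s (hx1.trans (htt ▸ hy1.symm)) hne
    · -- different types: they lie in disjoint boxes
      have hop : (t, t') ∈ OP d k := (mem_OP d k).mpr ⟨ht, ht', htt⟩
      have hcx : boxIdx d s (uOf d t t') x ∈ Gget d k π (t, t') := by
        have := ((Finset.mem_filter.mp hxt).2).2 t' ht' (Ne.symm htt)
        exact this
      have hcy : boxIdx d s (uOf d t' t) y ∈ Gget d k π (t', t) := by
        have := ((Finset.mem_filter.mp hyt).2).2 t ht htt
        exact this
      have hGdisj := hdisj (t, t') hop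
      have hcne : boxIdx d s (uOf d t t') x ≠ boxIdx d s (uOf d t' t) y := by
        intro h
        exact Finset.disjoint_left.mp hGdisj hcx (h ▸ hcy)
      have h1 : cellsOf d s x ⊆ boxCells d s (uOf d t t') (boxIdx d s (uOf d t t') x) := by
        apply cells_subset_box d s hs
        intro i
        rw [hx1]
        exact le_max_left _ _
      have h2 : cellsOf d s y ⊆ boxCells d s (uOf d t t') (boxIdx d s (uOf d t' t) y) := by
        rw [uOf_comm d t t']
        apply cells_subset_box d s hs
        intro i
        rw [hy1]
        exact le_max_left _ _
      exact Finset.disjoint_of_subset_left h1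
        (Finset.disjoint_of_subset_right h2 (box_disjoint d s hs hcne))
  -- count cells
  have hbu : (𝒜.biUnion fun x => cellsOf d s x).card = 𝒜.card * s ^ k := by
    rw [Finset.card_biUnion hcells]
    have hcc : ∀ x ∈ 𝒜, (cellsOf d s x).card = s ^ k := by
      intro x hx
      simp only [h𝒜, Finset.mem_biUnion] at hx
      obtain ⟨t, _, hxt⟩ := hx
      exact cells_card d s k (Aset_fst d s k hxt).2
    rw [Finset.sum_congr rfl hcc, Finset.sum_const, smul_eq_mul]
  have hsub : (𝒜.biUnion fun x => cellsOf d s x) ⊆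
      Fintype.piFinset fun _ : Fin d => Finset.range (s ^ k) := by
    intro z hz
    rw [Finset.mem_biUnion] at hz
    obtain ⟨x, hx, hzx⟩ := hz
    simp only [h𝒜, Finset.mem_biUnion] at hx
    obtain ⟨t, _, hxt⟩ := hx
    exact cells_subset_univ d s k hs (Aset_fst d s k hxt).2 hzx
  have hcount : 𝒜.card * s ^ k ≤ (s ^ k) ^ d := by
    rw [← hbu]
    calc (𝒜.biUnion fun x => cellsOf d s x).card
        ≤ (Fintype.piFinset fun _ : Fin d => Finset.range (s ^ k)).card :=
          Finset.card_le_card hsub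
    _ = (s ^ k) ^ d := by
          simp [Fintype.card_piFinset]
  have hpow : (s ^ k) ^ d = s ^ (k * (d - 1)) * s ^ k := by
    rw [← pow_mul, ← pow_add]
    congr 1
    cases d with
    | zero => omega
    | succ e => simp [Nat.succ_sub_one, Nat.mul_succ]
  rw [hpow] at hcount
  rw [← hcard𝒜]
  exact Nat.le_of_mul_le_mul_right hcount (spow_pos s hs k)

/-! ### Analytic estimates -/

lemma pow_le_exp_mul_factorial {x : ℝ} (hx : 0 ≤ x) (n : ℕ) :
    x ^ n ≤ Real.exp x * n.factorial := by
  have h := Real.sum_le_exp_of_nonneg hx (n + 1)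
  have h2 : x ^ n / n.factorial ≤ Real.exp x :=
    le_trans (Finset.single_le_sum (f := fun i => x ^ i / i.factorial)
      (fun i _ => by positivity) (Finset.self_mem_range_succ n)) h
  rw [div_le_iff₀ (by positivity)] at h2
  linarith

lemma choose_le_real (b j : ℕ) : (b.choose j : ℝ) ≤ (b : ℝ) ^ j / (j.factorial : ℝ) := by
  rw [le_div_iff₀ (by positivity)]
  have h : b.choose j * j.factorial ≤ b ^ j := by
    rw [mul_comm, ← Nat.descFactorial_eq_factorial_mul_choose]
    exact Nat.descFactorial_le_pow _ _
  calc (b.choose j : ℝ) * (j.factorial : ℝ) = ((b.choose j * j.factorial : ℕ) : ℝ) := by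
        push_cast; ring
  _ ≤ ((b ^ j : ℕ) : ℝ) := Nat.cast_le.mpr h
  _ = (b : ℝ) ^ j := by push_cast; ring

lemma pow_div_factorial_mul_le (X Y : ℝ) (hX : 0 ≤ X) (hY : 0 ≤ Y) (a c : ℕ) :
    X ^ a / a.factorial * (Y ^ c / c.factorial) ≤
      (X + Y) ^ (a + c) / (a + c).factorial := by
  rw [div_mul_div_comm, div_le_div_iff₀ (by positivity) (by positivity)]
  have hterm : ((a + c).choose a : ℝ) * (X ^ a * Y ^ c) ≤ (X + Y) ^ (a + c) := by
    rw [add_pow]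
    have hmem : a ∈ Finset.range (a + c + 1) := by
      rw [Finset.mem_range]; omega
    have := Finset.single_le_sum
      (f := fun m => X ^ m * Y ^ (a + c - m) * ((a + c).choose m : ℝ))
      (fun i _ => by positivity) hmem
    calc ((a + c).choose a : ℝ) * (X ^ a * Y ^ c)
        = X ^ a * Y ^ (a + c - a) * ((a + c).choose a : ℝ) := by
          rw [Nat.add_sub_cancel_left]; ring
    _ ≤ _ := this
  have hfact : ((a + c).factorial : ℝ) = ((a + c).choose a : ℝ) * (a.factorial : ℝ) * (c.factorial : ℝ) := by
    rw [← Nat.add_choose_mul_factorial_mul_factorial a c]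
    push_cast
    rw [Nat.choose_symm_add]
  calc X ^ a * Y ^ c * ((a + c).factorial : ℝ)
      = (((a + c).choose a : ℝ) * (X ^ a * Y ^ c)) * (a.factorial * c.factorial) := by
        rw [hfact]; ring
  _ ≤ (X + Y) ^ (a + c) * (a.factorial * c.factorial) := by
        apply mul_le_mul_of_nonneg_right hterm (by positivity)
  _ = (X + Y) ^ (a + c) * ((a.factorial : ℝ) * c.factorial) := by ring

lemma prod_pow_div_factorial_le {α : Type*} (S : Finset α) (b ν : α → ℕ) :
    ∏ t ∈ S, ((b t : ℝ) ^ ν t / ((ν t).factorial : ℝ)) ≤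
      ((∑ t ∈ S, b t : ℕ) : ℝ) ^ (∑ t ∈ S, ν t) / (((∑ t ∈ S, ν t).factorial : ℝ)) := by
  induction S using Finset.induction_on with
  | empty => simp
  | @insert a S ha ih =>
    rw [Finset.prod_insert ha, Finset.sum_insert ha, Finset.sum_insert ha]
    calc (b a : ℝ) ^ ν a / ((ν a).factorial : ℝ) *
          ∏ t ∈ S, ((b t : ℝ) ^ ν t / ((ν t).factorial : ℝ))
        ≤ (b a : ℝ) ^ ν a / ((ν a).factorial : ℝ) *
          (((∑ t ∈ S, b t : ℕ) : ℝ) ^ (∑ t ∈ S, ν t) / (((∑ t ∈ S, ν t).factorial : ℝ))) := by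
          apply mul_le_mul_of_nonneg_left ih (by positivity)
    _ ≤ ((b a : ℝ) + ((∑ t ∈ S, b t : ℕ) : ℝ)) ^ (ν a + ∑ t ∈ S, ν t) /
          (((ν a + ∑ t ∈ S, ν t).factorial : ℝ)) :=
        pow_div_factorial_mul_le _ _ (by positivity) (by positivity) _ _
    _ = ((b a + ∑ t ∈ S, b t : ℕ) : ℝ) ^ (ν a + ∑ t ∈ S, ν t) /
          (((ν a + ∑ t ∈ S, ν t).factorial : ℝ)) := by push_cast; ring_nf

/-! ### Probability estimates -/

section Prob

variable {α : Type*}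

lemma weight_sum_one (F : Finset α) (p : ℝ) :
    ∑ X ∈ F.powerset, p ^ X.card * (1 - p) ^ (F.card - X.card) = 1 := by
  classical
  calc ∑ X ∈ F.powerset, p ^ X.card * (1 - p) ^ (F.card - X.card)
      = ∑ X ∈ F.powerset, (∏ _i ∈ X, p) * ∏ _i ∈ F \ X, (1 - p) := by
        apply Finset.sum_congr rfl
        intro X hX
        rw [Finset.prod_const, Finset.prod_const,
          Finset.card_sdiff_of_subset (Finset.mem_powerset.mp hX)]
  _ = ∏ _i ∈ F, (p + (1 - p)) := (Finset.prod_add _ _ F).symm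
  _ = 1 := by simp

lemma sum_weight_superset (F I : Finset α) (hIF : I ⊆ F) (p : ℝ) :
    ∑ X ∈ F.powerset.filter (fun X => I ⊆ X), p ^ X.card * (1 - p) ^ (F.card - X.card)
      = p ^ I.card := by
  classical
  have key : ∑ Y ∈ (F \ I).powerset,
      p ^ (Y.card + I.card) * (1 - p) ^ ((F \ I).card - Y.card) = p ^ I.card := by
    calc ∑ Y ∈ (F \ I).powerset, p ^ (Y.card + I.card) * (1 - p) ^ ((F \ I).card - Y.card)
        = p ^ I.card * ∑ Y ∈ (F \ I).powerset,
            p ^ Y.card * (1 - p) ^ ((F \ I).card - Y.card) := by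
          rw [Finset.mul_sum]
          apply Finset.sum_congr rfl
          intro Y _
          rw [pow_add]; ring
    _ = p ^ I.card := by rw [weight_sum_one, mul_one]
  rw [← key]
  apply Finset.sum_nbij' (i := fun X => X \ I) (j := fun Y => Y ∪ I)
  · intro X hX
    simp only [Finset.mem_filter, Finset.mem_powerset] at hX
    rw [Finset.mem_powerset]
    exact Finset.sdiff_subset_sdiff hX.1 Finset.Subset.rfl
  · intro Y hY
    rw [Finset.mem_powerset] at hY
    simp only [Finset.mem_filter, Finset.mem_powerset]
    constructor
    · exact Finset.union_subset (hY.trans (Finset.sdiff_subset)) hIF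
    · exact Finset.subset_union_right
  · intro X hX
    simp only [Finset.mem_filter, Finset.mem_powerset] at hX
    exact Finset.sdiff_union_of_subset hX.2
  · intro Y hY
    rw [Finset.mem_powerset] at hY
    apply Finset.union_sdiff_cancel_right
    exact Finset.disjoint_of_subset_left hY Finset.sdiff_disjoint
  · intro X hX
    simp only [Finset.mem_filter, Finset.mem_powerset] at hX
    have h1 : (X \ I).card = X.card - I.card := Finset.card_sdiff_of_subset hX.2
    have h2 : I.card ≤ X.card := Finset.card_le_card hX.2
    have h3 : X.card ≤ F.card := Finset.card_le_card hX.1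
    have h4 : (F \ I).card = F.card - I.card := Finset.card_sdiff_of_subset hIF
    have e1 : (X \ I).card + I.card = X.card := by omega
    have e2 : (F \ I).card - (X \ I).card = F.card - X.card := by omega
    rw [e1, e2]

lemma prob_ge (F : Finset α) (p : ℝ) (hp0 : 0 ≤ p) (hp1 : p ≤ 1) (E : Finset α → Prop)
    (Bad : Finset (Finset α)) (hBad : ∀ I ∈ Bad, I ⊆ F)
    (hE : ∀ X ∈ F.powerset, ¬ E X → ∃ I ∈ Bad, I ⊆ X) :
    1 - (∑ I ∈ Bad, p ^ I.card) ≤ randomSubsetProb F p E := by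
  have hwnn : ∀ X : Finset α, 0 ≤ p ^ X.card * (1 - p) ^ (F.card - X.card) := by
    intro X
    have h1 : (0:ℝ) ≤ 1 - p := by linarith
    positivity
  have htot : (∑ X ∈ F.powerset,
        (if E X then p ^ X.card * (1 - p) ^ (F.card - X.card) else 0)) +
      (∑ X ∈ F.powerset,
        (if ¬ E X then p ^ X.card * (1 - p) ^ (F.card - X.card) else 0)) = 1 := by
    rw [← Finset.sum_add_distrib]
    calc ∑ X ∈ F.powerset,
          ((if E X then p ^ X.card * (1 - p) ^ (F.card - X.card) else 0) +
            (if ¬ E X then p ^ X.card * (1 - p) ^ (F.card - X.card) else 0))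
        = ∑ X ∈ F.powerset, p ^ X.card * (1 - p) ^ (F.card - X.card) :=
          Finset.sum_congr rfl (fun X _ => by by_cases hEX : E X <;> simp [hEX])
    _ = 1 := weight_sum_one F p
  have hle : ∑ X ∈ F.powerset,
      (if ¬ E X then p ^ X.card * (1 - p) ^ (F.card - X.card) else 0)
      ≤ ∑ I ∈ Bad, p ^ I.card := by
    calc ∑ X ∈ F.powerset, (if ¬ E X then p ^ X.card * (1 - p) ^ (F.card - X.card) else 0)
        ≤ ∑ X ∈ F.powerset, ∑ I ∈ Bad.filter (fun I => I ⊆ X),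
            p ^ X.card * (1 - p) ^ (F.card - X.card) := by
          apply Finset.sum_le_sum
          intro X hX
          by_cases hEX : E X
          · rw [if_neg (by simpa using hEX)]
            exact Finset.sum_nonneg fun I _ => hwnn X
          · rw [if_pos hEX]
            obtain ⟨I, hI, hIX⟩ := hE X hX hEX
            exact Finset.single_le_sum (fun J _ => hwnn X)
              (Finset.mem_filter.mpr ⟨hI, hIX⟩)
    _ = ∑ I ∈ Bad, ∑ X ∈ F.powerset.filter (fun X => I ⊆ X),
            p ^ X.card * (1 - p) ^ (F.card - X.card) := by
          apply Finset.sum_comm'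
          intro X I
          simp only [Finset.mem_filter]
          tauto
    _ = ∑ I ∈ Bad, p ^ I.card := by
          apply Finset.sum_congr rfl
          intro I hI
          exact sum_weight_superset F I (hBad I hI) p
  rw [randomSubsetProb]
  linarith

end Prob

/-! ### Cardinality of the profile space -/

lemma card_Tset (hd : 1 ≤ d) (hk : 1 ≤ k) :
    (Tset d k).card = (k + d - 1).choose (d - 1) := by
  have h1 : (Tset d k).card = (d + k - 1).choose k := by
    rw [Tset, ← Finset.map_sym_eq_piAntidiag, Finset.card_map, Finset.sym_univ,
      ← Fintype.card, Sym.card_sym_eq_choose]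
    simp
  rw [h1]
  have h2 : d + k - 1 = k + d - 1 := by omega
  rw [h2]
  have h3 : (k + d - 1) - k = d - 1 := by omega
  rw [← h3]
  exact (Nat.choose_symm (by omega : k ≤ k + d - 1)).symm

lemma A_ge_two (hd : 2 ≤ d) (hk : 1 ≤ k) : 2 ≤ (k + d - 1).choose (d - 1) := by
  have h1 : d.choose (d - 1) ≤ (k + d - 1).choose (d - 1) :=
    Nat.choose_le_choose _ (by omega)
  have h2 : d.choose (d - 1) = d := by
    have h3 : d - (d - 1) = 1 := by omega
    rw [← Nat.choose_symm (by omega : d - 1 ≤ d), h3, Nat.choose_one_right]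
  omega

lemma card_allBoxes_le (hs : 1 ≤ s) (hk : 1 ≤ k) (hd : 2 ≤ d) {t t' : Fin d → ℕ}
    (ht : t ∈ Tset d k) (ht' : t' ∈ Tset d k) (hne : t ≠ t') :
    (allBoxes d s k t t').card ≤ s ^ (k * (d - 1) - 1) := by
  have h := card_allBoxes_mul_s_le d s k hs ht ht' hne
  have hexp : 1 ≤ k * (d - 1) := Nat.one_le_iff_ne_zero.mpr (by
    have : 1 * 1 ≤ k * (d - 1) := Nat.mul_le_mul hk (by omega)
    omega)
  have hsplit : s ^ (k * (d - 1)) = s ^ (k * (d - 1) - 1) * s := by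
    rw [← pow_succ]
    congr 1
    omega
  rw [hsplit] at h
  exact Nat.le_of_mul_le_mul_right h (by omega)

lemma card_Prof_le (hs : 1 ≤ s) (hk : 1 ≤ k) (hd : 2 ≤ d) (n : ℕ) :
    (Prof d s k n).card ≤
      (n + 1) ^ (Tset d k).card *
        (2 ^ (s ^ (k * (d - 1) - 1))) ^ ((Tset d k).card * (Tset d k).card) := by
  rw [Prof, Finset.card_product, Finset.card_pi, Finset.card_pi]
  apply Nat.mul_le_mul
  · apply le_of_eq
    rw [Finset.prod_congr rfl (fun t _ => Finset.card_range (n + 1)), Finset.prod_const]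
  · calc ∏ z ∈ OP d k, ((allBoxes d s k z.1 z.2).powerset).card
        ≤ ∏ z ∈ OP d k, 2 ^ (s ^ (k * (d - 1) - 1)) := by
          apply Finset.prod_le_prod'
          intro z hz
          obtain ⟨hz1, hz2, hzne⟩ := (mem_OP d k).mp hz
          rw [Finset.card_powerset]
          exact Nat.pow_le_pow_right (by omega)
            (card_allBoxes_le d s k hs hk hd hz1 hz2 hzne)
    _ = (2 ^ (s ^ (k * (d - 1) - 1))) ^ (OP d k).card := Finset.prod_const _
    _ ≤ (2 ^ (s ^ (k * (d - 1) - 1))) ^ ((Tset d k).card * (Tset d k).card) := by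
          apply Nat.pow_le_pow_right (Nat.one_le_two_pow)
          calc (OP d k).card ≤ ((Tset d k) ×ˢ (Tset d k)).card :=
            Finset.card_le_card (Finset.filter_subset _ _)
          _ = (Tset d k).card * (Tset d k).card := Finset.card_product _ _

/-- Per-profile bound, in the reals. -/
lemma profile_bound (hs : 1 ≤ s) (hd : 1 ≤ d) {n : ℕ} {π : ProfT d k}
    (hπ : π ∈ Prof' d s k n) {p : ℝ} (hp0 : 0 ≤ p) :
    (∏ t ∈ Tset d k, ((Aset d s k π t).card.choose (νget d k π t) : ℝ)) * p ^ n ≤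
      (p * (s : ℝ) ^ (k * (d - 1))) ^ n / (n.factorial : ℝ) := by
  obtain ⟨hProf, hsum, hdisj⟩ := Finset.mem_filter.mp hπ
  have hb := sum_Aset_le d s k hs hd hπ
  calc (∏ t ∈ Tset d k, ((Aset d s k π t).card.choose (νget d k π t) : ℝ)) * p ^ n
      ≤ (∏ t ∈ Tset d k, (((Aset d s k π t).card : ℝ) ^ (νget d k π t) /
          ((νget d k π t).factorial : ℝ))) * p ^ n := by
        apply mul_le_mul_of_nonneg_right _ (by positivity)
        apply Finset.prod_le_prod (fun t _ => by positivity)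
        intro t _
        exact choose_le_real _ _
  _ ≤ (((∑ t ∈ Tset d k, (Aset d s k π t).card : ℕ) : ℝ) ^ (∑ t ∈ Tset d k, νget d k π t) /
          (((∑ t ∈ Tset d k, νget d k π t).factorial : ℝ))) * p ^ n := by
        apply mul_le_mul_of_nonneg_right
          (prod_pow_div_factorial_le (Tset d k) _ _) (by positivity)
  _ ≤ (((s : ℝ) ^ (k * (d - 1))) ^ n / (n.factorial : ℝ)) * p ^ n := by
        rw [hsum]
        have hcast : ((∑ t ∈ Tset d k, (Aset d s k π t).card : ℕ) : ℝ) ≤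
            (s : ℝ) ^ (k * (d - 1)) := by
          calc ((∑ t ∈ Tset d k, (Aset d s k π t).card : ℕ) : ℝ)
              ≤ ((s ^ (k * (d - 1)) : ℕ) : ℝ) := Nat.cast_le.mpr hb
          _ = (s : ℝ) ^ (k * (d - 1)) := by push_cast; ring
        gcongr
  _ = (p * (s : ℝ) ^ (k * (d - 1))) ^ n / (n.factorial : ℝ) := by
        rw [mul_pow]
        ring

/-! ### Identification of the block family with the parameter set -/

lemma B_eq (hs : 1 ≤ s) (𝓑 : Finset (Set (Fin d → ℝ))) (h𝓑 : ↑𝓑 = blockFamily d s k) :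
    𝓑 = (Pset d s k).image (φ d s) := by
  apply Finset.coe_injective
  rw [h𝓑, Finset.coe_image]
  ext B
  constructor
  · rintro ⟨t, q, hsum, hcond, rfl⟩
    refine ⟨(t, fun i => (q i).toNat), ?_, ?_⟩
    · rw [Finset.mem_coe, mem_Pset d s k hs]
      refine ⟨hsum, ?_⟩
      intro i
      have h1 := (hcond i).1
      have h2 : ((q i).toNat : ℤ) < (s : ℤ) ^ (k - t i) := by
        rw [Int.toNat_of_nonneg h1]
        exact (hcond i).2
      have h3 : ((q i).toNat : ℤ) < ((s ^ (k - t i) : ℕ) : ℤ) := by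
        push_cast
        exact_mod_cast h2
      exact_mod_cast h3
    · show φ d s (t, fun i => (q i).toNat) = block d s t q
      rw [φ]
      exact congrArg (block d s t) (funext fun i => Int.toNat_of_nonneg (hcond i).1)
  · rintro ⟨x, hx, rfl⟩
    rw [Finset.mem_coe, mem_Pset d s k hs] at hx
    refine ⟨x.1, fun i => (x.2 i : ℤ), hx.1, ?_, rfl⟩
    intro i
    constructor
    · positivity
    · have := hx.2 i
      have h2 : ((x.2 i : ℕ) : ℤ) < ((s ^ (k - x.1 i) : ℕ) : ℤ) := by exact_mod_cast this
      push_cast at h2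
      exact h2

/-! ### The master counting bound -/

lemma card_Bad_le_badParam (hs : 2 ≤ s) (n : ℕ) (𝓑 : Finset (Set (Fin d → ℝ)))
    (h𝓑 : ↑𝓑 = blockFamily d s k) :
    (((𝓑.powersetCard n).filter fun I : Finset (Set (Fin d → ℝ)) =>
        (↑I : Set (Set (Fin d → ℝ))).Pairwise Disjoint).card)
      ≤ (BadParam d s k n).card := by
  have hs1 : 1 ≤ s := by omega
  have hB := B_eq d s k hs1 𝓑 h𝓑
  have hinj := phi_injOn d s k hs
  apply Finset.card_le_card_of_injOn (fun I => (Pset d s k).filter fun x => φ d s x ∈ I)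
  · -- maps into BadParam
    intro I hI
    obtain ⟨hIpow, hIdisj⟩ := Finset.mem_filter.mp hI
    obtain ⟨hIB, hIcard⟩ := Finset.mem_powersetCard.mp hIpow
    have himg : ((Pset d s k).filter fun x => φ d s x ∈ I).image (φ d s) = I := by
      apply Finset.Subset.antisymm
      · intro B hB'
        rw [Finset.mem_image] at hB'
        obtain ⟨x, hx, rfl⟩ := hB'
        exact (Finset.mem_filter.mp hx).2
      · intro B hBI
        have : B ∈ (Pset d s k).image (φ d s) := hB ▸ hIB hBI
        rw [Finset.mem_image] at this
        obtain ⟨x, hx, rfl⟩ := this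
        rw [Finset.mem_image]
        exact ⟨x, Finset.mem_filter.mpr ⟨hx, hBI⟩, rfl⟩
    rw [Finset.mem_coe, mem_BadParam]
    refine ⟨Finset.filter_subset _ _, ?_, ?_⟩
    · have hci : ((((Pset d s k).filter fun x => φ d s x ∈ I)).image (φ d s)).card =
          (((Pset d s k).filter fun x => φ d s x ∈ I)).card := by
        apply Finset.card_image_of_injOn
        intro x hx y hy hxy
        exact hinj (Finset.mem_coe.mpr ((Finset.mem_filter.mp hx).1))
          (Finset.mem_coe.mpr ((Finset.mem_filter.mp hy).1)) hxy
      rw [himg] at hci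
      rw [← hIcard]
      exact hci.symm
    · intro x hx y hy hxyne
      obtain ⟨hxP, hxI⟩ := Finset.mem_filter.mp hx
      obtain ⟨hyP, hyI⟩ := Finset.mem_filter.mp hy
      have hne : φ d s x ≠ φ d s y := by
        intro h
        exact hxyne (hinj (Finset.mem_coe.mpr hxP) (Finset.mem_coe.mpr hyP) h)
      exact hIdisj (Finset.mem_coe.mpr hxI) (Finset.mem_coe.mpr hyI) hne
  · -- injective
    intro I hI I' hI' heq
    have hIm : I ∈ (𝓑.powersetCard n).filter
        (fun I : Finset (Set (Fin d → ℝ)) => (↑I : Set (Set (Fin d → ℝ))).Pairwise Disjoint) := hI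
    have hIm' : I' ∈ (𝓑.powersetCard n).filter
        (fun I : Finset (Set (Fin d → ℝ)) => (↑I : Set (Set (Fin d → ℝ))).Pairwise Disjoint) := hI'
    have hIB := (Finset.mem_powersetCard.mp (Finset.mem_filter.mp hIm).1).1
    have hIB' := (Finset.mem_powersetCard.mp (Finset.mem_filter.mp hIm').1).1
    have key : ∀ (I₀ : Finset (Set (Fin d → ℝ))), I₀ ⊆ 𝓑 →
        ((Pset d s k).filter fun x => φ d s x ∈ I₀).image (φ d s) = I₀ := by
      intro I₀ hI₀
      apply Finset.Subset.antisymm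
      · intro B hB'
        rw [Finset.mem_image] at hB'
        obtain ⟨x, hx, rfl⟩ := hB'
        exact (Finset.mem_filter.mp hx).2
      · intro B hBI
        have : B ∈ (Pset d s k).image (φ d s) := hB ▸ hI₀ hBI
        rw [Finset.mem_image] at this
        obtain ⟨x, hx, rfl⟩ := this
        rw [Finset.mem_image]
        exact ⟨x, Finset.mem_filter.mpr ⟨hx, hBI⟩, rfl⟩
    have heq' : ((Pset d s k).filter fun x => φ d s x ∈ I) =
        ((Pset d s k).filter fun x => φ d s x ∈ I') := heq
    rw [← key I hIB, ← key I' hIB', heq']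

lemma card_badParam_le (hs : 1 ≤ s) (n : ℕ) :
    ((BadParam d s k n).card : ℝ) ≤
      ∑ π ∈ Prof' d s k n, ∏ t ∈ Tset d k, ((Aset d s k π t).card.choose (νget d k π t) : ℝ) := by
  have h1 : (BadParam d s k n).card =
      ∑ π ∈ Prof' d s k n, ((BadParam d s k n).filter fun J => Ψ d s k J = π).card :=
    Finset.card_eq_sum_card_fiberwise (fun J hJ => Ψ_mem d s k hs hJ)
  rw [h1]
  push_cast
  apply Finset.sum_le_sum
  intro π _
  have := fiber_card_le d s k hs (n := n) π
  calc (((BadParam d s k n).filter fun J => Ψ d s k J = π).card : ℝ)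
      ≤ ((∏ t ∈ Tset d k, (Aset d s k π t).card.choose (νget d k π t) : ℕ) : ℝ) :=
        Nat.cast_le.mpr this
  _ = ∏ t ∈ Tset d k, ((Aset d s k π t).card.choose (νget d k π t) : ℝ) := by push_cast; ring

/-! ### Final numeric estimate -/

set_option maxHeartbeats 1000000 in
lemma final_numeric (A M' n : ℕ) (slog : ℝ) (hA : (2:ℝ) ≤ A) (hlogs : (2:ℝ) ≤ slog)
    (hM'1 : (1:ℝ) ≤ M') (hn1 : 12 * (A:ℝ)^3 * slog * (M':ℝ) < n) :
    ((n:ℝ) + 1) ^ A * ((2:ℝ) ^ M') ^ (A * A) * (Real.exp 1 / 6) ^ n ≤ 1 / 4 := by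
  have hA0 : (0:ℝ) ≤ A := by linarith
  have hM0 : (0:ℝ) ≤ M' := by linarith
  have hA3 : (8:ℝ) ≤ (A:ℝ)^3 := by
    have := pow_le_pow_left₀ (by norm_num : (0:ℝ) ≤ 2) hA 3
    norm_num at this
    linarith
  have hA3nn : (0:ℝ) ≤ 12 * (A:ℝ)^3 := by positivity
  have t1 : 12 * (A:ℝ)^3 * 2 ≤ 12 * (A:ℝ)^3 * slog := mul_le_mul_of_nonneg_left hlogs hA3nn
  have t2 : 12 * (A:ℝ)^3 * slog ≤ 12 * (A:ℝ)^3 * slog * M' :=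
    le_mul_of_one_le_right (by nlinarith [mul_nonneg hA3nn (by linarith : (0:ℝ) ≤ slog)]) hM'1
  have hn192 : (192:ℝ) ≤ (n:ℝ) := by nlinarith
  have h24 : 24 * (A:ℝ)^3 ≤ n := by nlinarith
  have h48 : 48 * ((A:ℝ)*(A:ℝ)*(M':ℝ)) ≤ n := by
    have hAs : (4:ℝ) ≤ (A:ℝ) * slog := by nlinarith
    nlinarith [mul_nonneg (mul_nonneg (mul_nonneg hA0 hA0) hM0)
      (by linarith : (0:ℝ) ≤ (A:ℝ)*slog - 4)]
  set L := Real.log ((n:ℝ) + 1) with hLdef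
  have hL0 : 0 ≤ L := Real.log_nonneg (by linarith)
  have hL3 : L ^ 3 ≤ 6 * ((n:ℝ) + 1) := by
    have h := pow_le_exp_mul_factorial hL0 3
    rw [Real.exp_log (by linarith : (0:ℝ) < (n:ℝ)+1)] at h
    norm_num [Nat.factorial] at h
    linarith
  have hAL : (A:ℝ) * L ≤ (n:ℝ) / 4 := by
    apply le_of_pow_le_pow_left₀ (n := 3) (by norm_num) (by positivity)
    have e1 : ((A:ℝ) * L) ^ 3 = (A:ℝ)^3 * L^3 := by ring
    rw [e1]
    have key : (A:ℝ)^3 * L^3 ≤ ((n:ℝ)/24) * (6 * ((n:ℝ)+1)) :=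
      mul_le_mul (by linarith) hL3 (by positivity) (by positivity)
    have hnsq : (n:ℝ)*(n:ℝ)*192 ≤ (n:ℝ)*(n:ℝ)*(n:ℝ) :=
      mul_le_mul_of_nonneg_left hn192 (mul_self_nonneg _)
    have hnlin : (n:ℝ)*1 ≤ (n:ℝ)*(n:ℝ) :=
      mul_le_mul_of_nonneg_left (by linarith) (by positivity)
    have key2 : ((n:ℝ)/24) * (6 * ((n:ℝ)+1)) ≤ ((n:ℝ)/4)^3 := by nlinarith
    linarith
  have hlog2u : Real.log 2 < 0.6931471808 := Real.log_two_lt_d9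
  have hlog2l : (0.6931471803:ℝ) < Real.log 2 := Real.log_two_gt_d9
  have hlog4 : Real.log 4 = 2 * Real.log 2 := by
    rw [show (4:ℝ) = 2^2 by norm_num, Real.log_pow]
    push_cast; ring
  have hlog6 : 2 * Real.log 2 ≤ Real.log 6 := by
    have h4 : Real.log 4 ≤ Real.log 6 := by
      apply Real.log_le_log (by norm_num) (by norm_num)
    linarith
  have hbound : Real.log (((n:ℝ) + 1) ^ A * ((2:ℝ) ^ M') ^ (A * A) * (Real.exp 1 / 6) ^ n)
      ≤ Real.log (1/4) := by
    have hlogLHS : Real.log (((n:ℝ) + 1) ^ A * ((2:ℝ) ^ M') ^ (A * A) * (Real.exp 1 / 6) ^ n)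
        = (A:ℝ) * L + ((A:ℝ) * (A:ℝ)) * ((M':ℝ) * Real.log 2) + (n:ℝ) * (1 - Real.log 6) := by
      rw [Real.log_mul (by positivity) (by positivity),
        Real.log_mul (by positivity) (by positivity),
        Real.log_pow, Real.log_pow, Real.log_pow, Real.log_pow,
        Real.log_div (by positivity) (by norm_num), Real.log_exp]
      push_cast
      ring
    have hlog14 : Real.log (1/4 : ℝ) = -(2 * Real.log 2) := by
      rw [one_div, Real.log_inv, hlog4]
    rw [hlogLHS, hlog14]
    have hAAM : ((A:ℝ) * (A:ℝ)) * ((M':ℝ) * Real.log 2) ≤ (n:ℝ) * 0.0145 := by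
      nlinarith [mul_nonneg (by linarith : (0:ℝ) ≤ (n:ℝ)/48 - (A:ℝ)*(A:ℝ)*(M':ℝ))
          (by linarith : (0:ℝ) ≤ Real.log 2),
        mul_nonneg (by linarith : (0:ℝ) ≤ (n:ℝ))
          (by linarith : (0:ℝ) ≤ 0.696 - Real.log 2)]
    have e3 : (n:ℝ) * (1 - Real.log 6) ≤ (n:ℝ) * (1 - 2*Real.log 2) :=
      mul_le_mul_of_nonneg_left (by linarith) (by linarith)
    have e4 : (n:ℝ) * (1 - 2*Real.log 2) ≤ (n:ℝ) * (-0.386) :=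
      mul_le_mul_of_nonneg_left (by linarith) (by linarith)
    have e5 : (n:ℝ) * (-0.386) ≤ 192 * (-0.386) := by
      have := mul_le_mul_of_nonneg_left hn192 (by norm_num : (0:ℝ) ≤ 0.386)
      nlinarith
    linarith
  calc ((n:ℝ) + 1) ^ A * ((2:ℝ) ^ M') ^ (A * A) * (Real.exp 1 / 6) ^ n
      = Real.exp (Real.log (((n:ℝ) + 1) ^ A * ((2:ℝ) ^ M') ^ (A * A) * (Real.exp 1 / 6) ^ n)) := by
        rw [Real.exp_log (by positivity)]
  _ ≤ Real.exp (Real.log (1/4)) := Real.exp_le_exp.mpr hbound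
  _ = 1/4 := Real.exp_log (by norm_num)

end RIN

open RIN


set_option maxHeartbeats 2000000 in
/-- If each block of `𝓑` is kept independently with probability `p`, where
`s ≥ |T|³`, `p > 2·(log s)·|T|³/s` and `p·M ≥ 3` (with `|T| = C(k+d-1, d-1)` and
`M = s^{k(d-1)}`), then with probability at least `3/4` the subgraph `H` of the
intersection graph induced on the random subfamily `X` satisfies `α(H) ≤ 6·p·M`,
i.e. every pairwise disjoint subfamily `I ⊆ X` has at most `6·p·M` members. -/
theorem random_independence_number (d s k : ℕ) (hd : 2 ≤ d) (hs : 2 ≤ s) (hk : 1 ≤ k)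
    (𝓑 : Finset (Set (Fin d → ℝ))) (h𝓑 : ↑𝓑 = blockFamily d s k)
    (hsT : ((k + d - 1).choose (d - 1)) ^ 3 ≤ s)
    (p : ℝ) (hp0 : 0 < p) (hp1 : p < 1)
    (hplow : 2 * Real.log s * ((k + d - 1).choose (d - 1) : ℝ) ^ 3 / (s : ℝ) < p)
    (hpM : 3 ≤ p * (s : ℝ) ^ (k * (d - 1))) :
    (3 / 4 : ℝ) ≤ randomSubsetProb 𝓑 p
      (fun X => ∀ I ⊆ X, (↑I : Set (Set (Fin d → ℝ))).Pairwise Disjoint →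
        (I.card : ℝ) ≤ 6 * p * (s : ℝ) ^ (k * (d - 1))) := by
  classical
  have hs1 : 1 ≤ s := by omega
  set A := (k + d - 1).choose (d - 1) with hAdef
  have hA2 : 2 ≤ A := A_ge_two d k hd hk
  have hs8 : 8 ≤ s := by
    have h8 : 2 ^ 3 ≤ A ^ 3 := Nat.pow_le_pow_left hA2 3
    omega
  have hlogs : (2:ℝ) ≤ Real.log s := by
    have h8 : (8:ℝ) ≤ (s:ℝ) := by exact_mod_cast hs8
    have hmono : Real.log 8 ≤ Real.log s := Real.log_le_log (by norm_num) h8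
    have hl8 : Real.log 8 = 3 * Real.log 2 := by
      rw [show (8:ℝ) = 2^3 by norm_num, Real.log_pow]; push_cast; ring
    have := Real.log_two_gt_d9
    linarith
  set M : ℝ := (s:ℝ) ^ (k * (d - 1)) with hMdef
  have hMpos : (0:ℝ) < M := by positivity
  set n := ⌊6 * p * M⌋₊ + 1 with hndef
  have h18 : (18:ℝ) ≤ 6 * p * M := by nlinarith
  have hn_gt : 6 * p * M < (n:ℝ) := by
    have := Nat.lt_floor_add_one (6 * p * M)
    rw [hndef]
    push_cast
    linarith
  have hn19 : 19 ≤ n := by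
    have h1 : 18 ≤ ⌊6 * p * M⌋₊ := Nat.le_floor (by exact_mod_cast h18)
    omega
  have hexp1 : 1 ≤ k * (d - 1) := by
    have h1 : 1 * 1 ≤ k * (d - 1) := Nat.mul_le_mul hk (by omega)
    omega
  set M'n := s ^ (k * (d - 1) - 1) with hM'def
  have hMsplit : M = (s:ℝ) * (M'n:ℝ) := by
    rw [hMdef, hM'def]
    push_cast
    rw [← pow_succ']
    congr 1
    omega
  have hM'1 : (1:ℝ) ≤ (M'n:ℝ) := by
    have h1 : 0 < M'n := spow_pos s hs1 _
    exact_mod_cast h1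
  have hps : 2 * Real.log s * (A:ℝ)^3 < p * s := by
    rw [div_lt_iff₀ (by positivity : (0:ℝ) < (s:ℝ))] at hplow
    linarith
  have hn1 : 12 * (A:ℝ)^3 * Real.log s * (M'n:ℝ) < (n:ℝ) := by
    have h7 : 12 * (A:ℝ)^3 * Real.log s * (M'n:ℝ) < 6 * (p * s) * (M'n:ℝ) := by
      apply mul_lt_mul_of_pos_right _ (by linarith)
      linarith
    have h6 : 6 * (p * (s:ℝ)) * (M'n:ℝ) = 6 * p * M := by rw [hMsplit]; ring
    rw [h6] at h7
    linarith
  set Bad := (𝓑.powersetCard n).filter (fun I : Finset (Set (Fin d → ℝ)) =>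
    (↑I : Set (Set (Fin d → ℝ))).Pairwise Disjoint) with hBaddef
  have hBadsub : ∀ I ∈ Bad, I ⊆ 𝓑 := fun I hI =>
    (Finset.mem_powersetCard.mp (Finset.mem_filter.mp hI).1).1
  have hsum : (∑ I ∈ Bad, p ^ I.card) ≤ 1/4 := by
    have hconst : ∀ I ∈ Bad, p ^ I.card = p ^ n := fun I hI => by
      rw [(Finset.mem_powersetCard.mp (Finset.mem_filter.mp hI).1).2]
    rw [Finset.sum_congr rfl hconst, Finset.sum_const, nsmul_eq_mul]
    have hc1 : (Bad.card : ℝ) ≤ ((BadParam d s k n).card : ℝ) :=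
      Nat.cast_le.mpr (card_Bad_le_badParam d s k hs n 𝓑 h𝓑)
    have hc2 := card_badParam_le d s k hs1 n
    have hppos : (0:ℝ) ≤ p ^ n := by positivity
    calc (Bad.card : ℝ) * p ^ n
        ≤ (∑ π ∈ Prof' d s k n, ∏ t ∈ Tset d k,
            ((Aset d s k π t).card.choose (νget d k π t) : ℝ)) * p ^ n :=
          mul_le_mul_of_nonneg_right (le_trans hc1 hc2) hppos
    _ = ∑ π ∈ Prof' d s k n, (∏ t ∈ Tset d k,
            ((Aset d s k π t).card.choose (νget d k π t) : ℝ)) * p ^ n := by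
          rw [Finset.sum_mul]
    _ ≤ ∑ π ∈ Prof' d s k n, (p * M) ^ n / (n.factorial : ℝ) := by
          apply Finset.sum_le_sum
          intro π hπ
          exact profile_bound d s k hs1 (by omega) hπ (le_of_lt hp0)
    _ = (Prof' d s k n).card * ((p * M) ^ n / (n.factorial : ℝ)) := by
          rw [Finset.sum_const, nsmul_eq_mul]
    _ ≤ (Prof d s k n).card * ((p * M) ^ n / (n.factorial : ℝ)) := by
          apply mul_le_mul_of_nonneg_right _ (by positivity)
          exact Nat.cast_le.mpr (Finset.card_le_card (Finset.filter_subset _ _))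
    _ ≤ (((n+1) ^ (Tset d k).card * (2 ^ M'n) ^ ((Tset d k).card * (Tset d k).card) : ℕ) : ℝ)
          * ((p * M) ^ n / (n.factorial : ℝ)) := by
          apply mul_le_mul_of_nonneg_right _ (by positivity)
          exact_mod_cast card_Prof_le d s k hs1 hk hd n
    _ = (((n:ℝ)+1) ^ A * ((2:ℝ) ^ M'n) ^ (A * A)) * ((p * M) ^ n / (n.factorial : ℝ)) := by
          rw [card_Tset d k (by omega) hk]
          push_cast
          ring
    _ ≤ (((n:ℝ)+1) ^ A * ((2:ℝ) ^ M'n) ^ (A * A)) * (Real.exp 1 / 6) ^ n := by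
          apply mul_le_mul_of_nonneg_left _ (by positivity)
          have hpM6 : p * M ≤ (n:ℝ)/6 := by linarith
          have hstep1 : (p*M)^n ≤ ((n:ℝ)/6)^n :=
            pow_le_pow_left₀ (by positivity) hpM6 n
          have hkey : ((n:ℝ))^n ≤ Real.exp 1 ^ n * n.factorial := by
            have h := pow_le_exp_mul_factorial (x := (n:ℝ)) (Nat.cast_nonneg n) n
            rwa [← Real.exp_one_pow] at h
          calc (p*M)^n / (n.factorial:ℝ) ≤ ((n:ℝ)/6)^n / (n.factorial:ℝ) := by gcongr
          _ ≤ (Real.exp 1 / 6)^n := by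
                rw [div_pow, div_pow, div_div,
                  div_le_div_iff₀ (by positivity) (by positivity)]
                calc (n:ℝ)^n * (6:ℝ)^n ≤ (Real.exp 1 ^ n * n.factorial) * 6^n :=
                      mul_le_mul_of_nonneg_right hkey (by positivity)
                _ = Real.exp 1 ^ n * ((6:ℝ)^n * n.factorial) := by ring
    _ ≤ 1/4 := final_numeric A M'n n (Real.log s) (by exact_mod_cast hA2) hlogs hM'1 hn1
  have hprob := prob_ge 𝓑 p (le_of_lt hp0) (le_of_lt hp1)
    (fun X => ∀ I ⊆ X, (↑I : Set (Set (Fin d → ℝ))).Pairwise Disjoint →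
        (I.card : ℝ) ≤ 6 * p * (s : ℝ) ^ (k * (d - 1))) Bad hBadsub ?hE
  case hE =>
    intro X hX hnE
    have hnE' : ¬ (∀ I ⊆ X, (↑I : Set (Set (Fin d → ℝ))).Pairwise Disjoint →
        (I.card : ℝ) ≤ 6 * p * (s : ℝ) ^ (k * (d - 1))) := hnE
    push_neg at hnE'
    obtain ⟨I, hIX, hIpair, hIcard⟩ := hnE'
    have hflt : ⌊6 * p * M⌋₊ < I.card := by
      rw [Nat.floor_lt (by positivity)]
      exact hIcard
    have hnle : n ≤ I.card := by omega
    obtain ⟨I', hI'sub, hI'card⟩ := Finset.exists_subset_card_eq hnle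
    refine ⟨I', ?_, hI'sub.trans hIX⟩
    rw [hBaddef, Finset.mem_filter, Finset.mem_powersetCard]
    exact ⟨⟨(hI'sub.trans hIX).trans (Finset.mem_powerset.mp hX), hI'card⟩,
      hIpair.mono (Finset.coe_subset.mpr hI'sub)⟩
  linarith [hprob, hsum]
end
end

section
/- The independence number of G equals M = s^{k(d−1)}: for each t ∈ T the M many t-blocks of 𝓑 form an independent set, and any M+1 blocks of 𝓑 contain two blocks with nonempty intersection (since each block of 𝓑 has volume m = s^k and all blocks lie in [0,m]^d, which has volume m^d = m·M). -/
open scoped Classical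

noncomputable section

lemma block_self_mem {d s : ℕ} (hs : 0 < s) (t : Fin d → ℕ) (p : Fin d → ℤ) :
    (fun i => (((s : ℤ) ^ t i * p i : ℤ) : ℝ)) ∈ block d s t p := by
  rw [block, Set.mem_univ_pi]
  intro i
  have h : (0 : ℝ) < (s : ℝ) ^ t i := by positivity
  constructor
  · push_cast; exact le_refl _
  · push_cast; nlinarith

lemma block_disjoint {d s : ℕ} (hs : 0 < s) (t : Fin d → ℕ) {p q : Fin d → ℤ}
    (h : p ≠ q) : Disjoint (block d s t p) (block d s t q) := by
  rw [Set.disjoint_left]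
  intro x hx hx'
  apply h
  funext i
  rw [block, Set.mem_univ_pi] at hx hx'
  have hpow : (0 : ℝ) < (s : ℝ) ^ t i := by positivity
  have h1 : (s : ℝ) ^ t i * (q i : ℝ) < (s : ℝ) ^ t i * ((p i : ℝ) + 1) :=
    lt_of_le_of_lt (hx' i).1 (hx i).2
  have h2 : (s : ℝ) ^ t i * (p i : ℝ) < (s : ℝ) ^ t i * ((q i : ℝ) + 1) :=
    lt_of_le_of_lt (hx i).1 (hx' i).2
  have h1' : (q i : ℝ) < (p i : ℝ) + 1 := (mul_lt_mul_iff_right₀ hpow).mp h1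
  have h2' : (p i : ℝ) < (q i : ℝ) + 1 := (mul_lt_mul_iff_right₀ hpow).mp h2
  have h1'' : q i < p i + 1 := by exact_mod_cast h1'
  have h2'' : p i < q i + 1 := by exact_mod_cast h2'
  omega

/-- The independence number of the intersection graph of `𝓑` equals `M = s^{k(d-1)}`:
for each `t ∈ T` the `t`-blocks of `𝓑` form a pairwise disjoint subfamily of size `M`,
and every pairwise disjoint subfamily of `𝓑` has at most `M` members. -/
theorem independence_number_of_blockFamily (d s k : ℕ) (hd : 2 ≤ d) (hs : 2 ≤ s)
    (hk : 1 ≤ k) :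
    (∀ t : Fin d → ℕ, (∑ i, t i) = k →
      ∃ S : Finset (Set (Fin d → ℝ)),
        S.card = s ^ (k * (d - 1)) ∧
        (∀ B ∈ S, B ∈ blockFamily d s k ∧
          ∃ p : Fin d → ℤ, (∀ i, 0 ≤ p i ∧ p i < (s : ℤ) ^ (k - t i)) ∧ B = block d s t p) ∧
        ((↑S : Set (Set (Fin d → ℝ))).Pairwise Disjoint)) ∧
    (∀ S : Finset (Set (Fin d → ℝ)), ↑S ⊆ blockFamily d s k →
      (↑S : Set (Set (Fin d → ℝ))).Pairwise Disjoint → S.card ≤ s ^ (k * (d - 1))) := by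
  have hs0 : 0 < s := by omega
  constructor
  · -- Lower bound: the t-blocks form a disjoint family of size s^{k(d-1)}
    intro t ht
    have htk : ∀ i, t i ≤ k := fun i =>
      ht ▸ Finset.single_le_sum (fun j _ => Nat.zero_le _) (Finset.mem_univ i)
    set P : Finset (Fin d → ℤ) :=
      Fintype.piFinset fun i => Finset.Ico (0 : ℤ) ((s : ℤ) ^ (k - t i)) with hP
    have hmemP : ∀ p ∈ P, ∀ i, 0 ≤ p i ∧ p i < (s : ℤ) ^ (k - t i) := by
      intro p hp i
      have := Fintype.mem_piFinset.mp hp i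
      rw [Finset.mem_Ico] at this
      exact this
    refine ⟨P.image (block d s t), ?_, ?_, ?_⟩
    · rw [Finset.card_image_of_injOn, hP, Fintype.card_piFinset]
      · have hcast : ∀ i : Fin d, (Finset.Ico (0 : ℤ) ((s : ℤ) ^ (k - t i))).card
            = s ^ (k - t i) := by
          intro i
          rw [Int.card_Ico, sub_zero]
          have : ((s : ℤ) ^ (k - t i)) = ((s ^ (k - t i) : ℕ) : ℤ) := by push_cast; ring
          rw [this, Int.toNat_natCast]
        rw [Finset.prod_congr rfl fun i _ => hcast i, Finset.prod_pow_eq_pow_sum]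
        congr 1
        have hsum : ∑ i, (k - t i) + ∑ i, t i = ∑ _i : Fin d, k := by
          rw [← Finset.sum_add_distrib]
          exact Finset.sum_congr rfl fun i _ => Nat.sub_add_cancel (htk i)
        rw [Finset.sum_const, Finset.card_univ, Fintype.card_fin, smul_eq_mul, ht] at hsum
        have : k * (d - 1) = d * k - k := by
          rw [Nat.mul_sub, mul_one, mul_comm]
        omega
      · intro p hp q hq hpq
        by_contra hne
        have hdis := block_disjoint (d := d) hs0 t hne
        rw [hpq] at hdis
        exact (Set.disjoint_left.mp hdis (block_self_mem hs0 t q)) (block_self_mem hs0 t q)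
    · intro B hB
      obtain ⟨p, hp, rfl⟩ := Finset.mem_image.mp hB
      exact ⟨⟨t, p, ht, hmemP p hp, rfl⟩, p, hmemP p hp, rfl⟩
    · intro B hB B' hB' hne
      obtain ⟨p, hp, rfl⟩ := Finset.mem_image.mp (Finset.mem_coe.mp hB)
      obtain ⟨q, hq, rfl⟩ := Finset.mem_image.mp (Finset.mem_coe.mp hB')
      exact block_disjoint hs0 t (fun h => hne (by rw [h]))
  · -- Upper bound via counting integer points
    intro S hS hdisj
    set Box : Finset (Fin d → ℤ) :=
      Fintype.piFinset fun _ : Fin d => Finset.Ico (0 : ℤ) ((s : ℤ) ^ k) with hBox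
    set f : Set (Fin d → ℝ) → Finset (Fin d → ℤ) :=
      fun B => Box.filter fun q => (fun i => (q i : ℝ)) ∈ B with hf
    -- each block contains at least s^k integer points of Box
    have key : ∀ B ∈ S, s ^ k ≤ (f B).card := by
      intro B hB
      obtain ⟨t, p, ht, hp, rfl⟩ := hS (Finset.mem_coe.mpr hB)
      have htk : ∀ i, t i ≤ k := fun i =>
        ht ▸ Finset.single_le_sum (fun j _ => Nat.zero_le _) (Finset.mem_univ i)
      set small : Finset (Fin d → ℤ) :=
        Fintype.piFinset fun i =>
          Finset.Ico ((s : ℤ) ^ t i * p i) ((s : ℤ) ^ t i * (p i + 1)) with hsmall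
      have hsub : small ⊆ f (block d s t p) := by
        intro q hq
        have hqi : ∀ i, (s : ℤ) ^ t i * p i ≤ q i ∧ q i < (s : ℤ) ^ t i * (p i + 1) := by
          intro i
          have := Fintype.mem_piFinset.mp hq i
          rw [Finset.mem_Ico] at this
          exact this
        rw [hf, Finset.mem_filter]
        constructor
        · rw [hBox, Fintype.mem_piFinset]
          intro i
          rw [Finset.mem_Ico]
          have h1 : (0 : ℤ) ≤ (s : ℤ) ^ t i * p i :=
            mul_nonneg (pow_nonneg (by positivity) _) (hp i).1
          have h2 : (s : ℤ) ^ t i * (p i + 1) ≤ (s : ℤ) ^ t i * (s : ℤ) ^ (k - t i) := by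
            apply mul_le_mul_of_nonneg_left _ (pow_nonneg (by positivity) _)
            have := (hp i).2
            omega
          have h3 : (s : ℤ) ^ t i * (s : ℤ) ^ (k - t i) = (s : ℤ) ^ k := by
            rw [← pow_add, Nat.add_sub_cancel' (htk i)]
          exact ⟨le_trans h1 (hqi i).1, by
            calc q i < (s : ℤ) ^ t i * (p i + 1) := (hqi i).2
              _ ≤ (s : ℤ) ^ t i * (s : ℤ) ^ (k - t i) := h2
              _ = (s : ℤ) ^ k := h3⟩
        · rw [block, Set.mem_univ_pi]
          intro i
          constructor
          · exact_mod_cast (hqi i).1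
          · exact_mod_cast (hqi i).2
      have hcard : small.card = s ^ k := by
        rw [hsmall, Fintype.card_piFinset]
        have hc : ∀ i : Fin d,
            (Finset.Ico ((s : ℤ) ^ t i * p i) ((s : ℤ) ^ t i * (p i + 1))).card
              = s ^ t i := by
          intro i
          rw [Int.card_Ico]
          have : (s : ℤ) ^ t i * (p i + 1) - (s : ℤ) ^ t i * p i
              = ((s ^ t i : ℕ) : ℤ) := by push_cast; ring
          rw [this, Int.toNat_natCast]
        rw [Finset.prod_congr rfl fun i _ => hc i, Finset.prod_pow_eq_pow_sum, ht]
      calc s ^ k = small.card := hcard.symm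
        _ ≤ (f (block d s t p)).card := Finset.card_le_card hsub
    -- the point sets are pairwise disjoint
    have hdisjf : ∀ B ∈ S, ∀ B' ∈ S, B ≠ B' → Disjoint (f B) (f B') := by
      intro B hB B' hB' hne
      rw [Finset.disjoint_left]
      intro q hq hq'
      rw [hf, Finset.mem_filter] at hq hq'
      exact Set.disjoint_left.mp
        (hdisj (Finset.mem_coe.mpr hB) (Finset.mem_coe.mpr hB') hne) hq.2 hq'.2
    have hunion : S.biUnion f ⊆ Box :=
      Finset.biUnion_subset.mpr fun B _ => Finset.filter_subset _ _
    have hBoxcard : Box.card = (s ^ k) ^ d := by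
      rw [hBox, Fintype.card_piFinset]
      have : ∀ _i : Fin d, (Finset.Ico (0 : ℤ) ((s : ℤ) ^ k)).card = s ^ k := by
        intro i
        rw [Int.card_Ico, sub_zero]
        have : ((s : ℤ) ^ k) = ((s ^ k : ℕ) : ℤ) := by push_cast; ring
        rw [this, Int.toNat_natCast]
      rw [Finset.prod_congr rfl fun i _ => this i, Finset.prod_const,
        Finset.card_univ, Fintype.card_fin]
    have hmain : S.card * s ^ k ≤ (s ^ k) ^ d := by
      calc S.card * s ^ k = ∑ _B ∈ S, s ^ k := by
            rw [Finset.sum_const, smul_eq_mul]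
        _ ≤ ∑ B ∈ S, (f B).card := Finset.sum_le_sum key
        _ = (S.biUnion f).card := (Finset.card_biUnion hdisjf).symm
        _ ≤ Box.card := Finset.card_le_card hunion
        _ = (s ^ k) ^ d := hBoxcard
    have hpow : (s ^ k) ^ d = s ^ (k * (d - 1)) * s ^ k := by
      rw [← pow_mul, ← pow_add]
      congr 1
      have h1 : k * (d - 1) = k * d - k := by rw [Nat.mul_sub, mul_one]
      have h2 : k ≤ k * d := Nat.le_mul_of_pos_right k (by omega)
      omega
    rw [hpow] at hmain
    exact Nat.le_of_mul_le_mul_right hmain (pow_pos hs0 k)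
end
end

section
/- There exist q ≤ |T|²·M/s pairs (X₁,Y₁),…,(X_q,Y_q) of disjoint subsets of 𝓑 such that every element of X_i intersects every element of Y_i for each i, and every edge of G (i.e., every unordered pair of distinct intersecting blocks of 𝓑) lies between X_i and Y_i for exactly one index i. In other words, G is the edge-disjoint union of at most |T|²·M/s complete bipartite graphs. -/
open scoped Classical

noncomputable section

namespace CBD

lemma int_ediv_eq {e p q : ℤ} (he : 0 < e) (h1 : e * q ≤ p) (h2 : p < e * (q + 1)) :
    p / e = q := by
  have hq : q ≤ p / e := (Int.le_ediv_iff_mul_le he).2 (by linarith)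
  have hq2 : p / e < q + 1 := by
    by_contra h
    push_neg at h
    have := (Int.le_ediv_iff_mul_le he).1 h
    linarith
  omega

lemma int_ediv_bounds {e p : ℤ} (he : 0 < e) : e * (p / e) ≤ p ∧ p < e * (p / e + 1) := by
  have h1 := Int.emod_nonneg p (ne_of_gt he)
  have h2 := Int.emod_lt_of_pos p he
  have h3 := Int.mul_ediv_add_emod p e
  constructor <;> linarith

variable {s : ℕ}

/-- one-sided coordinate intersection -/
lemma Ico_inter (hs : 2 ≤ s) {a b : ℕ} (hab : a ≤ b) (p q : ℤ) :
    (Set.Ico ((s:ℝ)^a * p) ((s:ℝ)^a * (p+1)) ∩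
     Set.Ico ((s:ℝ)^b * q) ((s:ℝ)^b * (q+1))).Nonempty ↔
    p / (s:ℤ)^(b-a) = q := by
  have hs0 : (0:ℝ) < (s:ℝ) := by positivity
  have ha : (0:ℝ) < (s:ℝ)^a := by positivity
  set e : ℤ := (s:ℤ)^(b-a) with hedef
  have he : 0 < e := by positivity
  have hb : (s:ℝ)^b = (s:ℝ)^a * (e:ℝ) := by
    rw [hedef]
    push_cast
    rw [← pow_add]
    congr 1
    omega
  constructor
  · rintro ⟨x, ⟨hx1, hx2⟩, ⟨hx3, hx4⟩⟩
    have l1 : (s:ℝ)^a * ((e:ℝ) * q) < (s:ℝ)^a * (p+1) := by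
      rw [← mul_assoc, ← hb]; exact lt_of_le_of_lt hx3 hx2
    have l2 : (s:ℝ)^a * p < (s:ℝ)^a * ((e:ℝ) * (q+1)) := by
      rw [← mul_assoc, ← hb]; exact lt_of_le_of_lt hx1 hx4
    have l1' : (e:ℝ) * q < (p:ℝ) + 1 := by
      have := (mul_lt_mul_iff_right₀ ha).1 l1; exact_mod_cast this
    have l2' : (p:ℝ) < (e:ℝ) * (q+1) := by
      have := (mul_lt_mul_iff_right₀ ha).1 l2; exact_mod_cast this
    have i1' : e * q < p + 1 := by exact_mod_cast l1'
    have i2 : p < e * (q + 1) := by exact_mod_cast l2'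
    have i1 : e * q ≤ p := by omega
    exact int_ediv_eq he i1 i2
  · intro h
    obtain ⟨i1, i2⟩ := int_ediv_bounds (p := p) he
    rw [h] at i1 i2
    refine ⟨(s:ℝ)^a * p, ⟨le_refl _, by nlinarith⟩, ?_, ?_⟩
    · rw [hb, mul_assoc]
      have : ((e * q : ℤ) : ℝ) ≤ (p:ℤ) := by exact_mod_cast i1
      push_cast at this ⊢
      nlinarith
    · rw [hb, mul_assoc]
      have : ((p : ℤ) : ℝ) < ((e * (q+1) : ℤ) : ℝ) := by exact_mod_cast i2
      push_cast at this ⊢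
      nlinarith

/-- symmetric coordinate intersection -/
lemma Ico_inter_sym (hs : 2 ≤ s) (a b : ℕ) (p q : ℤ) :
    (Set.Ico ((s:ℝ)^a * p) ((s:ℝ)^a * (p+1)) ∩
     Set.Ico ((s:ℝ)^b * q) ((s:ℝ)^b * (q+1))).Nonempty ↔
    p / (s:ℤ)^(max a b - a) = q / (s:ℤ)^(max a b - b) := by
  rcases le_total a b with hab | hba
  · rw [max_eq_right hab, Nat.sub_self, pow_zero, Int.ediv_one]
    exact Ico_inter hs hab p q
  · rw [max_eq_left hba, Nat.sub_self, pow_zero, Int.ediv_one, Set.inter_comm, eq_comm]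
    exact Ico_inter hs hba q p

variable {d : ℕ}

lemma block_inter (hs : 2 ≤ s) (t u : Fin d → ℕ) (p q : Fin d → ℤ) :
    (block d s t p ∩ block d s u q).Nonempty ↔
    ∀ i, (p i) / (s:ℤ)^(max (t i) (u i) - t i) = (q i) / (s:ℤ)^(max (t i) (u i) - u i) := by
  unfold block
  rw [← Set.pi_inter_distrib, Set.univ_pi_nonempty_iff]
  exact forall_congr' fun i => Ico_inter_sym hs (t i) (u i) (p i) (q i)

lemma block_nonempty (hs : 2 ≤ s) (t : Fin d → ℕ) (p : Fin d → ℤ) :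
    (block d s t p).Nonempty := by
  unfold block
  rw [Set.univ_pi_nonempty_iff]
  intro i
  refine ⟨(s:ℝ)^(t i) * p i, le_refl _, ?_⟩
  have : (0:ℝ) < (s:ℝ)^(t i) := by positivity
  nlinarith

lemma block_inj (hs : 2 ≤ s) {t u : Fin d → ℕ} {p q : Fin d → ℤ}
    (h : block d s t p = block d s u q) : t = u ∧ p = q := by
  have hne := block_nonempty (d := d) hs t p
  have hco : ∀ i, Set.Ico ((s : ℝ) ^ t i * (p i : ℝ)) ((s : ℝ) ^ t i * ((p i : ℝ) + 1))
      = Set.Ico ((s : ℝ) ^ u i * (q i : ℝ)) ((s : ℝ) ^ u i * ((q i : ℝ) + 1)) := by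
    intro i
    have h1 := Set.eval_image_univ_pi (i := i) hne
    have h2 := Set.eval_image_univ_pi (i := i) (h ▸ hne)
    unfold block at h
    rw [← h1, ← h2, h]
  have key : ∀ i, t i = u i ∧ p i = q i := by
    intro i
    have hpos : (0:ℝ) < (s:ℝ)^(t i) := by positivity
    have hlt : (s : ℝ) ^ t i * (p i : ℝ) < (s : ℝ) ^ t i * ((p i : ℝ) + 1) := by nlinarith
    obtain ⟨e1, e2⟩ := (Set.Ico_eq_Ico_iff (Or.inl hlt)).1 (hco i)
    have e3 : (s:ℝ)^(t i) = (s:ℝ)^(u i) := by nlinarith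
    have e4 : ((s^(t i) : ℕ) : ℝ) = ((s^(u i) : ℕ) : ℝ) := by push_cast; exact e3
    have e5 : s ^ t i = s ^ u i := Nat.cast_injective e4
    have e6 : t i = u i := Nat.pow_right_injective hs e5
    refine ⟨e6, ?_⟩
    have e7 : (p i : ℝ) = q i := by
      rw [e3] at e1
      have hpos' : (0:ℝ) < (s:ℝ)^(u i) := by positivity
      exact mul_left_cancel₀ (ne_of_gt hpos') e1
    exact_mod_cast e7
  exact ⟨funext fun i => (key i).1, funext fun i => (key i).2⟩

lemma card_T (d k : ℕ) (hd : 1 ≤ d) :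
    (Finset.Nat.antidiagonalTuple d k).card = (k + d - 1).choose (d - 1) := by
  have e1 : Sym (Fin d) k ≃ {t : Fin d → ℕ // ∑ i, t i = k} :=
    Sym.equivNatSumOfFintype (Fin d) k
  have e2 : {x // x ∈ Finset.Nat.antidiagonalTuple d k} ≃ {t : Fin d → ℕ // ∑ i, t i = k} :=
    Equiv.subtypeEquivRight fun x => Finset.Nat.mem_antidiagonalTuple
  have := Fintype.card_congr (e2.trans e1.symm)
  rw [Fintype.card_coe] at this
  rw [this, Sym.card_sym_eq_choose, Fintype.card_fin]
  have h1 : d + k - 1 = k + d - 1 := by omega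
  rw [h1, ← Nat.choose_symm (n := k + d - 1) (k := k) (by omega)]
  congr 1
  omega

/-- index type -/
abbrev Idx (d : ℕ) := Σ _ : (Fin d → ℕ) × (Fin d → ℕ), Fin d → ℤ

def enc {d : ℕ} (t : Fin d → ℕ) : ℕ := Encodable.encode t

lemma enc_inj {d : ℕ} : Function.Injective (enc (d := d)) := Encodable.encode_injective

def sig (s : ℕ) {d : ℕ} (t u : Fin d → ℕ) (p : Fin d → ℤ) : Fin d → ℤ :=
  fun i => (p i) / (s:ℤ)^(max (t i) (u i) - t i)

def Cs (s k : ℕ) {d : ℕ} (t u : Fin d → ℕ) : Finset (Fin d → ℤ) :=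
  Fintype.piFinset fun i => Finset.Ico 0 ((s:ℤ)^(k - max (t i) (u i)))

def Pairs (d k : ℕ) : Finset ((Fin d → ℕ) × (Fin d → ℕ)) :=
  (Finset.Nat.antidiagonalTuple d k ×ˢ Finset.Nat.antidiagonalTuple d k).filter
    fun tu => enc tu.1 < enc tu.2

def IFin (d s k : ℕ) : Finset (Idx d) := (Pairs d k).sigma fun tu => Cs s k tu.1 tu.2

def qN (d s k : ℕ) : ℕ := (IFin d s k).card

def eIdx (d s k : ℕ) : Fin (qN d s k) ≃ {x // x ∈ IFin d s k} := (IFin d s k).equivFin.symm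

def Xf (d s k : ℕ) (i : Fin (qN d s k)) : Set (Set (Fin d → ℝ)) :=
  {B | ∃ p : Fin d → ℤ, (∀ j, 0 ≤ p j ∧ p j < (s:ℤ)^(k - (eIdx d s k i).1.1.1 j)) ∧
     sig s (eIdx d s k i).1.1.1 (eIdx d s k i).1.1.2 p = (eIdx d s k i).1.2 ∧
     B = block d s (eIdx d s k i).1.1.1 p}

def Yf (d s k : ℕ) (i : Fin (qN d s k)) : Set (Set (Fin d → ℝ)) :=
  {B | ∃ q : Fin d → ℤ, (∀ j, 0 ≤ q j ∧ q j < (s:ℤ)^(k - (eIdx d s k i).1.1.2 j)) ∧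
     sig s (eIdx d s k i).1.1.2 (eIdx d s k i).1.1.1 q = (eIdx d s k i).1.2 ∧
     B = block d s (eIdx d s k i).1.1.2 q}

lemma mem_IFin_props {d s k : ℕ} (i : Fin (qN d s k)) :
    (∑ j, (eIdx d s k i).1.1.1 j) = k ∧ (∑ j, (eIdx d s k i).1.1.2 j) = k ∧
    enc (eIdx d s k i).1.1.1 < enc (eIdx d s k i).1.1.2 := by
  have h := (eIdx d s k i).2
  unfold IFin at h
  rw [Finset.mem_sigma] at h
  have h1 := h.1
  unfold Pairs at h1
  rw [Finset.mem_filter, Finset.mem_product] at h1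
  exact ⟨Finset.Nat.mem_antidiagonalTuple.1 h1.1.1,
    Finset.Nat.mem_antidiagonalTuple.1 h1.1.2, h1.2⟩

end CBD

open CBD

/-- The intersection graph of `𝓑` is the edge-disjoint union of at most `|T|²·M/s`
complete bipartite graphs (with `|T| = C(k+d-1, d-1)` and `M = s^{k(d-1)}`): there are
`q ≤ |T|²·M/s` pairs `(Xᵢ, Yᵢ)` of disjoint subsets of `𝓑` such that every member of
`Xᵢ` intersects every member of `Yᵢ`, and every unordered pair of distinct intersecting
blocks of `𝓑` lies between `Xᵢ` and `Yᵢ` for exactly one index `i`. -/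
theorem complete_bipartite_decomposition (d s k : ℕ) (hd : 2 ≤ d) (hs : 2 ≤ s)
    (hk : 1 ≤ k) :
    ∃ q : ℕ, ∃ X Y : Fin q → Set (Set (Fin d → ℝ)),
      (q : ℝ) ≤ ((k + d - 1).choose (d - 1) : ℝ) ^ 2 * (s : ℝ) ^ (k * (d - 1)) / (s : ℝ) ∧
      (∀ i, X i ⊆ blockFamily d s k ∧ Y i ⊆ blockFamily d s k ∧ Disjoint (X i) (Y i)) ∧
      (∀ i, ∀ B ∈ X i, ∀ B' ∈ Y i, (B ∩ B').Nonempty) ∧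
      (∀ B ∈ blockFamily d s k, ∀ B' ∈ blockFamily d s k, B ≠ B' → (B ∩ B').Nonempty →
        ∃! i : Fin q, (B ∈ X i ∧ B' ∈ Y i) ∨ (B ∈ Y i ∧ B' ∈ X i)) := by
  refine ⟨qN d s k, Xf d s k, Yf d s k, ?_, ?_, ?_, ?_⟩
  · -- cardinality bound
    -- bound in ℕ first
    have hmaxle : ∀ (t u : Fin d → ℕ), (∑ j, t j) = k → (∑ j, u j) = k →
        ∀ i, max (t i) (u i) ≤ k := by
      intro t u ht hu i
      have h1 : t i ≤ ∑ j, t j := Finset.single_le_sum (fun j _ => Nat.zero_le _) (Finset.mem_univ i)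
      have h2 : u i ≤ ∑ j, u j := Finset.single_le_sum (fun j _ => Nat.zero_le _) (Finset.mem_univ i)
      omega
    have hcount : ∀ tu ∈ Pairs d k, (Cs s k tu.1 tu.2).card ≤ s ^ (k * (d-1) - 1) := by
      rintro ⟨t, u⟩ htu
      rw [Pairs, Finset.mem_filter, Finset.mem_product] at htu
      obtain ⟨⟨ht0, hu0⟩, hlt0⟩ := htu
      rw [Finset.Nat.mem_antidiagonalTuple] at ht0 hu0
      have ht : (∑ i, t i) = k := ht0
      have hu : (∑ i, u i) = k := hu0
      have hlt : enc t < enc u := hlt0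
      have htu_ne : t ≠ u := fun h => by rw [h] at hlt; exact lt_irrefl _ hlt
      have hmle := hmaxle t u ht hu
      -- card of Cs
      have hcs : (Cs s k t u).card = s ^ (∑ i, (k - max (t i) (u i))) := by
        rw [Cs, Fintype.card_piFinset]
        rw [← Finset.prod_pow_eq_pow_sum]
        apply Finset.prod_congr rfl
        intro i _
        rw [Int.card_Ico, sub_zero]
        have : ((s:ℤ))^(k - max (t i) (u i)) = ((s ^ (k - max (t i) (u i)) : ℕ) : ℤ) := by
          push_cast; ring
        rw [this, Int.toNat_natCast]
      rw [hcs]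
      apply Nat.pow_le_pow_right (by omega)
      -- exponent bound
      have hsum : (∑ i, (k - max (t i) (u i))) + (∑ i, max (t i) (u i)) = d * k := by
        rw [← Finset.sum_add_distrib]
        have : ∀ i ∈ Finset.univ, (k - max (t i) (u i)) + max (t i) (u i) = k := by
          intro i _; have := hmle i; omega
        rw [Finset.sum_congr rfl this]
        simp [Finset.sum_const, mul_comm]
      have hmax_gt : k < ∑ i, max (t i) (u i) := by
        have hj : ∃ j, t j < u j := by
          by_contra h
          push_neg at h
          have : ∀ j, t j = u j := by
            by_contra h2
            push_neg at h2
            obtain ⟨j0, hj0⟩ := h2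
            have hlt0 : u j0 < t j0 := lt_of_le_of_ne (h j0) (Ne.symm hj0)
            have : (∑ j, u j) < ∑ j, t j :=
              Finset.sum_lt_sum (fun j _ => h j) ⟨j0, Finset.mem_univ j0, hlt0⟩
            omega
          exact htu_ne (funext fun j => (this j)) |>.elim
        obtain ⟨j, hj⟩ := hj
        calc k = ∑ i, t i := ht.symm
          _ < ∑ i, max (t i) (u i) :=
            Finset.sum_lt_sum (fun i _ => le_max_left _ _)
              ⟨j, Finset.mem_univ j, lt_of_lt_of_le hj (le_max_right _ _)⟩
      have hkd : d * k = k * (d - 1) + k := by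
        have hd1 : d - 1 + 1 = d := by omega
        calc d * k = k * ((d-1) + 1) := by rw [hd1]; ring
          _ = k * (d-1) + k := by ring
      omega
    have hq1 : qN d s k ≤ (Pairs d k).card * s ^ (k * (d-1) - 1) := by
      unfold qN IFin
      rw [Finset.card_sigma]
      calc (∑ tu ∈ Pairs d k, (Cs s k tu.1 tu.2).card)
          ≤ ∑ _tu ∈ Pairs d k, s ^ (k * (d-1) - 1) := Finset.sum_le_sum hcount
        _ = (Pairs d k).card * s ^ (k * (d-1) - 1) := by rw [Finset.sum_const, smul_eq_mul]
    have hq2 : (Pairs d k).card ≤ ((k + d - 1).choose (d - 1))^2 := by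
      calc (Pairs d k).card ≤ (Finset.Nat.antidiagonalTuple d k ×ˢ
            Finset.Nat.antidiagonalTuple d k).card := Finset.card_filter_le _ _
        _ = ((k + d - 1).choose (d - 1))^2 := by
            rw [Finset.card_product, card_T d k (by omega)]; ring
    have hnat : qN d s k ≤ ((k + d - 1).choose (d - 1))^2 * s ^ (k * (d-1) - 1) :=
      le_trans hq1 (Nat.mul_le_mul_right _ hq2)
    have hcast : (qN d s k : ℝ) ≤ ((k + d - 1).choose (d - 1) : ℝ)^2 * (s:ℝ) ^ (k * (d-1) - 1) := by
      exact_mod_cast hnat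
    have hm1 : k * (d - 1) = (k * (d-1) - 1) + 1 := by
      have : 1 ≤ k * (d - 1) := by
        have : 1 ≤ d - 1 := by omega
        calc 1 = 1 * 1 := by ring
          _ ≤ k * (d - 1) := Nat.mul_le_mul hk this
      omega
    have hs0 : (s:ℝ) ≠ 0 := by positivity
    calc (qN d s k : ℝ) ≤ ((k + d - 1).choose (d - 1) : ℝ)^2 * (s:ℝ) ^ (k * (d-1) - 1) := hcast
      _ = ((k + d - 1).choose (d - 1) : ℝ)^2 * (s:ℝ) ^ (k * (d-1)) / (s:ℝ) := by
          rw [hm1, pow_succ, Nat.add_sub_cancel]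
          field_simp
          ring
  · -- subsets and disjoint
    intro i
    obtain ⟨ht, hu, hlt⟩ := mem_IFin_props (s := s) i
    refine ⟨?_, ?_, ?_⟩
    · rintro B ⟨p, hp, _, rfl⟩
      exact ⟨_, p, ht, hp, rfl⟩
    · rintro B ⟨q, hq, _, rfl⟩
      exact ⟨_, q, hu, hq, rfl⟩
    · rw [Set.disjoint_left]
      rintro B ⟨p, hp, _, rfl⟩ ⟨q, hq, _, hBq⟩
      have := (block_inj hs hBq).1
      rw [this] at hlt
      exact lt_irrefl _ hlt
  · -- complete bipartite
    rintro i B ⟨p, hp, hsp, rfl⟩ B' ⟨q, hq, hsq, rfl⟩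
    rw [block_inter hs]
    intro j
    have h1 : sig s (eIdx d s k i).1.1.1 (eIdx d s k i).1.1.2 p j = (eIdx d s k i).1.2 j := by
      rw [hsp]
    have h2 : sig s (eIdx d s k i).1.1.2 (eIdx d s k i).1.1.1 q j = (eIdx d s k i).1.2 j := by
      rw [hsq]
    rw [sig] at h1 h2
    rw [h1, ← h2, max_comm]
  · -- exactly one
    rintro B ⟨t, p, ht, hp, rfl⟩ B' ⟨u, q, hu, hq, rfl⟩ hne hint
    have htu_ne : t ≠ u := by
      rintro rfl
      apply hne
      have := (block_inter hs t t p q).1 hint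
      have hpq : p = q := by
        funext j
        have := this j
        simpa [Nat.sub_self] using this
      rw [hpq]
    -- key construction, wlog on enc
    have key : ∀ (t u : Fin d → ℕ) (p q : Fin d → ℤ),
        (∑ i, t i) = k → (∑ i, u i) = k →
        (∀ i, 0 ≤ p i ∧ p i < (s:ℤ)^(k - t i)) → (∀ i, 0 ≤ q i ∧ q i < (s:ℤ)^(k - u i)) →
        enc t < enc u → (block d s t p ∩ block d s u q).Nonempty →
        ∃! i : Fin (qN d s k),
          (block d s t p ∈ Xf d s k i ∧ block d s u q ∈ Yf d s k i) ∨
          (block d s t p ∈ Yf d s k i ∧ block d s u q ∈ Xf d s k i) := by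
      clear ht hp hu hq htu_ne hint hne t u p q
      intro t u p q ht hu hp hq hlt hint
      have hsig := (block_inter hs t u p q).1 hint
      have hmle : ∀ i, max (t i) (u i) ≤ k := by
        intro i
        have h1 : t i ≤ ∑ j, t j := Finset.single_le_sum (fun j _ => Nat.zero_le _) (Finset.mem_univ i)
        have h2 : u i ≤ ∑ j, u j := Finset.single_le_sum (fun j _ => Nat.zero_le _) (Finset.mem_univ i)
        omega
      set c : Fin d → ℤ := sig s t u p with hc
      have hcmem : c ∈ Cs s k t u := by
        rw [Cs, Fintype.mem_piFinset]
        intro i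
        rw [Finset.mem_Ico]
        constructor
        · exact Int.ediv_nonneg (hp i).1 (by positivity)
        · -- c i < s ^ (k - max)
          have he : (0:ℤ) < (s:ℤ)^(max (t i) (u i) - t i) := by positivity
          rw [hc, sig]
          by_contra hcon
          push_neg at hcon
          have := (Int.le_ediv_iff_mul_le he).1 hcon
          have hpow : (s:ℤ)^(k - max (t i) (u i)) * (s:ℤ)^(max (t i) (u i) - t i)
              = (s:ℤ)^(k - t i) := by
            rw [← pow_add]
            congr 1
            have h1 : t i ≤ max (t i) (u i) := le_max_left _ _
            have h2 := hmle i
            omega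
          rw [hpow] at this
          have := (hp i).2
          omega
      have hzmem : (⟨(t, u), c⟩ : Idx d) ∈ IFin d s k := by
        rw [IFin, Finset.mem_sigma]
        constructor
        · rw [Pairs, Finset.mem_filter, Finset.mem_product]
          exact ⟨⟨Finset.Nat.mem_antidiagonalTuple.2 ht, Finset.Nat.mem_antidiagonalTuple.2 hu⟩, hlt⟩
        · exact hcmem
      set i₀ : Fin (qN d s k) := (eIdx d s k).symm ⟨⟨(t, u), c⟩, hzmem⟩ with hi₀
      have he₀ : eIdx d s k i₀ = ⟨⟨(t, u), c⟩, hzmem⟩ := by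
        rw [hi₀, Equiv.apply_symm_apply]
      have hsigq : sig s u t q = c := by
        funext j
        rw [hc, sig, sig, max_comm (u j) (t j)]
        exact (hsig j).symm
      refine ⟨i₀, Or.inl ⟨?_, ?_⟩, ?_⟩
      · exact ⟨p, by rw [he₀]; exact hp, by rw [he₀], by rw [he₀]⟩
      · exact ⟨q, by rw [he₀]; exact hq, by rw [he₀]; exact hsigq, by rw [he₀]⟩
      · -- uniqueness
        intro j hj
        rcases hj with ⟨hX, hY⟩ | ⟨hY, hX⟩
        · obtain ⟨p', hp', hsp', hBp'⟩ := hX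
          obtain ⟨q', hq', hsq', hBq'⟩ := hY
          obtain ⟨htt, hpp⟩ := block_inj hs hBp'
          obtain ⟨huu, hqq⟩ := block_inj hs hBq'
          -- (eIdx j).1 = ⟨(t,u), c⟩
          have hz : (eIdx d s k j).1 = ⟨(t, u), c⟩ := by
            have h1 : (eIdx d s k j).1.1.1 = t := htt.symm
            have h2 : (eIdx d s k j).1.1.2 = u := huu.symm
            have h3 : (eIdx d s k j).1.2 = c := by
              rw [← hsp', ← hpp, h1, h2, hc]
            calc (eIdx d s k j).1 = ⟨((eIdx d s k j).1.1.1, (eIdx d s k j).1.1.2),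
                (eIdx d s k j).1.2⟩ := rfl
              _ = ⟨(t, u), c⟩ := by rw [h1, h2, h3]
          have : eIdx d s k j = ⟨⟨(t, u), c⟩, hzmem⟩ := Subtype.ext hz
          calc j = (eIdx d s k).symm (eIdx d s k j) := (Equiv.symm_apply_apply _ _).symm
            _ = i₀ := by rw [this, hi₀]
        · exfalso
          obtain ⟨q', hq', hsq', hBq'⟩ := hY
          obtain ⟨p', hp', hsp', hBp'⟩ := hX
          obtain ⟨htt, _⟩ := block_inj hs hBq'  -- t = (eIdx j).1.1.2
          obtain ⟨huu, _⟩ := block_inj hs hBp'  -- u = (eIdx j).1.1.1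
          have hprops := mem_IFin_props (s := s) j
          rw [← htt, ← huu] at hprops
          exact absurd hlt (not_lt.2 (le_of_lt hprops.2.2))
    rcases Nat.lt_trichotomy (enc t) (enc u) with hlt | heq | hgt
    · exact key t u p q ht hu hp hq hlt hint
    · exact absurd (enc_inj heq) htu_ne
    · have hint' : (block d s u q ∩ block d s t p).Nonempty := by
        rwa [Set.inter_comm]
      obtain ⟨i, hi, huniq⟩ := key u t q p hu ht hq hp hgt hint'
      refine ⟨i, ?_, ?_⟩
      · rcases hi with ⟨h1, h2⟩ | ⟨h1, h2⟩
        · exact Or.inr ⟨h2, h1⟩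
        · exact Or.inl ⟨h2, h1⟩
      · intro j hj
        apply huniq
        rcases hj with ⟨h1, h2⟩ | ⟨h1, h2⟩
        · exact Or.inr ⟨h2, h1⟩
        · exact Or.inl ⟨h2, h1⟩
end
end
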